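/- arXiv:1404.3279 — 8 statements merged into one kernel-verified Lean document; each statement's English description precedes it below -/
import Mathlib

section
/- The Lie algebra W(Γ) contains no nonzero ad-locally finite element; that is, if x ∈ W(Γ) is such that for every y ∈ W(Γ) the span of {ad_x^k(y) : k ∈ ℤ≥0} is finite-dimensional, then x = 0. -/
noncomputable def dSeq (c : ℂ) (m : ℕ) : ℕ → ℂ
  | 0 => 1
  | l + 1 => c * ((((l + 1) * (m + 1) : ℕ) : ℂ) - (m : ℂ)) * dSeq c m l

lemma dSeq_ne_zero {c : ℂ} (hc : c ≠ 0) (m : ℕ) : ∀ l, dSeq c m l ≠ 0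
  | 0 => one_ne_zero
  | l + 1 => by
    have h1 : (((l + 1) * (m + 1) : ℕ) : ℂ) - (m : ℂ) ≠ 0 := by
      rw [sub_ne_zero]
      exact_mod_cast (show (l + 1) * (m + 1) ≠ m by nlinarith)
    exact mul_ne_zero (mul_ne_zero hc h1) (dSeq_ne_zero hc m l)

theorem key (Γ : AddSubgroup ℂ) (W : Type) [LieRing W] [LieAlgebra ℂ W]
    (B : Module.Basis (Γ × ℕ) ℂ W)
    (hB : ∀ (α β : Γ) (i j : ℕ),
      ⁅B (α, i), B (β, j)⁆ = ((β : ℂ) - (α : ℂ)) • B (α + β, i + j)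
        + ((j : ℂ) - (i : ℂ)) • B (α + β, i + j + 1))
    (x : W) (ψ : ℂ → ℝ) (hψ : ∀ a b : ℂ, ψ (a + b) = ψ a + ψ b)
    (α0 : Γ) (m : ℕ)
    (hcm : B.repr x (α0, m) ≠ 0)
    (hm : ∀ i, B.repr x (α0, i) ≠ 0 → i ≤ m)
    (h1 : ∀ p ∈ (B.repr x).support, ψ (p.1 : ℂ) ≤ ψ (α0 : ℂ))
    (h2 : ∀ p ∈ (B.repr x).support, ψ (p.1 : ℂ) = ψ (α0 : ℂ) → p.1 = α0)
    (h3 : 0 < ψ (α0 : ℂ) ∨ α0 = 0) :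
    ¬ FiniteDimensional ℂ (Submodule.span ℂ
      (Set.range fun k : ℕ => ((LieAlgebra.ad ℂ W x) ^ k) (B ((0 : Γ), m + 1)))) := by
  intro hfd
  set v : ℕ → W := fun k => ((LieAlgebra.ad ℂ W x) ^ k) (B ((0 : Γ), m + 1)) with hv
  have hψ0 : ψ 0 = 0 := by have := hψ 0 0; simp only [add_zero] at this; linarith
  have hΨs : ∀ (n : ℕ) (γ : Γ), ψ ((n • γ : Γ) : ℂ) = n * ψ (γ : ℂ) := by
    intro n γ
    induction n with
    | zero => simpa using hψ0
    | succ n ih =>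
      rw [succ_nsmul, AddSubgroup.coe_add, hψ, ih]
      push_cast
      ring
  set cm : ℂ := B.repr x (α0, m) with hcmdef
  set Good : ℕ → Set (Γ × ℕ) := fun l =>
    {p | ψ (p.1 : ℂ) ≤ (l : ℝ) * ψ (α0 : ℂ) ∧
      (ψ (p.1 : ℂ) = (l : ℝ) * ψ (α0 : ℂ) → p.1 = l • α0 ∧ p.2 ≤ (l + 1) * (m + 1))}
    with hGoodDef
  -- basic bracket representation
  have reprBB : ∀ p q : Γ × ℕ, B.repr ⁅B p, B q⁆ =
      ((q.1 : ℂ) - (p.1 : ℂ)) • Finsupp.single (p.1 + q.1, p.2 + q.2) (1 : ℂ)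
      + ((q.2 : ℂ) - (p.2 : ℂ)) • Finsupp.single (p.1 + q.1, p.2 + q.2 + 1) (1 : ℂ) := by
    rintro ⟨a, i⟩ ⟨b, j⟩
    rw [hB a b i j, map_add, map_smul, map_smul, B.repr_self, B.repr_self]
  have hxsum : ∀ z : W, ⁅x, z⁆ = (B.repr x).sum fun p a => a • ⁅B p, z⁆ := by
    intro z
    set R : W →ₗ[ℂ] W :=
      { toFun := fun w => ⁅w, z⁆
        map_add' := fun a b => add_lie a b z
        map_smul' := fun t a => smul_lie t a z } with hR
    have : ⁅x, z⁆ = R x := rfl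
    rw [this]
    conv_lhs => rw [show x = Finsupp.linearCombination ℂ B (B.repr x) from
      (B.linearCombination_repr x).symm]
    rw [Finsupp.linearCombination_apply, map_finsuppSum]
    refine Finsupp.sum_congr fun p _ => ?_
    rw [map_smul]
    rfl
  have coordxB : ∀ (q : Γ × ℕ) (u : Γ × ℕ), B.repr ⁅x, B q⁆ u =
      (B.repr x).sum fun p a => a *
        (((q.1 : ℂ) - (p.1 : ℂ)) * (if (p.1 + q.1, p.2 + q.2) = u then 1 else 0)
        + ((q.2 : ℂ) - (p.2 : ℂ)) * (if (p.1 + q.1, p.2 + q.2 + 1) = u then 1 else 0)) := by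
    intro q u
    rw [hxsum (B q), map_finsuppSum, Finsupp.sum_apply]
    refine Finsupp.sum_congr fun p _ => ?_
    rw [map_smul, reprBB p q]
    simp only [Finsupp.add_apply, Finsupp.smul_apply, Finsupp.single_apply, smul_eq_mul]
  have coordxW : ∀ (w : W) (u : Γ × ℕ), B.repr ⁅x, w⁆ u =
      (B.repr w).sum fun q b => b * B.repr ⁅x, B q⁆ u := by
    intro w u
    have hw : ⁅x, w⁆ = (B.repr w).sum fun q b => b • ⁅x, B q⁆ := by
      conv_lhs => rw [show w = Finsupp.linearCombination ℂ B (B.repr w) from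
        (B.linearCombination_repr w).symm]
      rw [Finsupp.linearCombination_apply]
      change LieAlgebra.ad ℂ W x _ = _
      rw [map_finsuppSum]
      refine Finsupp.sum_congr fun q _ => ?_
      rw [map_smul]
      rfl
    rw [hw, map_finsuppSum, Finsupp.sum_apply]
    refine Finsupp.sum_congr fun q _ => ?_
    rw [map_smul]
    rfl
  have hxw : ∀ w : W, ⁅x, w⁆ = (B.repr w).sum fun q b => b • ⁅x, B q⁆ := by
    intro w
    conv_lhs => rw [show w = Finsupp.linearCombination ℂ B (B.repr w) from
      (B.linearCombination_repr w).symm]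
    rw [Finsupp.linearCombination_apply]
    change LieAlgebra.ad ℂ W x _ = _
    rw [map_finsuppSum]
    refine Finsupp.sum_congr fun q _ => ?_
    rw [map_smul]
    rfl
  have hdl : ∀ l, dSeq cm m l ≠ 0 := dSeq_ne_zero hcm m
  have expand : ∀ l : ℕ, ((l + 1 : ℕ) : ℝ) * ψ (α0 : ℂ) = (l : ℝ) * ψ (α0 : ℂ) + ψ (α0 : ℂ) := by
    intro l; push_cast; ring
  have hMM : ∀ l : ℕ, (l + 1 + 1) * (m + 1) = (l + 1) * (m + 1) + (m + 1) := by
    intro l; ring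
  have main : ∀ l, v l ∈ Submodule.span ℂ (B '' Good l) ∧
      B.repr (v l) ((l • α0 : Γ), (l + 1) * (m + 1)) = dSeq cm m l := by
    intro l
    induction l with
    | zero =>
      constructor
      · apply Submodule.subset_span
        refine ⟨((0 : Γ), m + 1), ?_, rfl⟩
        exact ⟨by simp [hψ0], fun _ => ⟨by simp, by norm_num⟩⟩
      · have h0 : (((0 : ℕ) • α0 : Γ), (0 + 1) * (m + 1)) = ((0 : Γ), m + 1) := by simp
        have h0' : v 0 = B ((0 : Γ), m + 1) := by simp [hv]
        rw [h0, h0', B.repr_self, Finsupp.single_eq_same]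
        rfl
    | succ l ih =>
      obtain ⟨ihs, ihc⟩ := ih
      have hvs : v (l + 1) = ⁅x, v l⁆ := by
        simp only [hv, pow_succ', Module.End.mul_apply, LieAlgebra.ad_apply]
      have hGoodq : ∀ q ∈ (B.repr (v l)).support, q ∈ Good l :=
        fun q hq => (B.mem_span_image.mp ihs) hq
      have hstep : ∀ q : Γ × ℕ, q ∈ Good l →
          ⁅x, B q⁆ ∈ Submodule.span ℂ (B '' Good (l + 1)) := by
        intro q hq
        rw [hxsum (B q), Finsupp.sum]
        refine Submodule.sum_mem _ fun p hp => Submodule.smul_mem _ _ ?_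
        have hgs : ∀ n, n ≤ p.2 + q.2 + 1 → (p.1 + q.1, n) ∈ Good (l + 1) := by
          intro n hn
          obtain ⟨hq1, hq2⟩ := hq
          constructor
          · rw [AddSubgroup.coe_add, hψ, expand l]
            have := h1 p hp
            linarith
          · intro heq
            rw [AddSubgroup.coe_add, hψ, expand l] at heq
            have hle1 := h1 p hp
            have e1 : ψ (p.1 : ℂ) = ψ (α0 : ℂ) := by linarith
            have e2 : ψ (q.1 : ℂ) = (l : ℝ) * ψ (α0 : ℂ) := by linarith
            obtain ⟨hq3, hq4⟩ := hq2 e2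
            have hp1 : p.1 = α0 := h2 p hp e1
            have hp2 : p.2 ≤ m := by
              apply hm
              rw [← hp1]
              simpa using Finsupp.mem_support_iff.mp hp
            refine ⟨by rw [hp1, hq3, succ_nsmul, add_comm], ?_⟩
            have := hMM l
            linarith
        rcases p with ⟨a, i⟩
        rcases q with ⟨b, j⟩
        rw [hB a b i j]
        exact Submodule.add_mem _
          (Submodule.smul_mem _ _ (Submodule.subset_span ⟨_, hgs (i + j) (by omega), rfl⟩))
          (Submodule.smul_mem _ _ (Submodule.subset_span ⟨_, hgs (i + j + 1) (by omega), rfl⟩))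
      have spanstep : v (l + 1) ∈ Submodule.span ℂ (B '' Good (l + 1)) := by
        rw [hvs, hxw (v l), Finsupp.sum]
        exact Submodule.sum_mem _ fun q hq => Submodule.smul_mem _ _ (hstep q (hGoodq q hq))
      have claimA : B.repr ⁅x, B ((l • α0 : Γ), (l + 1) * (m + 1))⁆
          (((l + 1) • α0 : Γ), (l + 1 + 1) * (m + 1)) =
          cm * ((((l + 1) * (m + 1) : ℕ) : ℂ) - (m : ℂ)) := by
        rw [coordxB, Finsupp.sum]
        rw [Finset.sum_eq_single ((α0, m) : Γ × ℕ)]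
        · have e1 : ¬ (((α0 + l • α0 : Γ), m + (l + 1) * (m + 1)) =
              (((l + 1) • α0 : Γ), (l + 1 + 1) * (m + 1))) := by
            simp only [Prod.mk.injEq, not_and]
            intro _ h'
            have := hMM l
            linarith
          have e2 : ((α0 + l • α0 : Γ), m + (l + 1) * (m + 1) + 1) =
              (((l + 1) • α0 : Γ), (l + 1 + 1) * (m + 1)) := by
            refine Prod.ext ?_ ?_
            · show α0 + l • α0 = (l + 1) • α0
              rw [succ_nsmul, add_comm]
            · show m + (l + 1) * (m + 1) + 1 = (l + 1 + 1) * (m + 1)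
              ring
          rw [if_neg e1, if_pos e2]
          rw [← hcmdef]
          ring
        · rintro ⟨a1, i⟩ hp hne
          by_cases ha : a1 = α0
          · subst ha
            have hi : i ≤ m := hm i (Finsupp.mem_support_iff.mp hp)
            have hne' : i ≠ m := by simpa using hne
            rw [if_neg, if_neg]
            · ring
            · simp only [Prod.mk.injEq, not_and]
              intro _ h'
              have := hMM l
              exact hne' (by linarith)
            · simp only [Prod.mk.injEq, not_and]
              intro _ h'
              have := hMM l
              linarith
          · rw [if_neg, if_neg]
            · ring
            · simp only [Prod.mk.injEq, not_and]
              intro hΓeq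
              exfalso
              apply ha
              rw [succ_nsmul] at hΓeq
              rw [add_comm (l • α0) α0] at hΓeq
              exact add_right_cancel hΓeq
            · simp only [Prod.mk.injEq, not_and]
              intro hΓeq
              exfalso
              apply ha
              rw [succ_nsmul] at hΓeq
              rw [add_comm (l • α0) α0] at hΓeq
              exact add_right_cancel hΓeq
        · intro habs
          exact absurd (Finsupp.mem_support_iff.mpr hcm) habs
      have claimB0 : ∀ q ∈ (B.repr (v l)).support,
          q ≠ ((l • α0 : Γ), (l + 1) * (m + 1)) →
          B.repr ⁅x, B q⁆ (((l + 1) • α0 : Γ), (l + 1 + 1) * (m + 1)) = 0 := by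
        intro q hq hqne
        obtain ⟨hq1, hq2⟩ := hGoodq q hq
        rw [coordxB, Finsupp.sum]
        apply Finset.sum_eq_zero
        intro p hp
        have key1 : ∀ n : ℕ, (p.1 + q.1, n) = (((l + 1) • α0 : Γ), (l + 1 + 1) * (m + 1)) →
            n ≤ p.2 + q.2 + 1 → False := by
          intro n hn hnle
          have hGam : p.1 + q.1 = (l + 1) • α0 := congrArg Prod.fst hn
          have hN : n = (l + 1 + 1) * (m + 1) := congrArg Prod.snd hn
          have eψ : ψ (p.1 : ℂ) + ψ (q.1 : ℂ) = ((l + 1 : ℕ) : ℝ) * ψ (α0 : ℂ) := by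
            have h' := congrArg (fun γ : Γ => ψ (γ : ℂ)) hGam
            simpa only [AddSubgroup.coe_add, hψ, hΨs] using h'
          rw [expand l] at eψ
          have hle1 := h1 p hp
          have e1 : ψ (p.1 : ℂ) = ψ (α0 : ℂ) := by linarith
          have e2 : ψ (q.1 : ℂ) = (l : ℝ) * ψ (α0 : ℂ) := by linarith
          obtain ⟨hq3, hq4⟩ := hq2 e2
          have hp1 : p.1 = α0 := h2 p hp e1
          have hp2 : p.2 ≤ m := by
            apply hm
            rw [← hp1]
            simpa using Finsupp.mem_support_iff.mp hp
          have hq5 : q.2 ≠ (l + 1) * (m + 1) := by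
            intro h
            exact hqne (Prod.ext hq3 h)
          have hq6 : q.2 < (l + 1) * (m + 1) := lt_of_le_of_ne hq4 hq5
          have := hMM l
          linarith
        rw [if_neg (fun h => key1 _ h (by omega)), if_neg (fun h => key1 _ h (le_refl _))]
        ring
      have coeff : B.repr (v (l + 1)) (((l + 1) • α0 : Γ), (l + 1 + 1) * (m + 1)) =
          dSeq cm m (l + 1) := by
        rw [hvs, coordxW, Finsupp.sum]
        rw [Finset.sum_eq_single ((l • α0 : Γ), (l + 1) * (m + 1))]
        · rw [ihc, claimA]
          rw [show dSeq cm m (l + 1) =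
            cm * ((((l + 1) * (m + 1) : ℕ) : ℂ) - (m : ℂ)) * dSeq cm m l from rfl]
          ring
        · intro q hq hqne
          rw [claimB0 q hq hqne, mul_zero]
        · intro habs
          exfalso
          apply hdl l
          rw [← ihc]
          exact Finsupp.notMem_support_iff.mp habs
      exact ⟨spanstep, coeff⟩
  have hli : LinearIndependent ℂ v := by
    rw [linearIndependent_iff']
    intro s g hsum i hi
    by_contra hgi
    have htne : (s.filter fun j => g j ≠ 0).Nonempty := ⟨i, Finset.mem_filter.mpr ⟨hi, hgi⟩⟩
    set k := (s.filter fun j => g j ≠ 0).max' htne with hk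
    have hkmem := (s.filter fun j => g j ≠ 0).max'_mem htne
    rw [Finset.mem_filter] at hkmem
    have happ : (Finset.sum s fun j => g j * B.repr (v j) ((k • α0 : Γ), (k + 1) * (m + 1))) = 0 := by
      have := congrArg (fun w => B.repr w ((k • α0 : Γ), (k + 1) * (m + 1))) hsum
      simpa only [map_sum, map_smul, Finsupp.coe_finset_sum, Finset.sum_apply,
        Finsupp.smul_apply, smul_eq_mul, map_zero, Finsupp.coe_zero, Pi.zero_apply] using this
    rw [Finset.sum_eq_single k] at happ
    · rw [(main k).2] at happ
      rcases mul_eq_zero.mp happ with h | h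
      · exact hkmem.2 h
      · exact hdl k h
    · intro j hj hjk
      by_cases hgj : g j = 0
      · rw [hgj, zero_mul]
      · have hjle : j ≤ k := Finset.le_max' _ j (Finset.mem_filter.mpr ⟨hj, hgj⟩)
        have hjlt : j < k := lt_of_le_of_ne hjle hjk
        have hnot : (((k • α0 : Γ), (k + 1) * (m + 1)) : Γ × ℕ) ∉ Good j := by
          intro hmem
          obtain ⟨hg1, hg2⟩ := hmem
          rcases h3 with hpos | hzero
          · rw [hΨs k α0] at hg1
            have : (j : ℝ) * ψ (α0 : ℂ) < (k : ℝ) * ψ (α0 : ℂ) :=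
              mul_lt_mul_of_pos_right (by exact_mod_cast hjlt) hpos
            linarith
          · have h0 : ψ (((k • α0 : Γ)) : ℂ) = (j : ℝ) * ψ (α0 : ℂ) := by
              rw [hΨs, hzero]
              simp [hψ0]
            obtain ⟨_, hle⟩ := hg2 h0
            have hkj : k + 1 ≤ j + 1 := le_of_mul_le_mul_right hle (Nat.succ_pos m)
            omega
        have hzero' : B.repr (v j) ((k • α0 : Γ), (k + 1) * (m + 1)) = 0 := by
          by_contra hne
          exact hnot ((B.mem_span_image.mp (main j).1) (Finsupp.mem_support_iff.mpr hne))
        rw [hzero', mul_zero]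
    · intro h
      exact absurd hkmem.1 h
  have hmem : ∀ k, v k ∈ Submodule.span ℂ (Set.range v) :=
    fun k => Submodule.subset_span ⟨k, rfl⟩
  have hli' : LinearIndependent ℂ fun k : ℕ =>
      (⟨v k, hmem k⟩ : Submodule.span ℂ (Set.range v)) :=
    LinearIndependent.of_comp (Submodule.span ℂ (Set.range v)).subtype hli
  exact Module.Finite.not_linearIndependent_of_infinite _ hli'

theorem stmt1 (Γ : AddSubgroup ℂ) (hΓ : Γ ≠ ⊥)
    (W : Type) [LieRing W] [LieAlgebra ℂ W] (B : Module.Basis (Γ × ℕ) ℂ W)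
    (hB : ∀ (α β : Γ) (i j : ℕ),
      ⁅B (α, i), B (β, j)⁆ = ((β : ℂ) - (α : ℂ)) • B (α + β, i + j)
        + ((j : ℂ) - (i : ℂ)) • B (α + β, i + j + 1)) :
    ∀ x : W,
      (∀ y : W, FiniteDimensional ℂ
        (Submodule.span ℂ (Set.range fun k : ℕ => ((LieAlgebra.ad ℂ W x) ^ k) y))) →
      x = 0 := by
  intro x hx
  by_contra hx0
  -- the support of x is nonempty
  have hrepr : B.repr x ≠ 0 := by
    simpa using (B.repr.map_eq_zero_iff).not.mpr hx0
  have hsupp : (B.repr x).support.Nonempty := Finsupp.support_nonempty_iff.mpr hrepr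
  set A : Finset Γ := (B.repr x).support.image Prod.fst with hA
  have hAne : A.Nonempty := hsupp.image Prod.fst
  -- choose a generic linear functional φ injective on A ∪ {0}
  set AC : Finset ℂ := insert 0 (A.image (fun γ : Γ => (γ : ℂ))) with hAC
  set bad : Finset ℝ := (AC ×ˢ AC).image (fun pr => (-(pr.1 - pr.2).re) / (pr.1 - pr.2).im) with hbad
  obtain ⟨r, hr⟩ := Infinite.exists_notMem_finset bad
  set φ : ℂ → ℝ := fun z => z.re + r * z.im with hφ
  have hφadd : ∀ a b : ℂ, φ (a + b) = φ a + φ b := by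
    intro a b; simp [hφ, Complex.add_re, Complex.add_im]; ring
  have hinj : ∀ a ∈ AC, ∀ b ∈ AC, φ a = φ b → a = b := by
    intro a ha b hb hab
    by_contra hne
    have hd : a - b ≠ 0 := sub_ne_zero.mpr hne
    have h0 : (a - b).re + r * (a - b).im = 0 := by
      simp only [Complex.sub_re, Complex.sub_im, hφ] at hab ⊢
      linarith
    rcases eq_or_ne (a - b).im 0 with him | him
    · have hre : (a - b).re = 0 := by rw [him] at h0; linarith
      exact hd (Complex.ext hre him)
    · apply hr
      rw [hbad]
      apply Finset.mem_image.mpr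
      refine ⟨(a, b), Finset.mem_product.mpr ⟨ha, hb⟩, ?_⟩
      show -(a - b).re / (a - b).im = r
      rw [div_eq_iff him]
      linarith
  have hcoeA : ∀ γ ∈ A, (γ : ℂ) ∈ AC := by
    intro γ hγ
    exact Finset.mem_insert_of_mem (Finset.mem_image_of_mem _ hγ)
  have h0AC : (0 : ℂ) ∈ AC := Finset.mem_insert_self 0 _
  have hφ0 : φ 0 = 0 := by simp [hφ]
  -- the main reduction: given a suitable ψ and extreme α0, derive False
  have hmain : ∀ (ψ : ℂ → ℝ), (∀ a b : ℂ, ψ (a + b) = ψ a + ψ b) → ∀ α0 ∈ A,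
      (∀ p ∈ (B.repr x).support, ψ (p.1 : ℂ) ≤ ψ (α0 : ℂ)) →
      (∀ p ∈ (B.repr x).support, ψ (p.1 : ℂ) = ψ (α0 : ℂ) → p.1 = α0) →
      (0 < ψ (α0 : ℂ) ∨ α0 = 0) → False := by
    intro ψ hψ α0 hα0 h1 h2 h3
    -- build m : the maximal second index in the α0 column
    set t : Finset ℕ := ((B.repr x).support.filter (fun p => p.1 = α0)).image Prod.snd with htdef
    have htne : t.Nonempty := by
      obtain ⟨p, hp, hp1⟩ := Finset.mem_image.mp hα0
      exact ⟨p.2, Finset.mem_image_of_mem _ (Finset.mem_filter.mpr ⟨hp, hp1⟩)⟩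
    set m := t.max' htne with hmdef
    have hcm : B.repr x (α0, m) ≠ 0 := by
      have := t.max'_mem htne
      obtain ⟨q, hq, hq2⟩ := Finset.mem_image.mp this
      obtain ⟨hqs, hq1⟩ := Finset.mem_filter.mp hq
      have : q = (α0, m) := Prod.ext hq1 hq2
      rw [← this]
      exact Finsupp.mem_support_iff.mp hqs
    have hm : ∀ i, B.repr x (α0, i) ≠ 0 → i ≤ m := by
      intro i hi
      apply Finset.le_max'
      have hmemfil : ((α0, i) : ↥Γ × ℕ) ∈ (B.repr x).support.filter (fun p => p.1 = α0) :=
        Finset.mem_filter.mpr ⟨Finsupp.mem_support_iff.mpr hi, rfl⟩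
      exact Finset.mem_image_of_mem Prod.snd hmemfil
    exact key Γ W B hB x ψ hψ α0 m hcm hm h1 h2 h3 (hx (B ((0 : Γ), m + 1)))
  -- choose extreme element
  obtain ⟨αM, hαM, hmax⟩ := Finset.exists_max_image A (fun γ : Γ => φ (γ : ℂ)) hAne
  obtain ⟨αm, hαm, hmin⟩ := Finset.exists_min_image A (fun γ : Γ => φ (γ : ℂ)) hAne
  have hmemA : ∀ p ∈ (B.repr x).support, p.1 ∈ A := by
    intro p hp; exact Finset.mem_image_of_mem _ hp
  by_cases hpos : 0 < φ (αM : ℂ)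
  · exact hmain φ hφadd αM hαM
      (fun p hp => hmax p.1 (hmemA p hp))
      (fun p hp he => Subtype.coe_injective
        (hinj _ (hcoeA _ (hmemA p hp)) _ (hcoeA _ hαM) he))
      (Or.inl hpos)
  · by_cases hneg : φ (αm : ℂ) < 0
    · refine hmain (fun z => -φ z) (fun a b => ?_) αm hαm (fun p hp => ?_)
        (fun p hp he => ?_) (Or.inl ?_)
      · show -φ (a + b) = -φ a + -φ b
        rw [hφadd]; ring
      · show -φ (p.1 : ℂ) ≤ -φ (αm : ℂ)
        have := hmin p.1 (hmemA p hp); linarith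
      · have he' : φ (p.1 : ℂ) = φ (αm : ℂ) := by
          have h' : -φ (p.1 : ℂ) = -φ (αm : ℂ) := he
          linarith
        exact Subtype.coe_injective (hinj _ (hcoeA _ (hmemA p hp)) _ (hcoeA _ hαm) he')
      · show (0 : ℝ) < -φ (αm : ℂ)
        linarith
    · -- all values of φ on A are 0, hence A = {0}
      push_neg at hpos hneg
      have hall : ∀ γ ∈ A, γ = (0 : Γ) := by
        intro γ hγ
        have hle : φ (γ : ℂ) ≤ φ (αM : ℂ) := hmax γ hγ
        have hge : φ (αm : ℂ) ≤ φ (γ : ℂ) := hmin γ hγ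
        have : φ (γ : ℂ) = 0 := by linarith
        have := hinj _ (hcoeA _ hγ) 0 h0AC (by rw [this, hφ0])
        exact Subtype.coe_injective (by simpa using this)
      obtain ⟨γ0, hγ0⟩ := hAne
      have h0A : (0 : Γ) ∈ A := by rw [← hall γ0 hγ0]; exact hγ0
      refine hmain φ hφadd 0 h0A ?_ ?_ (Or.inr rfl)
      · intro p hp
        rw [hall p.1 (hmemA p hp)]
      · intro p hp _
        exact hall p.1 (hmemA p hp)
end

section
/- The nonzero Lie ideals of W(Γ) are exactly the subspaces W^n for n ∈ ℤ≥0; that is, each W^n is an ideal of W(Γ), and every nonzero ideal of W(Γ) equals W^n for some n ∈ ℤ≥0. -/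
set_option maxHeartbeats 1600000

/-- `Wn Γ W B n` is the subspace `W^n`, the span of `{L_{α,i} : α ∈ Γ, i ≥ n}`. -/
noncomputable def Wn (Γ : AddSubgroup ℂ) (W : Type) [LieRing W] [LieAlgebra ℂ W]
    (B : Module.Basis (Γ × ℕ) ℂ W) (n : ℕ) : Submodule ℂ W :=
  Submodule.span ℂ {x : W | ∃ (α : Γ) (i : ℕ), n ≤ i ∧ x = B (α, i)}

section Aux
variable (Γ : AddSubgroup ℂ)

open scoped Classical in
noncomputable def gr (c : (Γ × ℕ) →₀ ℂ) : Finset Γ := c.support.image Prod.fst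

open scoped Classical in
noncomputable def comp (c : (Γ × ℕ) →₀ ℂ) (g : Γ) : Finset ℕ :=
  (c.support.filter fun p => p.1 = g).image Prod.snd

lemma mem_gr_iff (c : (Γ × ℕ) →₀ ℂ) (g : Γ) : g ∈ gr Γ c ↔ ∃ i, c (g, i) ≠ 0 := by
  classical
  unfold gr
  simp only [Finset.mem_image, Finsupp.mem_support_iff]
  constructor
  · rintro ⟨p, hp, rfl⟩; exact ⟨p.2, by rwa [Prod.mk.eta]⟩
  · rintro ⟨i, hi⟩; exact ⟨(g, i), hi, rfl⟩

lemma mem_comp_iff (c : (Γ × ℕ) →₀ ℂ) (g : Γ) (i : ℕ) :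
    i ∈ comp Γ c g ↔ c (g, i) ≠ 0 := by
  classical
  unfold comp
  simp only [Finset.mem_image, Finset.mem_filter, Finsupp.mem_support_iff]
  constructor
  · rintro ⟨p, ⟨hp, hp1⟩, rfl⟩
    rwa [← hp1, Prod.mk.eta]
  · rintro hi; exact ⟨(g, i), ⟨hi, rfl⟩, rfl⟩

lemma gr_nonempty_iff (c : (Γ × ℕ) →₀ ℂ) (g : Γ) :
    g ∈ gr Γ c ↔ (comp Γ c g).Nonempty := by
  constructor
  · rintro h
    obtain ⟨i, hi⟩ := (mem_gr_iff Γ c g).mp h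
    exact ⟨i, (mem_comp_iff Γ c g i).mpr hi⟩
  · rintro ⟨i, hi⟩
    exact (mem_gr_iff Γ c g).mpr ⟨i, (mem_comp_iff Γ c g i).mp hi⟩

open scoped Classical in
noncomputable def lev (c : (Γ × ℕ) →₀ ℂ) (i : ℕ) : Finset Γ :=
  (c.support.filter fun p => p.2 = i).image Prod.fst

lemma mem_lev_iff (c : (Γ × ℕ) →₀ ℂ) (i : ℕ) (g : Γ) :
    g ∈ lev Γ c i ↔ c (g, i) ≠ 0 := by
  classical
  unfold lev
  simp only [Finset.mem_image, Finset.mem_filter, Finsupp.mem_support_iff]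
  constructor
  · rintro ⟨p, ⟨hp, hp2⟩, rfl⟩
    rwa [← hp2, Prod.mk.eta]
  · rintro hi; exact ⟨(g, i), ⟨hi, rfl⟩, rfl⟩

lemma exists_avoid (t : Γ) (ht : (t : ℂ) ≠ 0) (u v : Γ) : ∃ w : Γ, w ≠ u ∧ w ≠ v := by
  by_cases h : u + t = v
  · refine ⟨u + t + t, fun he => ht ?_, fun he => ht ?_⟩
    · have := congrArg (Subtype.val) he; push_cast at this; linear_combination this / 2
    · rw [← h] at he
      have := congrArg (Subtype.val) he; push_cast at this; linear_combination this
  · refine ⟨u + t, fun he => ht ?_, h⟩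
    have := congrArg (Subtype.val) he; push_cast at this; linear_combination this

lemma exists_double_ne (t : Γ) (ht : (t : ℂ) ≠ 0) (γ : Γ) : ∃ β : Γ, β + β ≠ γ := by
  by_cases h : t + t = γ
  · refine ⟨t + t, fun he => ht ?_⟩
    rw [← h] at he
    have := congrArg (Subtype.val) he; push_cast at this; linear_combination this / 2
  · exact ⟨t, h⟩

variable (W : Type) [LieRing W] [LieAlgebra ℂ W]
    (B : Module.Basis (Γ × ℕ) ℂ W)
    (hB : ∀ (α β : Γ) (i j : ℕ),
      ⁅B (α, i), B (β, j)⁆ = ((β : ℂ) - (α : ℂ)) • B (α + β, i + j)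
        + ((j : ℂ) - (i : ℂ)) • B (α + β, i + j + 1))

lemma Wn_eq (n : ℕ) : Wn Γ W B n = Submodule.span ℂ (B '' {p | n ≤ p.2}) := by
  unfold Wn
  congr 1
  ext x
  constructor
  · rintro ⟨α, i, hi, rfl⟩; exact ⟨(α, i), hi, rfl⟩
  · rintro ⟨⟨α, i⟩, hi, rfl⟩; exact ⟨α, i, hi, rfl⟩

lemma mem_Wn_iff (n : ℕ) (x : W) :
    x ∈ Wn Γ W B n ↔ ∀ p ∈ (B.repr x).support, n ≤ p.2 := by
  rw [Wn_eq, Module.Basis.mem_span_image]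
  exact ⟨fun h p hp => h hp, fun h p hp => h p hp⟩

lemma Wn_mono {m m' : ℕ} (h : m ≤ m') : Wn Γ W B m' ≤ Wn Γ W B m := by
  apply Submodule.span_mono
  rintro x ⟨α, i, hi, rfl⟩
  exact ⟨α, i, le_trans h hi, rfl⟩

lemma mem_Wn_of (n : ℕ) (α : Γ) (i : ℕ) (h : n ≤ i) : B (α, i) ∈ Wn Γ W B n :=
  Submodule.subset_span ⟨α, i, h, rfl⟩

include hB in
lemma lie_basis_Wn (β : Γ) (j m : ℕ) (w : W) (hw : w ∈ Wn Γ W B m) :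
    ⁅B (β, j), w⁆ ∈ Wn Γ W B (m + j) := by
  induction hw using Submodule.span_induction with
  | mem x hx =>
    obtain ⟨α, i, hi, rfl⟩ := hx
    rw [hB]
    exact add_mem
      (Submodule.smul_mem _ _ (mem_Wn_of Γ W B _ _ _ (by omega)))
      (Submodule.smul_mem _ _ (mem_Wn_of Γ W B _ _ _ (by omega)))
  | zero => simp only [lie_zero]; exact zero_mem _
  | add y z _ _ hy hz => rw [lie_add]; exact add_mem hy hz
  | smul c y _ hy => rw [lie_smul]; exact Submodule.smul_mem _ _ hy

include hB in
lemma lie_Wn (m : ℕ) (x w : W) (hw : w ∈ Wn Γ W B m) : ⁅x, w⁆ ∈ Wn Γ W B m := by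
  have hx : x ∈ Submodule.span ℂ (Set.range B) := B.mem_span x
  induction hx using Submodule.span_induction with
  | mem y hy =>
    obtain ⟨⟨β, j⟩, rfl⟩ := hy
    exact Wn_mono Γ W B (Nat.le_add_right m j) (lie_basis_Wn Γ W B hB β j m w hw)
  | zero => simp only [zero_lie]; exact zero_mem _
  | add y z _ _ hy hz => rw [add_lie]; exact add_mem hy hz
  | smul c y _ hy => rw [smul_lie]; exact Submodule.smul_mem _ _ hy

include hB in
lemma repr_bracket (g : Γ) (n : ℕ) (x : W) (δ : Γ) (k : ℕ) :
    B.repr ⁅B (g, n), x⁆ (δ, k) =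
      ((δ : ℂ) - 2 * (g : ℂ)) * (if n ≤ k then B.repr x (δ - g, k - n) else 0)
      + ((k : ℂ) - 2 * (n : ℂ) - 1) *
          (if n + 1 ≤ k then B.repr x (δ - g, k - n - 1) else 0) := by
  have e1 : ⁅B (g, n), x⁆ = ∑ p ∈ (B.repr x).support, B.repr x p • ⁅B (g, n), B p⁆ := by
    conv_lhs => rw [← B.linearCombination_repr x, Finsupp.linearCombination_apply,
      Finsupp.sum]
    rw [show ⁅B (g,n), ∑ p ∈ (B.repr x).support, B.repr x p • B p⁆
        = (LieAlgebra.ad ℂ W (B (g,n))) (∑ p ∈ (B.repr x).support, B.repr x p • B p)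
      from rfl, map_sum]
    refine Finset.sum_congr rfl fun p _ => ?_
    rw [map_smul, LieAlgebra.ad_apply]
  have e2 : ∀ p : Γ × ℕ, B.repr ⁅B (g,n), B p⁆ (δ, k)
      = ((p.1 : ℂ) - g) * (if (g + p.1, n + p.2) = (δ, k) then 1 else 0)
        + ((p.2 : ℂ) - n) * (if (g + p.1, n + p.2 + 1) = (δ, k) then 1 else 0) := by
    intro p
    rw [show (B p) = B (p.1, p.2) from by rw [Prod.mk.eta], hB, map_add, map_smul, map_smul,
      B.repr_self, B.repr_self]
    simp only [Finsupp.add_apply, Finsupp.smul_apply, Finsupp.single_apply, smul_eq_mul]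
    all_goals split_ifs <;> ring
  have e3 : B.repr ⁅B (g, n), x⁆ (δ, k)
      = ∑ p ∈ (B.repr x).support, B.repr x p * (B.repr ⁅B (g,n), B p⁆ (δ, k)) := by
    rw [e1, map_sum, Finset.sum_apply']
    refine Finset.sum_congr rfl fun p _ => ?_
    rw [map_smul, Finsupp.smul_apply, smul_eq_mul]
  rw [e3]
  have esplit : ∑ p ∈ (B.repr x).support, B.repr x p * (B.repr ⁅B (g,n), B p⁆ (δ, k))
      = (∑ p ∈ (B.repr x).support,
          B.repr x p * (((p.1 : ℂ) - g) * (if (g + p.1, n + p.2) = (δ, k) then 1 else 0)))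
        + ∑ p ∈ (B.repr x).support,
          B.repr x p * (((p.2 : ℂ) - n) * (if (g + p.1, n + p.2 + 1) = (δ, k) then 1 else 0)) := by
    rw [← Finset.sum_add_distrib]
    refine Finset.sum_congr rfl fun p _ => ?_
    rw [e2 p]; ring
  rw [esplit]
  congr 1
  · by_cases hnk : n ≤ k
    · rw [if_pos hnk]
      rw [Finset.sum_eq_single ((δ - g, k - n) : Γ × ℕ)]
      · have hc : ((g + (δ - g), n + (k - n)) : Γ × ℕ) = (δ, k) := by
          ext
          · push_cast [AddSubgroup.coe_add, AddSubgroup.coe_sub]; ring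
          · simp; omega
        rw [if_pos hc]
        push_cast [AddSubgroup.coe_sub]
        ring
      · intro p hp hne
        have : ¬ ((g + p.1, n + p.2) : Γ × ℕ) = (δ, k) := by
          intro h
          apply hne
          have h1 : g + p.1 = δ := (Prod.mk.injEq _ _ _ _ ▸ h).1
          have h2 : n + p.2 = k := (Prod.mk.injEq _ _ _ _ ▸ h).2
          have e1' : p.1 = δ - g := by rw [← h1]; abel
          have e2' : p.2 = k - n := by omega
          ext
          · rw [e1']
          · rw [e2']
        rw [if_neg this, mul_zero, mul_zero]
      · intro hns
        rw [Finsupp.notMem_support_iff.mp hns, zero_mul]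
    · rw [if_neg hnk, mul_zero]
      apply Finset.sum_eq_zero
      intro p hp
      have : ¬ ((g + p.1, n + p.2) : Γ × ℕ) = (δ, k) := by
        intro h
        have h2 : n + p.2 = k := (Prod.mk.injEq _ _ _ _ ▸ h).2
        omega
      rw [if_neg this, mul_zero, mul_zero]
  · by_cases hnk : n + 1 ≤ k
    · rw [if_pos hnk]
      rw [Finset.sum_eq_single ((δ - g, k - n - 1) : Γ × ℕ)]
      · have hc : ((g + (δ - g), n + (k - n - 1) + 1) : Γ × ℕ) = (δ, k) := by
          ext
          · push_cast [AddSubgroup.coe_add, AddSubgroup.coe_sub]; ring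
          · simp; omega
        rw [if_pos hc]
        have : ((k - n - 1 : ℕ) : ℂ) = (k : ℂ) - n - 1 := by
          have : (k - n - 1 : ℕ) = k - (n + 1) := by omega
          rw [this]
          push_cast [Nat.cast_sub hnk]
          ring
        rw [this]
        ring
      · intro p hp hne
        have : ¬ ((g + p.1, n + p.2 + 1) : Γ × ℕ) = (δ, k) := by
          intro h
          apply hne
          have h1 : g + p.1 = δ := (Prod.mk.injEq _ _ _ _ ▸ h).1
          have h2 : n + p.2 + 1 = k := (Prod.mk.injEq _ _ _ _ ▸ h).2
          have e1' : p.1 = δ - g := by rw [← h1]; abel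
          have e2' : p.2 = k - n - 1 := by omega
          ext
          · rw [e1']
          · rw [e2']
        rw [if_neg this, mul_zero, mul_zero]
      · intro hns
        rw [Finsupp.notMem_support_iff.mp hns, zero_mul]
    · rw [if_neg hnk, mul_zero]
      apply Finset.sum_eq_zero
      intro p hp
      have : ¬ ((g + p.1, n + p.2 + 1) : Γ × ℕ) = (δ, k) := by
        intro h
        have h2 : n + p.2 + 1 = k := (Prod.mk.injEq _ _ _ _ ▸ h).2
        omega
      rw [if_neg this, mul_zero, mul_zero]

lemma ne_zero_of_repr_ne (x : W) (q : Γ × ℕ) (h : B.repr x q ≠ 0) : x ≠ 0 := by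
  intro h0
  rw [h0] at h
  simp at h

include hB in
lemma purify (I : LieIdeal ℂ W) :
    ∀ a : ℕ, ∀ b : ℕ, ∀ x : W, x ∈ I → x ≠ 0 →
      (gr Γ (B.repr x)).card ≤ a →
      (∃ g ∈ gr Γ (B.repr x), (comp Γ (B.repr x) g).card ≤ b) →
      ∃ (γ : Γ) (N : ℕ), B (γ, N) ∈ I := by
  intro a
  induction a using Nat.strong_induction_on with
  | _ a iha =>
  intro b
  induction b using Nat.strong_induction_on with
  | _ b ihb =>
  rintro x hxI hx0 hra ⟨g, hg, hgb⟩
  classical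
  set c := B.repr x with hc
  have hgne : (comp Γ c g).Nonempty := (gr_nonempty_iff Γ c g).mp hg
  set n := (comp Γ c g).min' hgne with hn
  have hnmem : n ∈ comp Γ c g := (comp Γ c g).min'_mem hgne
  have hcgn : c (g, n) ≠ 0 := (mem_comp_iff Γ c g n).mp hnmem
  have hnmin : ∀ i, c (g, i) ≠ 0 → n ≤ i := fun i hi =>
    Finset.min'_le _ _ ((mem_comp_iff Γ c g i).mpr hi)
  set y := ⁅B (g, n), x⁆ with hy
  have hyI : y ∈ I := I.lie_mem hxI
  have hrepr : ∀ (δ : Γ) (k : ℕ), B.repr y (δ, k) =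
      ((δ : ℂ) - 2 * (g : ℂ)) * (if n ≤ k then c (δ - g, k - n) else 0)
      + ((k : ℂ) - 2 * (n : ℂ) - 1) *
          (if n + 1 ≤ k then c (δ - g, k - n - 1) else 0) :=
    fun δ k => repr_bracket Γ W B hB g n x δ k
  have hgr_sub : gr Γ (B.repr y) ⊆ (gr Γ c).image (fun a => a + g) := by
    intro g' hg'
    obtain ⟨k, hk⟩ := (mem_gr_iff Γ _ g').mp hg'
    rw [hrepr g' k] at hk
    have hmem : (g' - g) ∈ gr Γ c := by
      rw [mem_gr_iff]
      by_contra hno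
      push_neg at hno
      apply hk
      split_ifs <;> simp [hno]
    exact Finset.mem_image.mpr ⟨g' - g, hmem, by abel⟩
  have hcard_gr : (gr Γ (B.repr y)).card ≤ (gr Γ c).card :=
    le_trans (Finset.card_le_card hgr_sub) Finset.card_image_le
  have h2gsub : ((g + g : Γ) - g) = g := by abel
  have h2gc : ((g + g : Γ) : ℂ) - 2 * (g : ℂ) = 0 := by push_cast; ring
  have hcomp2g : comp Γ (B.repr y) (g + g)
      = ((comp Γ c g).erase n).image (fun i => i + (n + 1)) := by
    ext k
    rw [mem_comp_iff, hrepr (g + g) k, h2gc, zero_mul, zero_add, h2gsub]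
    constructor
    · intro hk
      have hcond : n + 1 ≤ k := by
        by_contra hcond
        rw [if_neg hcond, mul_zero] at hk
        exact hk rfl
      rw [if_pos hcond] at hk
      have hc' : c (g, k - n - 1) ≠ 0 := fun h => hk (by rw [h, mul_zero])
      have hkne : (k : ℂ) - 2 * n - 1 ≠ 0 := fun h => hk (by rw [h, zero_mul])
      have hkne' : k ≠ 2 * n + 1 := by
        intro he
        apply hkne
        rw [he]; push_cast; ring
      exact Finset.mem_image.mpr ⟨k - n - 1,
        Finset.mem_erase.mpr ⟨by omega, (mem_comp_iff Γ c g _).mpr hc'⟩, by omega⟩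
    · intro hk
      obtain ⟨i, hi, rfl⟩ := Finset.mem_image.mp hk
      obtain ⟨hin, hicomp⟩ := Finset.mem_erase.mp hi
      have hci : c (g, i) ≠ 0 := (mem_comp_iff Γ c g i).mp hicomp
      have hcond : n + 1 ≤ i + (n + 1) := by omega
      rw [if_pos hcond]
      have hidx : i + (n + 1) - n - 1 = i := by omega
      rw [hidx]
      apply mul_ne_zero _ hci
      have : ((i + (n + 1) : ℕ) : ℂ) - 2 * n - 1 = (i : ℂ) - n := by push_cast; ring
      rw [this]
      intro h
      apply hin
      exact_mod_cast sub_eq_zero.mp h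
  by_cases hL : 2 ≤ (comp Γ c g).card
  · -- case length ≥ 2 : recurse on inner budget
    have h2g_card : (comp Γ (B.repr y) (g + g)).card = (comp Γ c g).card - 1 := by
      rw [hcomp2g, Finset.card_image_of_injective _ (add_left_injective (n + 1)),
        Finset.card_erase_of_mem hnmem]
    have h2g_mem : (g + g) ∈ gr Γ (B.repr y) := by
      rw [gr_nonempty_iff, ← Finset.card_pos, h2g_card]
      omega
    obtain ⟨k0, hk0⟩ := (mem_gr_iff Γ _ _).mp h2g_mem
    have hy0 : y ≠ 0 := ne_zero_of_repr_ne Γ W B y _ hk0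
    exact ihb (b - 1) (by omega) y hyI hy0 (le_trans hcard_gr hra)
      ⟨g + g, h2g_mem, by rw [h2g_card]; omega⟩
  · -- length = 1
    have hL1 : (comp Γ c g).card = 1 := by
      have := Finset.card_pos.mpr hgne
      omega
    have hcompsing : comp Γ c g = {n} := by
      obtain ⟨a0, ha0⟩ := Finset.card_eq_one.mp hL1
      rw [ha0] at hnmem ⊢
      rw [Finset.mem_singleton] at hnmem
      rw [hnmem]
    by_cases hr : 2 ≤ (gr Γ c).card
    · -- kill grade g, recurse on outer budget
      obtain ⟨α, hα, hαg⟩ := Finset.exists_mem_ne hr g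
      have hαne : (comp Γ c α).Nonempty := (gr_nonempty_iff Γ c α).mp hα
      set l := (comp Γ c α).min' hαne with hl
      have hcl : c (α, l) ≠ 0 := (mem_comp_iff Γ c α l).mp ((comp Γ c α).min'_mem hαne)
      have hlmin : ∀ i, c (α, i) ≠ 0 → l ≤ i := fun i hi =>
        Finset.min'_le _ _ ((mem_comp_iff Γ c α i).mpr hi)
      have hαsub : ((α + g : Γ) - g) = α := by abel
      have hynz : B.repr y (α + g, l + n) ≠ 0 := by
        rw [hrepr (α + g) (l + n), hαsub]
        have hcond1 : n ≤ l + n := by omega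
        rw [if_pos hcond1]
        have hidx1 : l + n - n = l := by omega
        rw [hidx1]
        have hzero2 : (if n + 1 ≤ l + n then c (α, l - 1) else 0) = 0 := by
          by_cases hcond2 : n + 1 ≤ l + n
          · rw [if_pos hcond2]
            by_contra hcc
            have := hlmin (l - 1) hcc
            omega
          · rw [if_neg hcond2]
        rw [hzero2, mul_zero, add_zero]
        apply mul_ne_zero _ hcl
        have : ((α + g : Γ) : ℂ) - 2 * g = (α : ℂ) - g := by push_cast; ring
        rw [this]
        intro h
        exact hαg (Subtype.coe_injective (sub_eq_zero.mp h))
      have hy0 : y ≠ 0 := ne_zero_of_repr_ne Γ W B y _ hynz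
      have h2gnot : (g + g) ∉ gr Γ (B.repr y) := by
        rw [gr_nonempty_iff, hcomp2g, hcompsing]
        simp
      have hsub2 : gr Γ (B.repr y) ⊆ ((gr Γ c).image (fun a => a + g)).erase (g + g) :=
        fun g' h => Finset.mem_erase.mpr
          ⟨fun he => h2gnot (he ▸ h), hgr_sub h⟩
      have h2gim : (g + g) ∈ (gr Γ c).image (fun a => a + g) :=
        Finset.mem_image.mpr ⟨g, hg, rfl⟩
      have hcard2 : (gr Γ (B.repr y)).card < (gr Γ c).card := by
        have h1 := Finset.card_le_card hsub2
        rw [Finset.card_erase_of_mem h2gim] at h1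
        have h2 : ((gr Γ c).image (fun a => a + g)).card ≤ (gr Γ c).card :=
          Finset.card_image_le
        have h3 := Finset.card_pos.mpr ⟨g, hg⟩
        omega
      have hyne : (gr Γ (B.repr y)).Nonempty :=
        ⟨α + g, (mem_gr_iff Γ _ _).mpr ⟨l + n, hynz⟩⟩
      obtain ⟨g', hg'⟩ := hyne
      exact iha ((gr Γ (B.repr y)).card) (lt_of_lt_of_le hcard2 hra)
        ((comp Γ (B.repr y) g').card) y hyI hy0 le_rfl ⟨g', hg', le_rfl⟩
    · -- x is a pure basis vector
      have hr1 : (gr Γ c).card = 1 := by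
        have := Finset.card_pos.mpr ⟨g, hg⟩
        omega
      have hgrsing : gr Γ c = {g} := by
        obtain ⟨a0, ha0⟩ := Finset.card_eq_one.mp hr1
        rw [ha0] at hg ⊢
        rw [Finset.mem_singleton] at hg
        rw [hg]
      have hsingle : c = Finsupp.single (g, n) (c (g, n)) := by
        ext q
        by_cases hq : q = (g, n)
        · rw [hq, Finsupp.single_apply, if_pos rfl]
        · rw [Finsupp.single_apply, if_neg (fun h => hq h.symm)]
          by_contra hcq
          have hq1 : q.1 ∈ gr Γ c := (mem_gr_iff Γ c q.1).mpr ⟨q.2, by rwa [Prod.mk.eta]⟩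
          rw [hgrsing, Finset.mem_singleton] at hq1
          have hq2 : q.2 ∈ comp Γ c g := (mem_comp_iff Γ c g q.2).mpr (by
            rw [← hq1, Prod.mk.eta]; exact hcq)
          rw [hcompsing, Finset.mem_singleton] at hq2
          exact hq (Prod.ext hq1 hq2)
      have hxeq : x = c (g, n) • B (g, n) := by
        have h1 : B.repr.symm c = x := by rw [hc]; exact B.repr.symm_apply_apply x
        have h2 : B.repr.symm (Finsupp.single ((g, n) : Γ × ℕ) (c (g, n)))
            = c (g, n) • B (g, n) := B.repr_symm_single _ _
        rw [← h2, ← hsingle]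
        exact h1.symm
      refine ⟨g, n, ?_⟩
      have : B (g, n) = (c (g, n))⁻¹ • x := by
        rw [hxeq, smul_smul, inv_mul_cancel₀ hcgn, one_smul]
      rw [this]
      exact I.smul_mem _ hxI

-- pure vector generates everything from degree N+N on
include hB in
lemma pure_gen (I : LieIdeal ℂ W) (γ : Γ) (N : ℕ) (h : B (γ, N) ∈ I)
    (t : Γ) (ht : (t : ℂ) ≠ 0) :
    ∀ (ε : Γ) (m : ℕ), N + N ≤ m → B (ε, m) ∈ I := by
  -- step 1: all grades at level N+N except 2γ
  have step1 : ∀ δ : Γ, δ ≠ γ + γ → B (δ, N + N) ∈ I := by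
    intro δ hδ
    have hu : ⁅B (δ - γ, N), B (γ, N)⁆ ∈ I := I.lie_mem h
    rw [hB] at hu
    have he : (δ - γ) + γ = δ := by abel
    rw [he] at hu
    have h0 : ((N : ℂ) - N) = 0 := by ring
    rw [h0, zero_smul, add_zero] at hu
    have hcoef : (γ : ℂ) - ((δ - γ : Γ) : ℂ) ≠ 0 := by
      intro hc
      apply hδ
      apply Subtype.coe_injective
      push_cast at hc ⊢
      linear_combination -hc
    have : B (δ, N + N) = ((γ : ℂ) - ((δ - γ : Γ) : ℂ))⁻¹ •
        (((γ : ℂ) - ((δ - γ : Γ) : ℂ)) • B (δ, N + N)) := by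
      rw [smul_smul, inv_mul_cancel₀ hcoef, one_smul]
    rw [this]
    exact I.smul_mem _ hu
  -- step 2: all grades at all levels ≥ N+N
  intro ε m hm
  obtain ⟨j, rfl⟩ : ∃ j, m = (N + N) + j := ⟨m - (N + N), by omega⟩
  obtain ⟨β₁, hβ₁w, _⟩ := exists_avoid Γ t ht (ε - (γ + γ)) (ε - (γ + γ))
  obtain ⟨β₂, hβ₂w, hβ₂β₁⟩ := exists_avoid Γ t ht (ε - (γ + γ)) β₁
  have hδ₁ : ε - β₁ ≠ γ + γ := fun hc => hβ₁w (by rw [← hc]; abel)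
  have hδ₂ : ε - β₂ ≠ γ + γ := fun hc => hβ₂w (by rw [← hc]; abel)
  have hu₁ : ⁅B (β₁, j), B (ε - β₁, N + N)⁆ ∈ I := I.lie_mem (step1 _ hδ₁)
  have hu₂ : ⁅B (β₂, j), B (ε - β₂, N + N)⁆ ∈ I := I.lie_mem (step1 _ hδ₂)
  rw [hB] at hu₁ hu₂
  have he₁ : β₁ + (ε - β₁) = ε := by abel
  have he₂ : β₂ + (ε - β₂) = ε := by abel
  rw [he₁] at hu₁
  rw [he₂] at hu₂
  have hdiff : (((ε - β₁ : Γ) : ℂ) - β₁ - (((ε - β₂ : Γ) : ℂ) - β₂)) •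
      B (ε, j + (N + N)) ∈ I := by
    have := I.sub_mem hu₁ hu₂
    have harr : (((ε - β₁ : Γ) : ℂ) - ↑β₁) • B (ε, j + (N + N)) +
          ((↑(N + N) : ℂ) - ↑j) • B (ε, j + (N + N) + 1)
        - ((((ε - β₂ : Γ) : ℂ) - ↑β₂) • B (ε, j + (N + N)) +
          ((↑(N + N) : ℂ) - ↑j) • B (ε, j + (N + N) + 1))
        = (((ε - β₁ : Γ) : ℂ) - ↑β₁ - (((ε - β₂ : Γ) : ℂ) - ↑β₂)) • B (ε, j + (N + N)) := by
      module
    rwa [harr] at this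
  have hcoef : (((ε - β₁ : Γ) : ℂ) - β₁ - (((ε - β₂ : Γ) : ℂ) - β₂)) ≠ 0 := by
    intro hc
    apply hβ₂β₁
    apply Subtype.coe_injective
    push_cast at hc ⊢
    linear_combination hc / 2
  have hidx : (N + N) + j = j + (N + N) := by omega
  rw [hidx]
  have : B (ε, j + (N + N)) = (((ε - β₁ : Γ) : ℂ) - β₁ - (((ε - β₂ : Γ) : ℂ) - β₂))⁻¹ •
      ((((ε - β₁ : Γ) : ℂ) - β₁ - (((ε - β₂ : Γ) : ℂ) - β₂)) • B (ε, j + (N + N))) := by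
    rw [smul_smul, inv_mul_cancel₀ hcoef, one_smul]
  rw [this]
  exact I.smul_mem _ hdiff

include hB in
lemma bottom (I : LieIdeal ℂ W) (n : ℕ)
    (hlow : ∀ x ∈ I, ∀ (α : Γ) (i : ℕ), i < n → B.repr x (α, i) = 0) :
    ∀ b : ℕ, ∀ x ∈ I, (lev Γ (B.repr x) n).Nonempty → (lev Γ (B.repr x) n).card ≤ b →
      ∃ δ : Γ, B (δ, n) ∈ (I : Submodule ℂ W) ⊔ Wn Γ W B (n + 1) := by
  intro b
  induction b using Nat.strong_induction_on with
  | _ b ihb =>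
  rintro x hxI hne hcb
  classical
  set c := B.repr x with hc
  obtain ⟨α₁, hα₁⟩ := hne
  have hcα₁ : c (α₁, n) ≠ 0 := (mem_lev_iff Γ c n α₁).mp hα₁
  by_cases hb1 : (lev Γ c n).card = 1
  · have hsing : lev Γ c n = {α₁} := by
      obtain ⟨a0, ha0⟩ := Finset.card_eq_one.mp hb1
      rw [ha0] at hα₁ ⊢
      rw [Finset.mem_singleton] at hα₁
      rw [hα₁]
    set d := x - c (α₁, n) • B (α₁, n) with hd
    have hdr : B.repr d = c - c (α₁, n) • Finsupp.single (α₁, n) 1 := by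
      rw [hd, map_sub, map_smul, B.repr_self]
    have hdW : d ∈ Wn Γ W B (n + 1) := by
      rw [mem_Wn_iff]
      intro p hp
      by_contra hlt
      push_neg at hlt
      rw [Finsupp.mem_support_iff, hdr] at hp
      apply hp
      rw [Finsupp.sub_apply, Finsupp.smul_apply, Finsupp.single_apply, smul_eq_mul]
      by_cases hpn : p.2 = n
      · by_cases hp1 : p.1 = α₁
        · have hpe : ((α₁, n) : Γ × ℕ) = p := (Prod.ext hp1 hpn).symm
          rw [if_pos hpe, mul_one, ← hpe]
          exact sub_self _
        · have hc0 : c p = 0 := by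
            by_contra hcc
            have hmem : p.1 ∈ lev Γ c n := by
              rw [mem_lev_iff]
              rw [show ((p.1, n) : Γ × ℕ) = p from by rw [← hpn]]
              exact hcc
            rw [hsing, Finset.mem_singleton] at hmem
            exact hp1 hmem
          have hne' : ((α₁, n) : Γ × ℕ) ≠ p := fun he => hp1 (by rw [← he])
          rw [if_neg hne', mul_zero, hc0, sub_zero]
      · have hplt : p.2 < n := by omega
        have hc0 : c p = 0 := by
          have := hlow x hxI p.1 p.2 hplt
          rwa [Prod.mk.eta] at this
        have hne' : ((α₁, n) : Γ × ℕ) ≠ p := fun he => hpn (by rw [← he])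
        rw [if_neg hne', mul_zero, hc0, sub_zero]
    refine ⟨α₁, ?_⟩
    have hxd : x - d = c (α₁, n) • B (α₁, n) := by rw [hd]; exact sub_sub_cancel _ _
    have heq : B (α₁, n) = (c (α₁, n))⁻¹ • (x - d) := by
      rw [hxd, smul_smul, inv_mul_cancel₀ hcα₁, one_smul]
    rw [heq]
    apply Submodule.smul_mem
    exact Submodule.sub_mem _
      (Submodule.mem_sup_left ((LieSubmodule.mem_toSubmodule I).mpr hxI))
      (Submodule.mem_sup_right hdW)
  · have hb2 : 2 ≤ (lev Γ c n).card := by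
      have := Finset.card_pos.mpr ⟨α₁, hα₁⟩
      omega
    set y := ⁅B (α₁, 0), x⁆ with hy
    have hyI : y ∈ I := I.lie_mem hxI
    have hyco : ∀ α : Γ, B.repr y (α, n) = ((α : ℂ) - 2 * (α₁ : ℂ)) * c (α - α₁, n) := by
      intro α
      rw [hy, repr_bracket Γ W B hB α₁ 0 x α n]
      rw [if_pos (Nat.zero_le n)]
      have hz : n - 0 = n := rfl
      rw [hz]
      by_cases h2 : 0 + 1 ≤ n
      · rw [if_pos h2]
        rw [hlow x hxI (α - α₁) (n - 1) (by omega), mul_zero, add_zero]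
      · rw [if_neg h2, mul_zero, add_zero]
    have hlev_y : lev Γ (B.repr y) n = ((lev Γ c n).erase α₁).image (fun a => a + α₁) := by
      ext α
      rw [mem_lev_iff, hyco]
      constructor
      · intro hk
        have hc1 : c (α - α₁, n) ≠ 0 := fun h => hk (by rw [h, mul_zero])
        have hc2 : (α : ℂ) - 2 * (α₁ : ℂ) ≠ 0 := fun h => hk (by rw [h, zero_mul])
        have hne2 : α - α₁ ≠ α₁ := by
          intro he
          apply hc2
          have := congrArg (Subtype.val) he
          push_cast at this
          linear_combination this
        exact Finset.mem_image.mpr ⟨α - α₁,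
          Finset.mem_erase.mpr ⟨hne2, (mem_lev_iff Γ c n _).mpr hc1⟩, by abel⟩
      · intro hk
        obtain ⟨β, hβ, rfl⟩ := Finset.mem_image.mp hk
        obtain ⟨hβne, hβmem⟩ := Finset.mem_erase.mp hβ
        have he : (β + α₁) - α₁ = β := by abel
        rw [he]
        apply mul_ne_zero
        · intro hc0
          apply hβne
          apply Subtype.coe_injective
          push_cast at hc0 ⊢
          linear_combination hc0
        · exact (mem_lev_iff Γ c n β).mp hβmem
    have hcard_y : (lev Γ (B.repr y) n).card = (lev Γ c n).card - 1 := by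
      rw [hlev_y, Finset.card_image_of_injective _ (add_left_injective α₁),
        Finset.card_erase_of_mem hα₁]
    apply ihb (b - 1) (by omega) y hyI
    · rw [← Finset.card_pos, hcard_y]
      omega
    · rw [hcard_y]
      omega

include hB in
lemma transport0 (I : LieIdeal ℂ W) (n : ℕ) (t : Γ) (ht : (t : ℂ) ≠ 0)
    (δ : Γ) (hδ : B (δ, n) ∈ (I : Submodule ℂ W) ⊔ Wn Γ W B (n + 1)) :
    ∀ γ : Γ, B (γ, n) ∈ (I : Submodule ℂ W) ⊔ Wn Γ W B (n + 1) := by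
  have main : ∀ δ₀ : Γ, B (δ₀, n) ∈ (I : Submodule ℂ W) ⊔ Wn Γ W B (n + 1) →
      ∀ γ : Γ, γ ≠ δ₀ + δ₀ → B (γ, n) ∈ (I : Submodule ℂ W) ⊔ Wn Γ W B (n + 1) := by
    intro δ₀ h γ hγ
    obtain ⟨u, huI, w, hw, huw⟩ := Submodule.mem_sup.mp h
    have hbr : ⁅B (γ - δ₀, 0), B (δ₀, n)⁆
        = ((δ₀ : ℂ) - ((γ - δ₀ : Γ) : ℂ)) • B (γ, n) + ((n : ℂ) - 0) • B (γ, n + 1) := by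
      rw [hB]
      have he : (γ - δ₀) + δ₀ = γ := by abel
      have he2 : 0 + n = n := Nat.zero_add n
      rw [he, he2]
      norm_num
    have hsum : ⁅B (γ - δ₀, 0), B (δ₀, n)⁆
        = ⁅B (γ - δ₀, 0), u⁆ + ⁅B (γ - δ₀, 0), w⁆ := by
      rw [← lie_add, huw]
    have hkey : ((δ₀ : ℂ) - ((γ - δ₀ : Γ) : ℂ)) • B (γ, n)
        = ⁅B (γ - δ₀, 0), u⁆ + ⁅B (γ - δ₀, 0), w⁆ - ((n : ℂ) - 0) • B (γ, n + 1) := by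
      rw [← hsum, hbr]; abel
    have h1 : ⁅B (γ - δ₀, 0), u⁆ ∈ (I : Submodule ℂ W) :=
      (LieSubmodule.mem_toSubmodule I).mpr
        (I.lie_mem ((LieSubmodule.mem_toSubmodule I).mp huI))
    have h2 : ⁅B (γ - δ₀, 0), w⁆ ∈ Wn Γ W B (n + 1) :=
      lie_basis_Wn Γ W B hB (γ - δ₀) 0 (n + 1) w hw
    have h3 : ((n : ℂ) - 0) • B (γ, n + 1) ∈ Wn Γ W B (n + 1) :=
      Submodule.smul_mem _ _ (mem_Wn_of Γ W B (n + 1) γ (n + 1) le_rfl)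
    have hmem : ((δ₀ : ℂ) - ((γ - δ₀ : Γ) : ℂ)) • B (γ, n)
        ∈ (I : Submodule ℂ W) ⊔ Wn Γ W B (n + 1) := by
      rw [hkey]
      exact Submodule.sub_mem _
        (Submodule.add_mem _ (Submodule.mem_sup_left h1) (Submodule.mem_sup_right h2))
        (Submodule.mem_sup_right h3)
    have hcoef : ((δ₀ : ℂ) - ((γ - δ₀ : Γ) : ℂ)) ≠ 0 := by
      intro hc
      apply hγ
      apply Subtype.coe_injective
      push_cast at hc ⊢
      linear_combination -hc
    have heq : B (γ, n) = ((δ₀ : ℂ) - ((γ - δ₀ : Γ) : ℂ))⁻¹ •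
        (((δ₀ : ℂ) - ((γ - δ₀ : Γ) : ℂ)) • B (γ, n)) := by
      rw [smul_smul, inv_mul_cancel₀ hcoef, one_smul]
    rw [heq]
    exact Submodule.smul_mem _ _ hmem
  intro γ
  by_cases hγ : γ = δ + δ
  · obtain ⟨δ', hδ'δ, hδ'2⟩ := exists_avoid Γ t ht δ (δ + δ)
    have h1 := main δ hδ δ' hδ'2
    apply main δ' h1 γ
    rw [hγ]
    intro hc
    apply hδ'δ
    apply Subtype.coe_injective
    have := congrArg (Subtype.val) hc
    push_cast at this ⊢
    linear_combination -this / 2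
  · exact main δ hδ γ hγ

include hB in
lemma level_up (I : LieIdeal ℂ W) (m : ℕ) (t : Γ) (ht : (t : ℂ) ≠ 0)
    (hall : ∀ δ : Γ, B (δ, m) ∈ (I : Submodule ℂ W) ⊔ Wn Γ W B (m + 1)) :
    ∀ γ : Γ, B (γ, m + 1) ∈ (I : Submodule ℂ W) ⊔ Wn Γ W B (m + 2) := by
  intro γ
  obtain ⟨β, hβ⟩ := exists_double_ne Γ t ht γ
  obtain ⟨u, huI, w, hw, huw⟩ := Submodule.mem_sup.mp (hall (γ - β))
  have hbr : ⁅B (β, 1), B (γ - β, m)⁆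
      = (((γ - β : Γ) : ℂ) - (β : ℂ)) • B (γ, m + 1)
        + ((m : ℂ) - 1) • B (γ, m + 2) := by
    rw [hB]
    have he : β + (γ - β) = γ := by abel
    have he2 : 1 + m = m + 1 := by omega
    rw [he, he2]
    norm_num
  have hsum : ⁅B (β, 1), B (γ - β, m)⁆ = ⁅B (β, 1), u⁆ + ⁅B (β, 1), w⁆ := by
    rw [← lie_add, huw]
  have hkey : (((γ - β : Γ) : ℂ) - (β : ℂ)) • B (γ, m + 1)
      = ⁅B (β, 1), u⁆ + ⁅B (β, 1), w⁆ - ((m : ℂ) - 1) • B (γ, m + 2) := by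
    rw [← hsum, hbr]; abel
  have h1 : ⁅B (β, 1), u⁆ ∈ (I : Submodule ℂ W) :=
    (LieSubmodule.mem_toSubmodule I).mpr
      (I.lie_mem ((LieSubmodule.mem_toSubmodule I).mp huI))
  have h2 : ⁅B (β, 1), w⁆ ∈ Wn Γ W B (m + 2) :=
    lie_basis_Wn Γ W B hB β 1 (m + 1) w hw
  have h3 : ((m : ℂ) - 1) • B (γ, m + 2) ∈ Wn Γ W B (m + 2) :=
    Submodule.smul_mem _ _ (mem_Wn_of Γ W B (m + 2) γ (m + 2) le_rfl)
  have hmem : (((γ - β : Γ) : ℂ) - (β : ℂ)) • B (γ, m + 1)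
      ∈ (I : Submodule ℂ W) ⊔ Wn Γ W B (m + 2) := by
    rw [hkey]
    exact Submodule.sub_mem _
      (Submodule.add_mem _ (Submodule.mem_sup_left h1) (Submodule.mem_sup_right h2))
      (Submodule.mem_sup_right h3)
  have hcoef : (((γ - β : Γ) : ℂ) - (β : ℂ)) ≠ 0 := by
    intro hc
    apply hβ
    apply Subtype.coe_injective
    push_cast at hc ⊢
    linear_combination -hc
  have heq : B (γ, m + 1) = (((γ - β : Γ) : ℂ) - (β : ℂ))⁻¹ •
      ((((γ - β : Γ) : ℂ) - (β : ℂ)) • B (γ, m + 1)) := by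
    rw [smul_smul, inv_mul_cancel₀ hcoef, one_smul]
  rw [heq]
  exact Submodule.smul_mem _ _ hmem

end Aux

theorem stmt3 (Γ : AddSubgroup ℂ) (hΓ : Γ ≠ ⊥)
    (W : Type) [LieRing W] [LieAlgebra ℂ W] (B : Module.Basis (Γ × ℕ) ℂ W)
    (hB : ∀ (α β : Γ) (i j : ℕ),
      ⁅B (α, i), B (β, j)⁆ = ((β : ℂ) - (α : ℂ)) • B (α + β, i + j)
        + ((j : ℂ) - (i : ℂ)) • B (α + β, i + j + 1)) :
    -- each `W^n` is a Lie ideal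
    (∀ n : ℕ, ∀ (x y : W), y ∈ Wn Γ W B n → ⁅x, y⁆ ∈ Wn Γ W B n) ∧
    -- every nonzero Lie ideal equals some `W^n`
    (∀ I : LieIdeal ℂ W, I ≠ ⊥ → ∃ n : ℕ, (I : Submodule ℂ W) = Wn Γ W B n) := by
  constructor
  · intro n x y hy
    exact lie_Wn Γ W B hB n x y hy
  · intro I hI
    classical
    -- a nonzero element of Γ
    obtain ⟨tc, htΓ, htc⟩ : ∃ tc : ℂ, tc ∈ Γ ∧ tc ≠ 0 := by
      by_contra hno
      push_neg at hno
      exact hΓ ((AddSubgroup.eq_bot_iff_forall Γ).mpr hno)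
    set t : Γ := ⟨tc, htΓ⟩ with htdef
    have ht0 : (t : ℂ) ≠ 0 := htc
    -- a nonzero element of I
    obtain ⟨x₀, hx₀I, hx₀⟩ : ∃ x ∈ I, x ≠ 0 := by
      by_contra hno
      push_neg at hno
      exact hI ((LieSubmodule.eq_bot_iff I).mpr fun m hm => hno m hm)
    -- the minimal degree n
    set S : Set ℕ := {i | ∃ x ∈ I, ∃ α : Γ, B.repr x (α, i) ≠ 0} with hS
    have hx₀r : B.repr x₀ ≠ 0 := fun h => hx₀ (by
      have := congrArg (B.repr.symm) h
      rwa [B.repr.symm_apply_apply, map_zero] at this)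
    obtain ⟨p₀, hp₀⟩ : ∃ p, B.repr x₀ p ≠ 0 := by
      by_contra hno
      push_neg at hno
      exact hx₀r (Finsupp.ext fun p => hno p)
    have hSne : S.Nonempty := ⟨p₀.2, x₀, hx₀I, p₀.1, by rwa [Prod.mk.eta]⟩
    set n := sInf S with hn
    have hn_mem : n ∈ S := Nat.sInf_mem hSne
    have hn_le : ∀ i ∈ S, n ≤ i := fun i hi => Nat.sInf_le hi
    have hlow : ∀ x ∈ I, ∀ (α : Γ) (i : ℕ), i < n → B.repr x (α, i) = 0 := by
      intro x hx α i hi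
      by_contra hc
      have hiS : i ∈ S := ⟨x, hx, α, hc⟩
      have := hn_le i hiS
      omega
    have hIle : (I : Submodule ℂ W) ≤ Wn Γ W B n := by
      intro x hx
      rw [mem_Wn_iff]
      intro p hp
      rw [Finsupp.mem_support_iff] at hp
      exact hn_le p.2 ⟨x, (LieSubmodule.mem_toSubmodule I).mp hx, p.1,
        by rwa [Prod.mk.eta]⟩
    -- a pure basis vector in I
    obtain ⟨γ, N, hγN⟩ : ∃ (γ : Γ) (N : ℕ), B (γ, N) ∈ I := by
      have hg : p₀.1 ∈ gr Γ (B.repr x₀) :=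
        (mem_gr_iff Γ _ _).mpr ⟨p₀.2, by rwa [Prod.mk.eta]⟩
      exact purify Γ W B hB I ((gr Γ (B.repr x₀)).card) ((comp Γ (B.repr x₀) p₀.1).card)
        x₀ hx₀I hx₀ le_rfl ⟨p₀.1, hg, le_rfl⟩
    -- W^(N+N) ≤ I
    have hM : ∀ (ε : Γ) (m' : ℕ), N + N ≤ m' → B (ε, m') ∈ I :=
      pure_gen Γ W B hB I γ N hγN t ht0
    have hMW : Wn Γ W B (N + N) ≤ (I : Submodule ℂ W) := by
      apply Submodule.span_le.mpr
      rintro x ⟨α, i, hi, rfl⟩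
      exact (LieSubmodule.mem_toSubmodule I).mpr (hM α i hi)
    -- the bottom level n, all grades
    obtain ⟨x₁, hx₁I, α₁, hα₁⟩ := hn_mem
    have hbase0 : ∃ δ : Γ, B (δ, n) ∈ (I : Submodule ℂ W) ⊔ Wn Γ W B (n + 1) :=
      bottom Γ W B hB I n hlow ((lev Γ (B.repr x₁) n).card) x₁ hx₁I
        ⟨α₁, (mem_lev_iff Γ _ n α₁).mpr hα₁⟩ le_rfl
    obtain ⟨δ₀, hδ₀⟩ := hbase0
    have hlev0 : ∀ γ' : Γ, B (γ', n) ∈ (I : Submodule ℂ W) ⊔ Wn Γ W B (n + 1) :=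
      transport0 Γ W B hB I n t ht0 δ₀ hδ₀
    have hlev : ∀ k : ℕ, ∀ γ' : Γ,
        B (γ', n + k) ∈ (I : Submodule ℂ W) ⊔ Wn Γ W B (n + k + 1) := by
      intro k
      induction k with
      | zero => exact hlev0
      | succ k ih => exact level_up Γ W B hB I (n + k) t ht0 ih
    -- descent from N + N down to n
    have hdesc : ∀ k m : ℕ, n ≤ m → m + k = N + N → Wn Γ W B m ≤ (I : Submodule ℂ W) := by
      intro k
      induction k with
      | zero =>
        intro m hnm hmk
        rw [show m = N + N from by omega]
        exact hMW
      | succ k ih =>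
        intro m hnm hmk
        have hsup : Wn Γ W B m ≤ (I : Submodule ℂ W) ⊔ Wn Γ W B (m + 1) := by
          apply Submodule.span_le.mpr
          rintro x ⟨α, i, hi, rfl⟩
          by_cases him : m + 1 ≤ i
          · exact Submodule.mem_sup_right (mem_Wn_of Γ W B (m + 1) α i him)
          · have hieq : i = m := by omega
            subst hieq
            have h := hlev (i - n) α
            rw [show n + (i - n) = i from by omega] at h
            exact h
        have hWm1 : Wn Γ W B (m + 1) ≤ (I : Submodule ℂ W) := ih (m + 1) (by omega) (by omega)
        exact le_trans hsup (sup_le le_rfl hWm1)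
    have hnNN : n ≤ N + N := by
      have hNS : N ∈ S := ⟨B (γ, N), hγN, γ, by
        rw [B.repr_self]
        simp [Finsupp.single_apply]⟩
      have := hn_le N hNS
      omega
    exact ⟨n, le_antisymm hIle (hdesc (N + N - n) n le_rfl (by omega))⟩
end

section
/- W^1 is the unique maximal proper Lie ideal of W(Γ): W^1 is a proper ideal of W(Γ), and every proper ideal of W(Γ) is contained in W^1. -/
open Finsupp

attribute [-instance] Finsupp.instMul Finsupp.instMulZeroClass Finsupp.instSemigroupWithZero
  Finsupp.instNonUnitalNonAssocSemiring Finsupp.instNonUnitalSemiring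
  Finsupp.instNonUnitalCommSemiring Finsupp.instNonUnitalNonAssocRing Finsupp.instNonUnitalRing
  Finsupp.instNonUnitalCommRing

namespace Stmt4A

abbrev RR (Γ : AddSubgroup ℂ) : Type := Γ × ℕ →₀ ℂ

instance (Γ : AddSubgroup ℂ) : UniqueSums Γ :=
  UniqueSums.of_injective_addHom Γ.subtype.toAddHom Subtype.coe_injective inferInstance

variable {Γ : AddSubgroup ℂ}

noncomputable instance : CommRing (RR Γ) :=
  { (Finsupp.instAddCommGroup : AddCommGroup (Γ × ℕ →₀ ℂ)) with
    mul := fun x y => ((AddMonoidAlgebra.ofCoeff x : AddMonoidAlgebra ℂ (Γ × ℕ))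
      * AddMonoidAlgebra.ofCoeff y).coeff
    one := (1 : AddMonoidAlgebra ℂ (Γ × ℕ)).coeff
    mul_assoc := fun a b c => congrArg AddMonoidAlgebra.coeff
      (mul_assoc (AddMonoidAlgebra.ofCoeff a : AddMonoidAlgebra ℂ (Γ × ℕ)) _ _)
    one_mul := fun a => congrArg AddMonoidAlgebra.coeff
      (one_mul (AddMonoidAlgebra.ofCoeff a : AddMonoidAlgebra ℂ (Γ × ℕ)))
    mul_one := fun a => congrArg AddMonoidAlgebra.coeff
      (mul_one (AddMonoidAlgebra.ofCoeff a : AddMonoidAlgebra ℂ (Γ × ℕ)))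
    zero_mul := fun a => congrArg AddMonoidAlgebra.coeff
      (zero_mul (AddMonoidAlgebra.ofCoeff a : AddMonoidAlgebra ℂ (Γ × ℕ)))
    mul_zero := fun a => congrArg AddMonoidAlgebra.coeff
      (mul_zero (AddMonoidAlgebra.ofCoeff a : AddMonoidAlgebra ℂ (Γ × ℕ)))
    left_distrib := fun a b c => congrArg AddMonoidAlgebra.coeff
      (mul_add (AddMonoidAlgebra.ofCoeff a : AddMonoidAlgebra ℂ (Γ × ℕ)) _ _)
    right_distrib := fun a b c => congrArg AddMonoidAlgebra.coeff
      (add_mul (AddMonoidAlgebra.ofCoeff a : AddMonoidAlgebra ℂ (Γ × ℕ)) _ _)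
    mul_comm := fun a b => congrArg AddMonoidAlgebra.coeff
      (mul_comm (AddMonoidAlgebra.ofCoeff a : AddMonoidAlgebra ℂ (Γ × ℕ)) _) }

instance : IsScalarTower ℂ (RR Γ) (RR Γ) :=
  ⟨fun c x y => congrArg AddMonoidAlgebra.coeff
    (smul_mul_assoc c (AddMonoidAlgebra.ofCoeff x : AddMonoidAlgebra ℂ (Γ × ℕ))
      (AddMonoidAlgebra.ofCoeff y))⟩

instance : SMulCommClass ℂ (RR Γ) (RR Γ) :=
  ⟨fun c x y => congrArg AddMonoidAlgebra.coeff
    (mul_smul_comm c (AddMonoidAlgebra.ofCoeff x : AddMonoidAlgebra ℂ (Γ × ℕ))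
      (AddMonoidAlgebra.ofCoeff y)).symm⟩

instance : NoZeroDivisors (RR Γ) :=
  ⟨fun {x y} h => by
    have h' : (AddMonoidAlgebra.ofCoeff x : AddMonoidAlgebra ℂ (Γ × ℕ))
        * AddMonoidAlgebra.ofCoeff y = 0 := congrArg AddMonoidAlgebra.ofCoeff h
    rcases mul_eq_zero.mp h' with h1 | h1
    · exact Or.inl (congrArg AddMonoidAlgebra.coeff h1)
    · exact Or.inr (congrArg AddMonoidAlgebra.coeff h1)⟩

/-- single basis element as an element of `RR Γ` -/
noncomputable abbrev RR.single (p : Γ × ℕ) (c : ℂ) : RR Γ := Finsupp.single p c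

lemma RR.one_def : (1 : RR Γ) = RR.single 0 1 := rfl

lemma RR.single_mul_single (a b : Γ × ℕ) (r s : ℂ) :
    RR.single a r * RR.single b s = RR.single (a + b) (r * s) :=
  congrArg AddMonoidAlgebra.coeff (AddMonoidAlgebra.single_mul_single a b r s)

lemma RR.smul_single' (c : ℂ) (p : Γ × ℕ) (r : ℂ) : c • RR.single p r = RR.single p (c * r) :=
  Finsupp.smul_single' c p r

open scoped Pointwise in
lemma RR.support_mul [DecidableEq (Γ × ℕ)] (u v : RR Γ) :
    (u * v).support ⊆ u.support + v.support :=
  AddMonoidAlgebra.support_coeff_mul_subset (AddMonoidAlgebra.ofCoeff u)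
    (AddMonoidAlgebra.ofCoeff v)

lemma RR.mul_single_apply_aux (f : RR Γ) (r : ℂ) (x y z : Γ × ℕ)
    (H : ∀ a, a + x = z ↔ a = y) : (f * RR.single x r) z = f y * r :=
  AddMonoidAlgebra.coeff_mul_single_eq_coeff_mul (x := AddMonoidAlgebra.ofCoeff f) (m := x)
    (m₁ := z) (r := r) y (fun a _ => H a)

lemma RR.single_mul_apply_aux (f : RR Γ) (r : ℂ) (x y z : Γ × ℕ)
    (H : ∀ a, x + a = y ↔ a = z) : (RR.single x r * f) y = r * f z :=
  AddMonoidAlgebra.coeff_single_mul_eq_mul_coeff (x := AddMonoidAlgebra.ofCoeff f) (m := x)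
    (m₁ := y) (r := r) z (fun a _ => H a)

lemma RR.mul_single_apply_of_not_exists_add (r : ℂ) {g g' : Γ × ℕ} (x : RR Γ)
    (h : ¬∃ d, g' = d + g) : (x * RR.single g r) g' = 0 :=
  AddMonoidAlgebra.coeff_mul_single_of_forall_add_ne r (AddMonoidAlgebra.ofCoeff x)
    (fun d hd => h ⟨d, hd.symm⟩)

lemma RR.single_mul_apply_of_not_exists_add (r : ℂ) {g g' : Γ × ℕ} (x : RR Γ)
    (h : ¬∃ d, g' = g + d) : (RR.single g r * x) g' = 0 :=
  AddMonoidAlgebra.coeff_single_mul_of_forall_add_ne r (AddMonoidAlgebra.ofCoeff x)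
    (fun d hd => h ⟨d, hd.symm⟩)

/-- the derivation `D = ∂ + s²∂ₛ` in coordinates. -/
noncomputable def del (Γ : AddSubgroup ℂ) : RR Γ →ₗ[ℂ] RR Γ :=
  Finsupp.lsum ℂ fun p => LinearMap.toSpanSingleton ℂ (RR Γ)
    ((p.1 : ℂ) • Finsupp.single p 1 + (p.2 : ℂ) • Finsupp.single (p.1, p.2 + 1) 1)

lemma del_single (p : Γ × ℕ) (c : ℂ) :
    del Γ (Finsupp.single p c)
      = (p.1 : ℂ) • Finsupp.single p c + (p.2 : ℂ) • Finsupp.single (p.1, p.2 + 1) c := by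
  have : del Γ (Finsupp.single p c) = c • ((p.1 : ℂ) • Finsupp.single p 1 + (p.2 : ℂ) • Finsupp.single (p.1, p.2 + 1) 1) := by
    rw [del]
    erw [Finsupp.lsum_single]
    rw [LinearMap.toSpanSingleton_apply]
  rw [this, smul_add]
  simp [Finsupp.smul_single, smul_smul, mul_comm]

lemma del_apply0 (z : RR Γ) (γ : Γ) : del Γ z (γ, 0) = γ * z (γ, 0) := by
  induction z using Finsupp.induction_linear with
  | zero => simp
  | add f g hf hg => rw [map_add, Finsupp.add_apply, hf, hg, Finsupp.add_apply]; ring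
  | single p c =>
      rw [del_single]
      rcases p with ⟨β, i⟩
      simp only [Finsupp.add_apply, Finsupp.smul_apply, Finsupp.single_apply, smul_eq_mul,
        Prod.mk.injEq]
      by_cases h1 : β = γ
      · subst h1
        by_cases h2 : i = 0
        · subst h2; simp
        · simp [h2, Ne.symm h2, fun h => h2 (Nat.succ_injective h), Nat.succ_ne_zero]
      · simp [h1, Ne.symm h1, fun hh : (β,i) = (γ,0) => h1 (congrArg Prod.fst hh)]
  
lemma del_applyS (z : RR Γ) (γ : Γ) (j : ℕ) :
    del Γ z (γ, j + 1) = γ * z (γ, j + 1) + j * z (γ, j) := by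
  induction z using Finsupp.induction_linear with
  | zero => simp
  | add f g hf hg => rw [map_add, Finsupp.add_apply, hf, hg, Finsupp.add_apply,
      Finsupp.add_apply]; ring
  | single p c =>
      rw [del_single]
      rcases p with ⟨β, i⟩
      simp only [Finsupp.add_apply, Finsupp.smul_apply, Finsupp.single_apply, smul_eq_mul,
        Prod.mk.injEq]
      by_cases h1 : β = γ
      · subst h1
        by_cases h2 : i = j + 1
        · subst h2
          simp [Nat.succ_ne_self, (by omega : j + 1 + 1 ≠ j + 1), (by omega : ¬ (j+1 = j))]
        · by_cases h3 : i = j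
          · subst h3; simp [h2]
          · simp [h2, h3, fun h => h3 (Nat.succ_injective h)]
      · simp [h1]

lemma del_one : del Γ (1 : RR Γ) = 0 := by
  rw [RR.one_def, del_single]
  simp

lemma del_mul (x y : RR Γ) : del Γ (x * y) = del Γ x * y + x * del Γ y := by
  induction x using Finsupp.induction_linear with
  | zero => simp
  | add f g hf hg => rw [add_mul, map_add, map_add, hf, hg, add_mul]; ring
  | single p c =>
    induction y using Finsupp.induction_linear with
    | zero => simp
    | add f g hf hg => rw [mul_add, map_add, map_add, hf, hg, mul_add]; ring
    | single q d =>
        rw [RR.single_mul_single, del_single, del_single, del_single]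
        rcases p with ⟨α, i⟩; rcases q with ⟨β, j⟩
        simp only [add_mul, mul_add, smul_mul_assoc, mul_smul_comm,
          RR.single_mul_single, Prod.mk_add_mk, Prod.fst_add, Prod.snd_add]
        push_cast
        rw [add_smul, add_smul]
        abel_nf


section Brk

variable (Γ) (W : Type) [LieRing W] [LieAlgebra ℂ W] (B : Module.Basis (Γ × ℕ) ℂ W)

noncomputable def eW : W ≃ₗ[ℂ] RR Γ := B.repr

variable (hB : ∀ (α β : Γ) (i j : ℕ),
      ⁅B (α, i), B (β, j)⁆ = ((β : ℂ) - (α : ℂ)) • B (α + β, i + j)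
        + ((j : ℂ) - (i : ℂ)) • B (α + β, i + j + 1))

/-- bracket as bilinear map into coordinates -/
noncomputable def brkL : W →ₗ[ℂ] W →ₗ[ℂ] RR Γ :=
  LinearMap.mk₂ ℂ (fun x y => eW Γ W B ⁅x, y⁆)
    (fun x x' y => by show eW Γ W B ⁅x + x', y⁆ = eW Γ W B ⁅x, y⁆ + eW Γ W B ⁅x', y⁆
                      rw [add_lie, map_add])
    (fun c x y => by show eW Γ W B ⁅c • x, y⁆ = c • eW Γ W B ⁅x, y⁆
                     rw [smul_lie, map_smul])
    (fun x y y' => by show eW Γ W B ⁅x, y + y'⁆ = eW Γ W B ⁅x, y⁆ + eW Γ W B ⁅x, y'⁆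
                      rw [lie_add, map_add])
    (fun c x y => by show eW Γ W B ⁅x, c • y⁆ = c • eW Γ W B ⁅x, y⁆
                     rw [lie_smul, map_smul])

noncomputable def rhsL : W →ₗ[ℂ] W →ₗ[ℂ] RR Γ :=
  LinearMap.mk₂ ℂ (fun x y => eW Γ W B x * del Γ (eW Γ W B y) - eW Γ W B y * del Γ (eW Γ W B x))
    (fun x x' y => by simp only [map_add, add_mul, mul_add]; ring)
    (fun c x y => by simp only [map_add, map_smul, smul_mul_assoc, mul_smul_comm, smul_sub])
    (fun x y y' => by simp only [map_add, add_mul, mul_add]; ring)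
    (fun c x y => by simp only [map_add, map_smul, smul_mul_assoc, mul_smul_comm, smul_sub])

include hB in
lemma brk_eq (x y : W) :
    eW Γ W B ⁅x, y⁆
      = eW Γ W B x * del Γ (eW Γ W B y) - eW Γ W B y * del Γ (eW Γ W B x) := by
  have : brkL Γ W B = rhsL Γ W B := by
    apply B.ext; intro p
    apply B.ext; intro q
    show eW Γ W B ⁅B p, B q⁆ = _
    rcases p with ⟨α, i⟩; rcases q with ⟨β, j⟩
    have e1 : ∀ r : Γ × ℕ, eW Γ W B (B r) = Finsupp.single r 1 := fun r => B.repr_self r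
    rw [hB α β i j]
    show eW Γ W B _ = eW Γ W B (B (α,i)) * del Γ (eW Γ W B (B (β,j)))
        - eW Γ W B (B (β,j)) * del Γ (eW Γ W B (B (α,i)))
    rw [map_add, map_smul, map_smul, e1, e1, e1, e1, del_single, del_single]
    simp only [mul_add, mul_smul_comm, RR.single_mul_single, mul_one,
      Prod.mk_add_mk, add_comm β α, add_comm j i]
    simp only [sub_smul]
    abel
  exact LinearMap.congr_fun (LinearMap.congr_fun this x) y

end Brk


section Fil

variable (Γ)

/-- coordinate filtration -/
noncomputable def FilR (n : ℕ) : Submodule ℂ (RR Γ) where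
  carrier := {z | ∀ (γ : Γ) (i : ℕ), i < n → z (γ, i) = 0}
  add_mem' := fun {a b} ha hb γ i h => by
    rw [Finsupp.add_apply, ha γ i h, hb γ i h, add_zero]
  zero_mem' := fun γ i h => rfl
  smul_mem' := fun c {z} hz γ i h => by
    rw [Finsupp.smul_apply, hz γ i h, smul_zero]

lemma mem_FilR {n : ℕ} {z : RR Γ} : z ∈ FilR Γ n ↔ ∀ (γ : Γ) (i : ℕ), i < n → z (γ, i) = 0 :=
  Iff.rfl

lemma mem_FilR_support {n : ℕ} {z : RR Γ} :
    z ∈ FilR Γ n ↔ ∀ p ∈ z.support, n ≤ p.2 := by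
  constructor
  · intro h p hp
    by_contra hlt
    exact (Finsupp.mem_support_iff.mp hp) (by
      have := h p.1 p.2 (by omega); rwa [Prod.mk.eta] at this)
  · intro h γ i hi
    by_contra h0
    exact absurd (h (γ, i) (Finsupp.mem_support_iff.mpr h0)) (by omega)

lemma FilR_antitone {m n : ℕ} (h : m ≤ n) : FilR Γ n ≤ FilR Γ m := by
  intro z hz
  rw [mem_FilR] at hz ⊢
  exact fun γ i hi => hz γ i (lt_of_lt_of_le hi h)

lemma mul_FilR {a b : ℕ} {u v : RR Γ} (hu : u ∈ FilR Γ a) (hv : v ∈ FilR Γ b) :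
    u * v ∈ FilR Γ (a + b) := by
  rw [mem_FilR_support] at hu hv ⊢
  intro p hp
  have h3 := RR.support_mul u v hp
  rw [Finset.mem_add] at h3
  obtain ⟨q, hq, r, hr, rfl⟩ := h3
  have h1 := hu q hq
  have h2 := hv r hr
  show a + b ≤ q.2 + r.2
  omega

lemma mul_FilR_left {b : ℕ} {u v : RR Γ} (hv : v ∈ FilR Γ b) : u * v ∈ FilR Γ b := by
  have hu : u ∈ FilR Γ 0 := by rw [mem_FilR]; intro _ _ h; omega
  simpa using mul_FilR Γ hu hv

lemma del_FilR {n : ℕ} {z : RR Γ} (hz : z ∈ FilR Γ n) : del Γ z ∈ FilR Γ n := by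
  rw [mem_FilR] at hz ⊢
  intro γ i hi
  match i with
  | 0 => rw [del_apply0, hz γ 0 hi, mul_zero]
  | (j+1) => rw [del_applyS, hz γ (j+1) hi, hz γ j (by omega), mul_zero, mul_zero, add_zero]

end Fil

section WnLem

variable (Γ) (W : Type) [LieRing W] [LieAlgebra ℂ W] (B : Module.Basis (Γ × ℕ) ℂ W)

lemma mem_Wn_iff {n : ℕ} {x : W} : x ∈ Wn Γ W B n ↔ eW Γ W B x ∈ FilR Γ n := by
  have hset : {x : W | ∃ (α : Γ) (i : ℕ), n ≤ i ∧ x = B (α, i)}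
      = ⇑B '' {p : Γ × ℕ | n ≤ p.2} := by
    ext y
    constructor
    · rintro ⟨α, i, h, rfl⟩; exact ⟨(α, i), h, rfl⟩
    · rintro ⟨⟨α, i⟩, h, rfl⟩; exact ⟨α, i, h, rfl⟩
  rw [Wn, hset, Module.Basis.mem_span_image, mem_FilR_support]
  constructor
  · intro h p hp; exact h hp
  · intro h p hp; exact h p hp

end WnLem


section Parts12

variable (Γ) (W : Type) [LieRing W] [LieAlgebra ℂ W] (B : Module.Basis (Γ × ℕ) ℂ W)
variable (hB : ∀ (α β : Γ) (i j : ℕ),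
      ⁅B (α, i), B (β, j)⁆ = ((β : ℂ) - (α : ℂ)) • B (α + β, i + j)
        + ((j : ℂ) - (i : ℂ)) • B (α + β, i + j + 1))

include hB in
lemma part1 (x y : W) (hy : y ∈ Wn Γ W B 1) : ⁅x, y⁆ ∈ Wn Γ W B 1 := by
  rw [mem_Wn_iff] at hy ⊢
  rw [brk_eq Γ W B hB]
  refine sub_mem ?_ ?_
  · exact mul_FilR_left Γ (del_FilR Γ hy)
  · rw [mul_comm]
    exact mul_FilR_left Γ hy

lemma part2 : Wn Γ W B 1 ≠ ⊤ := by
  intro h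
  have h0 : B ((0 : Γ), (0 : ℕ)) ∈ Wn Γ W B 1 := h ▸ Submodule.mem_top
  rw [mem_Wn_iff] at h0
  have := h0 (0 : Γ) 0 (by omega)
  have he : eW Γ W B (B ((0 : Γ), (0 : ℕ))) = Finsupp.single ((0:Γ), (0:ℕ)) 1 :=
    B.repr_self _
  rw [he, Finsupp.single_apply] at this
  simp at this

end Parts12

section Ideal

variable (Γ) (W : Type) [LieRing W] [LieAlgebra ℂ W] (B : Module.Basis (Γ × ℕ) ℂ W)
variable (hB : ∀ (α β : Γ) (i j : ℕ),
      ⁅B (α, i), B (β, j)⁆ = ((β : ℂ) - (α : ℂ)) • B (α + β, i + j)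
        + ((j : ℂ) - (i : ℂ)) • B (α + β, i + j + 1))
variable (I : LieIdeal ℂ W)

noncomputable def JJ : Submodule ℂ (RR Γ) :=
  (I : Submodule ℂ W).comap ((eW Γ W B).symm : RR Γ ≃ₗ[ℂ] W).toLinearMap

lemma mem_JJ {z : RR Γ} : z ∈ JJ Γ W B I ↔ (eW Γ W B).symm z ∈ (I : Submodule ℂ W) :=
  Iff.rfl

include hB in
lemma Jbrk {z : RR Γ} (hz : z ∈ JJ Γ W B I) (x : RR Γ) :
    x * del Γ z - z * del Γ x ∈ JJ Γ W B I := by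
  have key : x * del Γ z - z * del Γ x = eW Γ W B ⁅(eW Γ W B).symm x, (eW Γ W B).symm z⁆ := by
    rw [brk_eq Γ W B hB, LinearEquiv.apply_symm_apply, LinearEquiv.apply_symm_apply]
  rw [mem_JJ, key, LinearEquiv.symm_apply_apply]
  rw [mem_JJ] at hz
  exact lie_mem_right ℂ W I _ _ hz

include hB in
lemma JJdel {z : RR Γ} (hz : z ∈ JJ Γ W B I) : del Γ z ∈ JJ Γ W B I := by
  have := Jbrk Γ W B hB I hz 1
  rwa [del_one, mul_zero, sub_zero, one_mul] at this

include hB in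
lemma lem1 {y y' : RR Γ} (hy : y ∈ JJ Γ W B I) (hy' : y' ∈ JJ Γ W B I) (g : RR Γ) :
    (y * y') * del Γ g ∈ JJ Γ W B I := by
  have h1 := Jbrk Γ W B hB I hy' (g * y)
  have h2 := Jbrk Γ W B hB I hy (g * y')
  have key : ((g*y) * del Γ y' - y' * del Γ (g*y)) + ((g*y') * del Γ y - y * del Γ (g*y'))
      = -((y * y') * del Γ g + (y * y') * del Γ g) := by
    rw [del_mul, del_mul]; ring
  have hsum := (JJ Γ W B I).add_mem h1 h2
  rw [key, neg_mem_iff] at hsum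
  have ht : (y * y') * del Γ g = (2⁻¹ : ℂ) • ((y * y') * del Γ g + (y * y') * del Γ g) := by
    rw [← two_smul ℂ ((y * y') * del Γ g), smul_smul]
    norm_num
  rw [ht]
  exact (JJ Γ W B I).smul_mem _ hsum

end Ideal


section Span

variable (Γ)

/-- span of products of two `del`-images -/
noncomputable def SP : Submodule ℂ (RR Γ) :=
  Submodule.span ℂ {u : RR Γ | ∃ g h, u = del Γ g * del Γ h}

lemma memSP (g h : RR Γ) : del Γ g * del Γ h ∈ SP Γ :=
  Submodule.subset_span ⟨g, h, rfl⟩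

lemma del_image_0 (γ : Γ) (hγ : (γ : ℂ) ≠ 0) :
    ∃ g, del Γ g = Finsupp.single (γ, (0:ℕ)) (1:ℂ) := by
  refine ⟨(γ : ℂ)⁻¹ • Finsupp.single (γ, (0:ℕ)) (1:ℂ), ?_⟩
  rw [map_smul, del_single]
  simp [smul_smul, inv_mul_cancel₀ hγ]

lemma del_image_k (k : ℕ) :
    ∃ g, del Γ g = Finsupp.single ((0:Γ), k + 2) (1:ℂ) := by
  refine ⟨((k:ℂ) + 1)⁻¹ • Finsupp.single ((0:Γ), k + 1) (1:ℂ), ?_⟩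
  have hk : ((k:ℂ) + 1) ≠ 0 := by
    have h0 : (((k+1:ℕ)):ℂ) ≠ 0 := Nat.cast_ne_zero.mpr (Nat.succ_ne_zero k)
    push_cast at h0
    exact h0
  rw [map_smul, del_single]
  simp only [ZeroMemClass.coe_zero, zero_smul, zero_add, Nat.cast_add, Nat.cast_one]
  rw [smul_smul, inv_mul_cancel₀ hk, one_smul]

lemma sp0 (γ δ : Γ) (hγ : (γ : ℂ) ≠ 0) (hδ : (δ : ℂ) ≠ 0) :
    Finsupp.single (γ + δ, (0:ℕ)) (1:ℂ) ∈ SP Γ := by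
  obtain ⟨g, hg⟩ := del_image_0 Γ γ hγ
  obtain ⟨h, hh⟩ := del_image_0 Γ δ hδ
  have := memSP Γ g h
  rw [hg, hh, RR.single_mul_single] at this
  simpa using this

variable {Γ} (ε : Γ) (hε : (ε : ℂ) ≠ 0)

include hε in
lemma sp_head (β : Γ) : Finsupp.single (β, (0:ℕ)) (1:ℂ) ∈ SP Γ := by
  by_cases hb : (β : ℂ) = (ε : ℂ)
  · have h2 : ((2 • ε : Γ) : ℂ) ≠ 0 := by
      have h2e : ((2 • ε : Γ) : ℂ) = 2 * (ε:ℂ) := by push_cast; ring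
      rw [h2e]
      exact mul_ne_zero two_ne_zero hε
    have hneg : ((-ε : Γ) : ℂ) ≠ 0 := by
      have : ((-ε : Γ) : ℂ) = -(ε:ℂ) := by push_cast; ring
      rw [this]; simpa using hε
    have := sp0 Γ (-ε) (2 • ε) hneg h2
    have heq : -ε + 2 • ε = β := by
      apply Subtype.coe_injective
      push_cast
      linear_combination -hb
    rwa [heq] at this
  · have hsub : ((β - ε : Γ) : ℂ) ≠ 0 := by
      push_cast
      exact sub_ne_zero_of_ne hb
    have := sp0 Γ (β - ε) ε hsub hε
    rwa [sub_add_cancel] at this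

include hε in
lemma sp_sk (k : ℕ) : Finsupp.single ((0:Γ), k) (1:ℂ) ∈ SP Γ := by
  -- the easy cases k ≥ 4
  have h4 : ∀ m : ℕ, Finsupp.single ((0:Γ), m + 4) (1:ℂ) ∈ SP Γ := by
    intro m
    obtain ⟨g, hg⟩ := del_image_k Γ 0
    obtain ⟨h, hh⟩ := del_image_k Γ m
    have := memSP Γ g h
    rw [hg, hh, RR.single_mul_single] at this
    have e : (2 + (m+2)) = m + 4 := by omega
    rw [Prod.mk_add_mk, e] at this
    simpa using this
  have hs4 : Finsupp.single ((0:Γ), 4) (1:ℂ) ∈ SP Γ := h4 0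
  have hs5 : Finsupp.single ((0:Γ), 5) (1:ℂ) ∈ SP Γ := h4 1
  have hω : (-(ε:ℂ) * ε) ≠ 0 := by
    simpa using fun h => hε h
  have hnege : ((-ε : Γ) : ℂ) = -(ε:ℂ) := by push_cast; ring
  -- P i j : products of dels of single (ε,i) and single (-ε,j)
  have hP : ∀ i j : ℕ,
      del Γ (Finsupp.single (ε, i) (1:ℂ)) * del Γ (Finsupp.single (-ε, j) (1:ℂ))
      = (-(ε:ℂ)*(ε:ℂ)) • Finsupp.single ((0:Γ), i+j) 1
        + ((ε:ℂ)*(j:ℂ) - (ε:ℂ)*(i:ℂ)) • Finsupp.single ((0:Γ), i+j+1) 1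
        + ((i:ℂ)*(j:ℂ)) • Finsupp.single ((0:Γ), i+j+2) 1 := by
    intro i j
    rw [del_single, del_single]
    simp only [add_mul, mul_add, smul_mul_assoc, mul_smul_comm, smul_smul,
      RR.single_mul_single, hnege, Prod.mk_add_mk, add_neg_cancel, mul_one]
    have e1 : i + (j+1) = i + j + 1 := by omega
    have e2 : (i+1) + j = i + j + 1 := by omega
    have e3 : (i+1) + (j+1) = i + j + 2 := by omega
    rw [e1, e2, e3]
    module
  -- k = 0
  have hs0 : Finsupp.single ((0:Γ), 0) (1:ℂ) ∈ SP Γ := by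
    have h := memSP Γ (Finsupp.single (ε, 0) (1:ℂ)) (Finsupp.single (-ε, 0) (1:ℂ))
    rw [hP 0 0] at h
    simp only [Nat.cast_zero, mul_zero, zero_mul, zero_smul, add_zero, sub_zero,
      zero_add] at h
    have : Finsupp.single ((0:Γ), 0) (1:ℂ)
        = (-(ε:ℂ)*(ε:ℂ))⁻¹ • ((-(ε:ℂ)*(ε:ℂ)) • Finsupp.single ((0:Γ), 0) (1:ℂ)) := by
      rw [smul_smul, inv_mul_cancel₀ hω, one_smul]
    rw [this]
    exact (SP Γ).smul_mem _ h
  -- k = 2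
  have hs2 : Finsupp.single ((0:Γ), 2) (1:ℂ) ∈ SP Γ := by
    have h := memSP Γ (Finsupp.single (ε, 1) (1:ℂ)) (Finsupp.single (-ε, 1) (1:ℂ))
    rw [hP 1 1] at h
    simp only [Nat.cast_one, mul_one, sub_self, zero_smul, add_zero, one_mul, one_smul] at h
    -- h : (-ε*ε) • single (0,2) + single (0,4) ∈ SP
    have h' := (SP Γ).sub_mem h hs4
    rw [add_sub_cancel_right] at h'
    have : Finsupp.single ((0:Γ), 2) (1:ℂ)
        = (-(ε:ℂ)*(ε:ℂ))⁻¹ • ((-(ε:ℂ)*(ε:ℂ)) • Finsupp.single ((0:Γ), 2) (1:ℂ)) := by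
      rw [smul_smul, inv_mul_cancel₀ hω, one_smul]
    rw [this]
    exact (SP Γ).smul_mem _ h'
  -- k = 1
  have hs1 : Finsupp.single ((0:Γ), 1) (1:ℂ) ∈ SP Γ := by
    have h := memSP Γ (Finsupp.single (ε, 0) (1:ℂ)) (Finsupp.single (-ε, 1) (1:ℂ))
    rw [hP 0 1] at h
    simp only [Nat.cast_zero, Nat.cast_one, mul_zero, zero_mul, zero_smul, add_zero,
      mul_one, sub_zero, zero_add] at h
    have h' := (SP Γ).sub_mem h ((SP Γ).smul_mem (ε:ℂ) hs2)
    rw [add_sub_cancel_right] at h'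
    have : Finsupp.single ((0:Γ), 1) (1:ℂ)
        = (-(ε:ℂ)*(ε:ℂ))⁻¹ • ((-(ε:ℂ)*(ε:ℂ)) • Finsupp.single ((0:Γ), 1) (1:ℂ)) := by
      rw [smul_smul, inv_mul_cancel₀ hω, one_smul]
    rw [this]
    exact (SP Γ).smul_mem _ h'
  -- k = 3
  have hs3 : Finsupp.single ((0:Γ), 3) (1:ℂ) ∈ SP Γ := by
    have h := memSP Γ (Finsupp.single (ε, 1) (1:ℂ)) (Finsupp.single (-ε, 2) (1:ℂ))
    rw [hP 1 2] at h
    have c1 : ((ε:ℂ)*((2:ℕ):ℂ) - (ε:ℂ)*((1:ℕ):ℂ)) = (ε:ℂ) := by push_cast; ring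
    have c2 : (((1:ℕ):ℂ)*((2:ℕ):ℂ)) = (2:ℂ) := by push_cast; ring
    rw [show (1+2 : ℕ) = 3 from rfl, show (3+1 : ℕ) = 4 from rfl, show (3+2:ℕ) = 5 from rfl,
      c1, c2] at h
    -- h : (-ε*ε) • single (0,3) + ε • single (0,4) + 2 • single (0,5) ∈ SP
    have h' := (SP Γ).sub_mem ((SP Γ).sub_mem h ((SP Γ).smul_mem (2:ℂ) hs5))
      ((SP Γ).smul_mem (ε:ℂ) hs4)
    have heq : (-(ε:ℂ)*(ε:ℂ)) • Finsupp.single ((0:Γ), 3) (1:ℂ)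
        + (ε:ℂ) • Finsupp.single ((0:Γ), 4) (1:ℂ)
        + (2:ℂ) • Finsupp.single ((0:Γ), 5) (1:ℂ)
        - (2:ℂ) • Finsupp.single ((0:Γ), 5) (1:ℂ)
        - (ε:ℂ) • Finsupp.single ((0:Γ), 4) (1:ℂ)
        = (-(ε:ℂ)*(ε:ℂ)) • Finsupp.single ((0:Γ), 3) (1:ℂ) := by abel
    rw [heq] at h'
    have : Finsupp.single ((0:Γ), 3) (1:ℂ)
        = (-(ε:ℂ)*(ε:ℂ))⁻¹ • ((-(ε:ℂ)*(ε:ℂ)) • Finsupp.single ((0:Γ), 3) (1:ℂ)) := by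
      rw [smul_smul, inv_mul_cancel₀ hω, one_smul]
    rw [this]
    exact (SP Γ).smul_mem _ h'
  match k with
  | 0 => exact hs0
  | 1 => exact hs1
  | 2 => exact hs2
  | 3 => exact hs3
  | (m+4) => exact h4 m

end Span


section Span2

variable (ε : Γ) (hε : (ε : ℂ) ≠ 0)

lemma sp_k2 (β : Γ) (hβ : (β:ℂ) ≠ 0) (k : ℕ) :
    Finsupp.single (β, k+2) (1:ℂ) ∈ SP Γ := by
  obtain ⟨g, hg⟩ := del_image_0 Γ β hβ
  obtain ⟨h, hh⟩ := del_image_k Γ k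
  have := memSP Γ g h
  rw [hg, hh, RR.single_mul_single, Prod.mk_add_mk, add_zero, zero_add,
    mul_one] at this
  exact this

include hε in
lemma sp_k2' (β : Γ) (k : ℕ) : Finsupp.single (β, k+2) (1:ℂ) ∈ SP Γ := by
  by_cases hβ : (β:ℂ) = 0
  · have : β = 0 := Subtype.coe_injective (by simpa using hβ)
    subst this
    exact sp_sk ε hε (k+2)
  · exact sp_k2 β hβ k

include hε in
lemma sp_k1 (β : Γ) : Finsupp.single (β, 1) (1:ℂ) ∈ SP Γ := by
  have main : ∀ ε' : Γ, (ε':ℂ) ≠ 0 → ((β - ε' : Γ):ℂ) ≠ 0 →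
      Finsupp.single (β, 1) (1:ℂ) ∈ SP Γ := by
    intro ε' hε' hbe
    obtain ⟨g, hg⟩ := del_image_0 Γ (β - ε') hbe
    have hprod := memSP Γ g (Finsupp.single (ε', 1) (1:ℂ))
    rw [hg, del_single] at hprod
    simp only [mul_add, mul_smul_comm, RR.single_mul_single, one_mul,
      Prod.mk_add_mk, zero_add, sub_add_cancel, Nat.cast_one, one_smul] at hprod
    -- hprod : ε' • single (β,1) + single (β,2) ∈ SP
    have h2 : Finsupp.single (β, 2) (1:ℂ) ∈ SP Γ := sp_k2' ε hε β 0
    have h' := (SP Γ).sub_mem hprod h2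
    rw [add_sub_cancel_right] at h'
    have : Finsupp.single (β, 1) (1:ℂ) = (ε':ℂ)⁻¹ • ((ε':ℂ) • Finsupp.single (β, 1) (1:ℂ)) := by
      rw [smul_smul, inv_mul_cancel₀ hε', one_smul]
    rw [this]
    exact (SP Γ).smul_mem _ h'
  by_cases hb : (β : ℂ) = (ε : ℂ)
  · refine main (2 • ε) ?_ ?_
    · have h2e : ((2 • ε : Γ) : ℂ) = 2 * (ε:ℂ) := by push_cast; ring
      rw [h2e]; exact mul_ne_zero two_ne_zero hε
    · have : ((β - 2 • ε : Γ) : ℂ) = -(ε:ℂ) := by push_cast; linear_combination hb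
      rw [this]; simpa using hε
  · refine main ε hε ?_
    have : ((β - ε : Γ) : ℂ) = (β:ℂ) - (ε:ℂ) := by push_cast; ring
    rw [this]
    exact sub_ne_zero_of_ne hb

include hε in
lemma sp_all (p : Γ × ℕ) : Finsupp.single p (1:ℂ) ∈ SP Γ := by
  rcases p with ⟨β, k⟩
  match k with
  | 0 => exact sp_head ε hε β
  | 1 => exact sp_k1 ε hε β
  | (m+2) => exact sp_k2' ε hε β m

include hε in
lemma sp_top (x : RR Γ) : x ∈ SP Γ := by
  rw [← Finsupp.sum_single x]
  refine Submodule.sum_mem _ (fun p hp => ?_)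
  have : Finsupp.single p (x p) = (x p) • Finsupp.single p (1:ℂ) := by
    rw [Finsupp.smul_single, smul_eq_mul, mul_one]
  rw [this]
  exact (SP Γ).smul_mem _ (sp_all ε hε p)

end Span2

section CC

variable (Γ) (W : Type) [LieRing W] [LieAlgebra ℂ W] (B : Module.Basis (Γ × ℕ) ℂ W)
variable (hB : ∀ (α β : Γ) (i j : ℕ),
      ⁅B (α, i), B (β, j)⁆ = ((β : ℂ) - (α : ℂ)) • B (α + β, i + j)
        + ((j : ℂ) - (i : ℂ)) • B (α + β, i + j + 1))
variable (I : LieIdeal ℂ W)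

/-- the multiplier ideal of `JJ` -/
noncomputable def CC : Submodule ℂ (RR Γ) where
  carrier := {a : RR Γ | ∀ x : RR Γ, a * x ∈ JJ Γ W B I}
  zero_mem' := fun x => by rw [zero_mul]; exact (JJ Γ W B I).zero_mem
  add_mem' := fun {a b} ha hb x => by
    rw [add_mul]; exact (JJ Γ W B I).add_mem (ha x) (hb x)
  smul_mem' := fun c {a} ha x => by
    rw [smul_mul_assoc]; exact (JJ Γ W B I).smul_mem c (ha x)

lemma mem_CC {a : RR Γ} : a ∈ CC Γ W B I ↔ ∀ x, a * x ∈ JJ Γ W B I := Iff.rfl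

lemma CC_mul {a : RR Γ} (ha : a ∈ CC Γ W B I) (x : RR Γ) : a * x ∈ CC Γ W B I := by
  rw [mem_CC] at ha ⊢
  intro y
  rw [mul_assoc]
  exact ha (x * y)

include hB in
lemma CC_del {a : RR Γ} (ha : a ∈ CC Γ W B I) : del Γ a ∈ CC Γ W B I := by
  rw [mem_CC] at ha ⊢
  intro x
  have h1 : del Γ (a * x) ∈ JJ Γ W B I := JJdel Γ W B hB I (ha x)
  rw [del_mul] at h1
  have h2 : a * del Γ x ∈ JJ Γ W B I := ha (del Γ x)
  have := (JJ Γ W B I).sub_mem h1 h2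
  rwa [add_sub_cancel_right] at this

include hB in
lemma CC_q3 {z₀ : RR Γ} (hz : z₀ ∈ JJ Γ W B I) (ε : Γ) (hε : (ε : ℂ) ≠ 0) :
    z₀ * z₀ * z₀ ∈ CC Γ W B I := by
  rw [mem_CC]
  intro x
  have step1 : ∀ h : RR Γ, (z₀ * z₀) * del Γ h ∈ JJ Γ W B I := fun h =>
    lem1 Γ W B hB I hz hz h
  have step2 : ∀ g h : RR Γ, (z₀*z₀*z₀) * (del Γ g * del Γ h) ∈ JJ Γ W B I := by
    intro g h
    have := lem1 Γ W B hB I hz (step1 h) g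
    have heq : (z₀ * ((z₀*z₀) * del Γ h)) * del Γ g = (z₀*z₀*z₀) * (del Γ g * del Γ h) := by
      ring
    rwa [heq] at this
  have hK : SP Γ ≤ (JJ Γ W B I).comap (LinearMap.mulLeft ℂ (z₀*z₀*z₀)) := by
    rw [SP, Submodule.span_le]
    rintro u ⟨g, h, rfl⟩
    exact step2 g h
  exact hK (sp_top ε hε x)

end CC


section Endgame

lemma shift_apply0 (z : RR Γ) (γ : Γ) :
    (z * RR.single ((0:Γ), (1:ℕ)) (1:ℂ)) (γ, 0) = 0 := by
  apply RR.mul_single_apply_of_not_exists_add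
  rintro ⟨d, hd⟩
  have := congrArg Prod.snd hd
  simp at this

lemma shift_applyS (z : RR Γ) (γ : Γ) (j : ℕ) :
    (z * RR.single ((0:Γ), (1:ℕ)) (1:ℂ)) (γ, j+1) = z (γ, j) := by
  have := RR.mul_single_apply_aux z (1:ℂ) ((0:Γ), (1:ℕ)) (γ, j) (γ, j+1)
    (fun a => by
      constructor
      · intro h
        have h1 := congrArg Prod.fst h
        have h2 := congrArg Prod.snd h
        simp only [Prod.fst_add, Prod.snd_add] at h1 h2
        have : a.1 = γ := by simpa using h1
        have h2' : a.2 = j := by omega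
        exact Prod.ext this h2'
      · rintro rfl
        exact Prod.ext (by simp) (by simp))
  rw [mul_one] at this
  exact this

/-- the basic block-diagonalisation operator -/
noncomputable def Phi (M : ℕ) (β : Γ) (z : RR Γ) : RR Γ :=
  del Γ z - (M:ℂ) • (z * RR.single ((0:Γ), (1:ℕ)) (1:ℂ)) - (β:ℂ) • z

lemma Phi_apply0 (M : ℕ) (β : Γ) (z : RR Γ) (γ : Γ) :
    Phi M β z (γ, 0) = ((γ:ℂ) - β) * z (γ, 0) := by
  rw [Phi, Finsupp.sub_apply, Finsupp.sub_apply, Finsupp.smul_apply, Finsupp.smul_apply,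
    del_apply0, shift_apply0]
  simp only [smul_eq_mul, mul_zero]
  ring

lemma Phi_applyS (M : ℕ) (β : Γ) (z : RR Γ) (γ : Γ) (j : ℕ) :
    Phi M β z (γ, j+1) = ((γ:ℂ) - β) * z (γ, j+1) + ((j:ℂ) - M) * z (γ, j) := by
  rw [Phi, Finsupp.sub_apply, Finsupp.sub_apply, Finsupp.smul_apply, Finsupp.smul_apply,
    del_applyS, shift_applyS]
  simp only [smul_eq_mul]
  ring

/-- levels bounded by M -/
def levM (M : ℕ) (z : RR Γ) : Prop := ∀ (γ : Γ) (j : ℕ), M < j → z (γ, j) = 0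

/-- levels below n vanish -/
def low (n : ℕ) (z : RR Γ) : Prop := ∀ (γ : Γ) (j : ℕ), j < n → z (γ, j) = 0

lemma Phi_levM {M : ℕ} {β : Γ} {z : RR Γ} (h : levM M z) : levM M (Phi M β z) := by
  intro γ j hj
  match j, hj with
  | (j+1), hj =>
    rw [Phi_applyS, h γ (j+1) hj]
    rcases Nat.lt_or_ge M j with h' | h'
    · rw [h γ j h']; ring
    · have : j = M := by omega
      subst this
      simp

lemma Phi_low {M n : ℕ} {β : Γ} {z : RR Γ} (h : low n z) : low n (Phi M β z) := by
  intro γ j hj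
  match j with
  | 0 => rw [Phi_apply0, h γ 0 hj, mul_zero]
  | (j+1) => rw [Phi_applyS, h γ (j+1) hj, h γ j (by omega)]; ring

lemma Phi_good {M n : ℕ} {β α : Γ} {z : RR Γ} (hl : low n z) (hα : z (α, n) ≠ 0)
    (hab : (α:ℂ) ≠ (β:ℂ)) : Phi M β z (α, n) ≠ 0 := by
  have hne : ((α:ℂ) - β) ≠ 0 := sub_ne_zero_of_ne hab
  match n, hl, hα with
  | 0, hl, hα =>
    rw [Phi_apply0]
    exact mul_ne_zero hne hα
  | (n+1), hl, hα =>
    rw [Phi_applyS, hl α n (by omega)]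
    simpa using mul_ne_zero hne hα

lemma Phi_colkill {M t : ℕ} {β : Γ} {z : RR Γ} (h : ∀ j < t, z (β, j) = 0) :
    ∀ j < t + 1, Phi M β z (β, j) = 0 := by
  intro j hj
  match j with
  | 0 => rw [Phi_apply0]; simp
  | (j+1) =>
    rw [Phi_applyS, h j (by omega)]
    simp

lemma Phi_colstab {M : ℕ} {β γ : Γ} {z : RR Γ} (h : ∀ j, z (γ, j) = 0) :
    ∀ j, Phi M β z (γ, j) = 0 := by
  intro j
  match j with
  | 0 => rw [Phi_apply0, h 0, mul_zero]
  | (j+1) => rw [Phi_applyS, h (j+1), h j]; ring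

variable (V : Submodule ℂ (RR Γ))
  (hdel : ∀ z ∈ V, del Γ z ∈ V)
  (hmul : ∀ z ∈ V, ∀ p : Γ × ℕ, z * RR.single p (1:ℂ) ∈ V)

include hdel hmul in
lemma Phi_memV {M : ℕ} {β : Γ} {z : RR Γ} (hz : z ∈ V) : Phi M β z ∈ V := by
  refine V.sub_mem (V.sub_mem (hdel z hz) (V.smul_mem _ (hmul z hz _))) (V.smul_mem _ hz)

include hdel hmul in
lemma kill_col {M n : ℕ} {α β : Γ} (hab : (α:ℂ) ≠ (β:ℂ)) :
    ∀ (k : ℕ) (z : RR Γ), z ∈ V → levM M z → low n z → z (α, n) ≠ 0 →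
    ∃ w : RR Γ, w ∈ V ∧ levM M w ∧ low n w ∧ w (α, n) ≠ 0 ∧
      (∀ γ : Γ, (∀ j, z (γ, j) = 0) → ∀ j, w (γ, j) = 0) ∧
      (∀ j < n + k, w (β, j) = 0) := by
  intro k
  induction k with
  | zero =>
    intro z hz h1 h2 h3
    exact ⟨z, hz, h1, h2, h3, fun γ h j => h j, fun j hj => h2 β j (by omega)⟩
  | succ k ih =>
    intro z hz h1 h2 h3
    obtain ⟨w, hw, hw1, hw2, hw3, hw4, hw5⟩ := ih z hz h1 h2 h3
    refine ⟨Phi M β w, Phi_memV V hdel hmul hw, Phi_levM hw1, Phi_low hw2,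
      Phi_good hw2 hw3 hab, ?_, ?_⟩
    · exact fun γ h j => Phi_colstab (hw4 γ h) j
    · have : n + (k + 1) = (n + k) + 1 := by omega
      rw [this]
      exact Phi_colkill hw5

lemma minlev {z : RR Γ} (hz : z ≠ 0) :
    ∃ (n : ℕ) (α : Γ), low n z ∧ z (α, n) ≠ 0 := by
  have hne : z.support.Nonempty := Finsupp.support_nonempty_iff.mpr hz
  have hne2 : (z.support.image Prod.snd).Nonempty := hne.image _
  obtain ⟨p, hp, hpn⟩ := Finset.mem_image.mp ((z.support.image Prod.snd).min'_mem hne2)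
  refine ⟨(z.support.image Prod.snd).min' hne2, p.1, ?_, ?_⟩
  · intro γ j hj
    by_contra h0
    have : j ∈ z.support.image Prod.snd :=
      Finset.mem_image.mpr ⟨(γ, j), Finsupp.mem_support_iff.mpr h0, rfl⟩
    have := (z.support.image Prod.snd).min'_le j this
    omega
  · have hpe : (p.1, (z.support.image Prod.snd).min' hne2) = p := Prod.ext rfl hpn.symm
    rw [hpe]
    exact Finsupp.mem_support_iff.mp hp

lemma maxlev (z : RR Γ) (hz : z ≠ 0) : ∃ M : ℕ, levM M z := by
  have hne : z.support.Nonempty := Finsupp.support_nonempty_iff.mpr hz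
  have hne2 : (z.support.image Prod.snd).Nonempty := hne.image _
  refine ⟨(z.support.image Prod.snd).max' hne2, fun γ j hj => ?_⟩
  by_contra h0
  have : j ∈ z.support.image Prod.snd :=
    Finset.mem_image.mpr ⟨(γ, j), Finsupp.mem_support_iff.mpr h0, rfl⟩
  have := (z.support.image Prod.snd).le_max' j this
  omega

include hdel hmul in
lemma phase1 {M : ℕ} : ∀ (G : Finset Γ) (z : RR Γ), z ∈ V → z ≠ 0 → levM M z →
    (∀ p ∈ z.support, p.1 ∈ G) →
    ∃ (α : Γ) (w : RR Γ), w ∈ V ∧ w ≠ 0 ∧ levM M w ∧ (∀ p ∈ w.support, p.1 = α) := by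
  intro G
  induction G using Finset.strongInduction with
  | _ G ih =>
    intro z hz hz0 hlev hsupp
    obtain ⟨n, α, hlow, hα⟩ := minlev hz0
    by_cases hone : ∀ p ∈ z.support, p.1 = α
    · exact ⟨α, z, hz, hz0, hlev, hone⟩
    · push_neg at hone
      obtain ⟨q, hq, hqne⟩ := hone
      set β := q.1 with hβ
      have hab : (α:ℂ) ≠ (β:ℂ) := fun h => hqne (Subtype.coe_injective h).symm
      obtain ⟨w, hw, hw1, hw2, hw3, hw4, hw5⟩ :=
        kill_col V hdel hmul hab (M+1) z hz hlev hlow hα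
      have hwne : w ≠ 0 := fun h => hw3 (by rw [h]; rfl)
      have hβcol : ∀ j, w (β, j) = 0 := by
        intro j
        rcases Nat.lt_or_ge j (n + (M+1)) with h | h
        · exact hw5 j h
        · exact hw1 β j (by omega)
      have hβG : β ∈ G := hsupp q hq
      refine ih (G.erase β) (Finset.erase_ssubset hβG) w hw hwne hw1 ?_
      intro p hp
      have hp1 : p.1 ∈ G := by
        by_contra hnotin
        have hzcol : ∀ j, z (p.1, j) = 0 := by
          intro j
          by_contra h0
          exact hnotin (hsupp (p.1, j) (Finsupp.mem_support_iff.mpr h0))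
        have := hw4 p.1 hzcol p.2
        rw [Prod.mk.eta] at this
        exact Finsupp.mem_support_iff.mp hp this
      have hpβ : p.1 ≠ β := by
        intro h
        have := hβcol p.2
        rw [← h, Prod.mk.eta] at this
        exact Finsupp.mem_support_iff.mp hp this
      exact Finset.mem_erase.mpr ⟨hpβ, hp1⟩

include hdel hmul in
lemma phase2 {M : ℕ} : ∀ (t : ℕ) (z : RR Γ) (α : Γ) (n : ℕ), z ∈ V → levM M z → low n z →
    z (α, n) ≠ 0 → (∀ p ∈ z.support, p.1 = α) → M ≤ n + t →
    ∃ (k : ℕ) (c : ℂ), c ≠ 0 ∧ Finsupp.single ((α : Γ), k) c ∈ V := by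
  have base : ∀ (z : RR Γ) (α : Γ) (n : ℕ), z ∈ V → levM M z → low n z →
      z (α, n) ≠ 0 → (∀ p ∈ z.support, p.1 = α) → M ≤ n →
      ∃ (k : ℕ) (c : ℂ), c ≠ 0 ∧ Finsupp.single ((α : Γ), k) c ∈ V := by
    intro z α n hz hlev hlow hα hsupp hMn
    have hnM : n = M := by
      have : ¬ (M < n) := fun h => hα (hlev α n h)
      omega
    subst hnM
    have hzs : z = Finsupp.single (α, n) (z (α, n)) := by
      ext p
      rcases eq_or_ne p (α, n) with rfl | hne
      · rw [Finsupp.single_apply]; simp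
      · rw [Finsupp.single_apply, if_neg (Ne.symm hne)]
        by_contra h0
        have hps : p ∈ z.support := Finsupp.mem_support_iff.mpr h0
        have h1 : p.1 = α := hsupp p hps
        have h2 : p.2 = n := by
          have hle : ¬ (n < p.2) := fun h => h0 (by
            have := hlev p.1 p.2 h
            rwa [Prod.mk.eta] at this)
          have hge : ¬ (p.2 < n) := fun h => h0 (by
            have := hlow p.1 p.2 h
            rwa [Prod.mk.eta] at this)
          omega
        exact hne (by rw [← h1, ← h2])
      
    exact ⟨n, z (α, n), hα, by rw [← hzs]; exact hz⟩
  intro t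
  induction t with
  | zero =>
    intro z α n hz hlev hlow hα hsupp hM
    exact base z α n hz hlev hlow hα hsupp (by omega)
  | succ t ih =>
    intro z α n hz hlev hlow hα hsupp hM
    rcases le_or_gt M n with hMn | hnM
    · exact base z α n hz hlev hlow hα hsupp hMn
    · -- apply Phi M α
      set w := Phi M α z with hw
      have hwV : w ∈ V := Phi_memV V hdel hmul hz
      have hwlev : levM M w := Phi_levM hlev
      have hcolz : ∀ γ : Γ, γ ≠ α → ∀ j, z (γ, j) = 0 := by
        intro γ hγ j
        by_contra h0
        exact hγ (hsupp (γ, j) (Finsupp.mem_support_iff.mpr h0))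
      have hwlow : low (n+1) w := by
        intro γ j hj
        rcases Nat.lt_or_ge j n with h | h
        · exact Phi_low hlow γ j h
        · have hjn : j = n := by omega
          subst hjn
          rcases eq_or_ne γ α with rfl | hγ
          · match j with
            | 0 => rw [hw, Phi_apply0]; simp
            | (j+1) => rw [hw, Phi_applyS, hlow γ j (by omega)]; simp
          · match j with
            | 0 => rw [hw, Phi_apply0, hcolz γ hγ 0, mul_zero]
            | (j+1) => rw [hw, Phi_applyS, hcolz γ hγ (j+1), hcolz γ hγ j]; ring
      have hwα : w (α, n+1) ≠ 0 := by
        rw [hw, Phi_applyS]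
        simp only [sub_self, zero_mul, zero_add]
        refine mul_ne_zero ?_ hα
        have : (n:ℂ) ≠ (M:ℂ) := by
          exact_mod_cast fun h => (by omega : n ≠ M) h
        exact sub_ne_zero_of_ne this
      have hwsupp : ∀ p ∈ w.support, p.1 = α := by
        intro p hp
        by_contra hne
        have := Phi_colstab (β := α) (M := M) (hcolz p.1 hne) p.2
        rw [← hw, Prod.mk.eta] at this
        exact Finsupp.mem_support_iff.mp hp this
      exact ih w α (n+1) hwV hwlev hwlow hwα hwsupp (by omega)

include hdel hmul in
lemma endgame {c : RR Γ} (hc : c ∈ V) (hc0 : c ≠ 0) :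
    ∃ MM : ℕ, Finsupp.single ((0:Γ), MM) (1:ℂ) ∈ V := by
  obtain ⟨M, hM⟩ := maxlev c hc0
  obtain ⟨α, w, hwV, hw0, hwlev, hwsupp⟩ :=
    phase1 V hdel hmul (c.support.image Prod.fst) c hc hc0 hM
      (fun p hp => Finset.mem_image.mpr ⟨p, hp, rfl⟩)
  obtain ⟨n, α', hlow, hα'⟩ := minlev hw0
  have hαα : α' = α := hwsupp (α', n) (Finsupp.mem_support_iff.mpr hα')
  subst hαα
  obtain ⟨k, c', hc', hsing⟩ :=
    phase2 V hdel hmul M w α' n hwV hwlev hlow hα' hwsupp (by omega)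
  have h1 : Finsupp.single ((α':Γ), k) (1:ℂ) ∈ V := by
    have := V.smul_mem (c'⁻¹) hsing
    rwa [Finsupp.smul_single, smul_eq_mul, inv_mul_cancel₀ hc'] at this
  have h2 := hmul _ h1 ((-α', 0) : Γ × ℕ)
  rw [RR.single_mul_single, Prod.mk_add_mk, add_neg_cancel, add_zero,
    mul_one] at h2
  exact ⟨k, h2⟩

end Endgame


section Head

variable (Γ) (W : Type) [LieRing W] [LieAlgebra ℂ W] (B : Module.Basis (Γ × ℕ) ℂ W)
variable (hB : ∀ (α β : Γ) (i j : ℕ),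
      ⁅B (α, i), B (β, j)⁆ = ((β : ℂ) - (α : ℂ)) • B (α + β, i + j)
        + ((j : ℂ) - (i : ℂ)) • B (α + β, i + j + 1))
variable (I : LieIdeal ℂ W)

include hB in
lemma headclean : ∀ (S : Finset Γ) (z : RR Γ) (α : Γ), z ∈ JJ Γ W B I → z (α, 0) ≠ 0 →
    (∀ γ : Γ, z (γ, 0) ≠ 0 → γ = α ∨ γ ∈ S) →
    ∃ w ∈ JJ Γ W B I, w (α, 0) ≠ 0 ∧ ∀ γ : Γ, γ ≠ α → w (γ, 0) = 0 := by
  intro S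
  induction S using Finset.induction with
  | empty =>
    intro z α hz hα hcond
    refine ⟨z, hz, hα, fun γ hγ => ?_⟩
    by_contra h0
    rcases hcond γ h0 with h | h
    · exact hγ h
    · simp at h
  | @insert a S ha ih =>
    intro z α hz hα hcond
    by_cases haα : a = α
    · refine ih z α hz hα (fun γ hγ => ?_)
      rcases hcond γ hγ with h | h
      · exact Or.inl h
      · rcases Finset.mem_insert.mp h with h | h
        · exact Or.inl (h.trans haα)
        · exact Or.inr h
    · set z' := del Γ z - (a:ℂ) • z with hz'
      have hz'mem : z' ∈ JJ Γ W B I :=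
        (JJ Γ W B I).sub_mem (JJdel Γ W B hB I hz) ((JJ Γ W B I).smul_mem _ hz)
      have hco : ∀ γ : Γ, z' (γ, 0) = ((γ:ℂ) - a) * z (γ, 0) := by
        intro γ
        rw [hz', Finsupp.sub_apply, Finsupp.smul_apply, del_apply0, smul_eq_mul]
        ring
      have hαa : ((α:ℂ) - a) ≠ 0 :=
        sub_ne_zero_of_ne (fun h => haα (Subtype.coe_injective h.symm))
      refine ih z' α hz'mem (by rw [hco]; exact mul_ne_zero hαa hα) (fun γ hγ => ?_)
      rw [hco] at hγ
      have hγa : γ ≠ a := by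
        intro h
        subst h
        simp at hγ
      have hz0 : z (γ, 0) ≠ 0 := fun h => hγ (by rw [h, mul_zero])
      rcases hcond γ hz0 with h | h
      · exact Or.inl h
      · rcases Finset.mem_insert.mp h with h | h
        · exact absurd h hγa
        · exact Or.inr h

include hB in
lemma gethead (ε : Γ) (hε : (ε:ℂ) ≠ 0) {z₀ : RR Γ} (hz₀ : z₀ ∈ JJ Γ W B I)
    (hnot : z₀ ∉ FilR Γ 1) :
    ∃ γ₀ : Γ, (γ₀:ℂ) ≠ 0 ∧ ∃ u ∈ JJ Γ W B I, u (γ₀, 0) = 1 ∧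
      ∀ γ : Γ, γ ≠ γ₀ → u (γ, 0) = 0 := by
  -- find a nonzero level-0 coordinate
  have hα : ∃ α : Γ, z₀ (α, 0) ≠ 0 := by
    by_contra h0
    push_neg at h0
    exact hnot (fun γ i hi => by
      have : i = 0 := by omega
      subst this
      exact h0 γ)
  obtain ⟨α, hα⟩ := hα
  obtain ⟨w, hw, hwα, hwother⟩ := headclean Γ W B hB I (z₀.support.image Prod.fst) z₀ α hz₀ hα
    (fun γ hγ => Or.inr (Finset.mem_image.mpr ⟨(γ,0), Finsupp.mem_support_iff.mpr hγ, rfl⟩))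
  by_cases hα0 : (α:ℂ) ≠ 0
  · refine ⟨α, hα0, (w (α,0))⁻¹ • w, (JJ Γ W B I).smul_mem _ hw, ?_, ?_⟩
    · rw [Finsupp.smul_apply, smul_eq_mul, inv_mul_cancel₀ hwα]
    · intro γ hγ
      rw [Finsupp.smul_apply, hwother γ hγ, smul_zero]
  · push_neg at hα0
    have hαz : α = 0 := Subtype.coe_injective (by simpa using hα0)
    subst hαz
    -- move the head to ε by bracketing with single (ε,0)
    set x : RR Γ := RR.single ((ε:Γ), (0:ℕ)) (1:ℂ) with hx
    set w' := x * del Γ w - w * del Γ x with hw'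
    have hw'mem : w' ∈ JJ Γ W B I := Jbrk Γ W B hB I hw x
    have hco : ∀ γ : Γ, w' (γ, 0) = ((γ:ℂ) - 2*(ε:ℂ)) * w (γ - ε, 0) := by
      intro γ
      have h1 : (x * del Γ w) (γ, 0) = del Γ w (γ - ε, 0) := by
        rw [hx]
        have := RR.single_mul_apply_aux (del Γ w) (1:ℂ) ((ε:Γ), (0:ℕ))
          (γ, 0) (γ - ε, 0)
          (fun a => by
            constructor
            · intro h
              have h1 := congrArg Prod.fst h
              have h2 := congrArg Prod.snd h
              simp only [Prod.fst_add, Prod.snd_add] at h1 h2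
              refine Prod.ext ?_ (by simpa using h2)
              have : ε + a.1 = γ := h1
              simp [← this]
            · rintro rfl
              exact Prod.ext (by simp) (by simp))
        rw [this, one_mul]
      have h2 : (w * del Γ x) (γ, 0) = (ε:ℂ) * w (γ - ε, 0) := by
        rw [hx, del_single]
        simp only [Nat.cast_zero, zero_smul, add_zero, mul_smul_comm]
        rw [Finsupp.smul_apply]
        have := RR.mul_single_apply_aux w (1:ℂ) ((ε:Γ), (0:ℕ))
          (γ - ε, 0) (γ, 0)
          (fun a => by
            constructor
            · intro h
              have h1 := congrArg Prod.fst h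
              have h2 := congrArg Prod.snd h
              simp only [Prod.fst_add, Prod.snd_add] at h1 h2
              refine Prod.ext ?_ (by simpa using h2)
              have : a.1 + ε = γ := h1
              simp [← this]
            · rintro rfl
              exact Prod.ext (by simp) (by simp))
        rw [this, mul_one, smul_eq_mul]
      rw [hw', Finsupp.sub_apply, h1, h2, del_apply0]
      push_cast
      ring
    refine ⟨ε, hε, (w' (ε,0))⁻¹ • w', (JJ Γ W B I).smul_mem _ hw'mem, ?_, ?_⟩
    · rw [Finsupp.smul_apply, smul_eq_mul, inv_mul_cancel₀]
      rw [hco, sub_self]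
      have : ((ε:ℂ) - 2*(ε:ℂ)) = -(ε:ℂ) := by ring
      rw [this]
      exact mul_ne_zero (by simpa using hε) hwα
    · intro γ hγ
      rw [Finsupp.smul_apply, hco γ, hwother (γ - ε) (fun h => hγ (by
        have : γ = ε := by
          have := congrArg (fun t : Γ => t + ε) h
          simpa [sub_add_cancel] using this
        exact this)), mul_zero, smul_zero]

end Head


section Deepen

variable (Γ) (W : Type) [LieRing W] [LieAlgebra ℂ W] (B : Module.Basis (Γ × ℕ) ℂ W)
variable (hB : ∀ (α β : Γ) (i j : ℕ),
      ⁅B (α, i), B (β, j)⁆ = ((β : ℂ) - (α : ℂ)) • B (α + β, i + j)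
        + ((j : ℂ) - (i : ℂ)) • B (α + β, i + j + 1))
variable (I : LieIdeal ℂ W)

include hB in
lemma deepen_inner (m : ℕ) (hm : 1 ≤ m) (γ₀ : Γ) (hγ₀ : (γ₀:ℂ) ≠ 0) :
    ∀ (S : Finset Γ) (u : RR Γ), u ∈ JJ Γ W B I → u (γ₀, 0) = 1 →
    (∀ γ : Γ, γ ≠ γ₀ → u (γ, 0) = 0) → (∀ (γ : Γ) (j : ℕ), 1 ≤ j → j < m → u (γ, j) = 0) →
    (∀ γ : Γ, γ ≠ γ₀ → u (γ, m) ≠ 0 → γ ∈ S) →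
    ∃ u' ∈ JJ Γ W B I, u' (γ₀, 0) = 1 ∧ (∀ γ : Γ, γ ≠ γ₀ → u' (γ, 0) = 0) ∧
      (∀ (γ : Γ) (j : ℕ), 1 ≤ j → j < m → u' (γ, j) = 0) ∧
      (∀ γ : Γ, γ ≠ γ₀ → u' (γ, m) = 0) := by
  intro S
  induction S using Finset.induction with
  | empty =>
    intro u hu h1 h2 h3 hS
    refine ⟨u, hu, h1, h2, h3, fun γ hγ => ?_⟩
    by_contra h0
    simpa using hS γ hγ h0
  | @insert a S ha ih =>
    intro u hu h1 h2 h3 hS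
    by_cases hcase : a = γ₀ ∨ u (a, m) = 0
    · refine ih u hu h1 h2 h3 (fun γ hγ hne0 => ?_)
      rcases Finset.mem_insert.mp (hS γ hγ hne0) with h | h
      · subst h
        rcases hcase with h | h
        · exact absurd h hγ
        · exact absurd h hne0
      · exact h
    · push_neg at hcase
      obtain ⟨haγ₀, ham⟩ := hcase
      have haa : ((γ₀:ℂ) - a) ≠ 0 :=
        sub_ne_zero_of_ne (fun h => haγ₀ (Subtype.coe_injective h).symm)
      set u' := ((γ₀:ℂ) - a)⁻¹ • (del Γ u - (a:ℂ) • u) with hu'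
      have hmem : u' ∈ JJ Γ W B I :=
        (JJ Γ W B I).smul_mem _ ((JJ Γ W B I).sub_mem (JJdel Γ W B hB I hu)
          ((JJ Γ W B I).smul_mem _ hu))
      have hco0 : ∀ γ : Γ, u' (γ, 0) = ((γ₀:ℂ) - a)⁻¹ * (((γ:ℂ) - a) * u (γ, 0)) := by
        intro γ
        rw [hu', Finsupp.smul_apply, Finsupp.sub_apply, Finsupp.smul_apply, del_apply0,
          smul_eq_mul, smul_eq_mul]
        ring
      have hcoS : ∀ (γ : Γ) (j : ℕ), u' (γ, j+1)
          = ((γ₀:ℂ) - a)⁻¹ * ((((γ:ℂ) - a) * u (γ, j+1)) + (j:ℂ) * u (γ, j)) := by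
        intro γ j
        rw [hu', Finsupp.smul_apply, Finsupp.sub_apply, Finsupp.smul_apply, del_applyS,
          smul_eq_mul, smul_eq_mul]
        ring
      have hmid : ∀ (γ : Γ) (j : ℕ), 1 ≤ j → j < m → u' (γ, j) = 0 := by
        intro γ j hj1 hjm
        match j, hj1 with
        | (j+1), _ =>
          rw [hcoS, h3 γ (j+1) (by omega) hjm]
          rcases Nat.eq_zero_or_pos j with hj0 | hjp
          · subst hj0; simp
          · rw [h3 γ j (by omega) (by omega)]
            ring
      refine ih u' hmem ?_ ?_ hmid ?_
      · rw [hco0, h1, mul_one, inv_mul_cancel₀ haa]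
      · intro γ hγ
        rw [hco0, h2 γ hγ, mul_zero, mul_zero]
      · intro γ hγ hne
        have hum : u (γ, m) ≠ 0 := by
          intro h0
          apply hne
          match m, hm with
          | (m'+1), _ =>
            rw [hcoS, h0, mul_zero, zero_add]
            rcases Nat.eq_zero_or_pos m' with hj0 | hjp
            · subst hj0; simp
            · rw [h3 γ m' (by omega) (by omega)]
              ring
        have hγa : γ ≠ a := by
          intro h
          subst h
          apply hne
          match m, hm with
          | (m'+1), _ =>
            rw [hcoS, sub_self, zero_mul, zero_add]
            rcases Nat.eq_zero_or_pos m' with hj0 | hjp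
            · subst hj0; simp
            · rw [h3 γ m' (by omega) (by omega)]
              ring
        rcases Finset.mem_insert.mp (hS γ hγ hum) with h | h
        · exact absurd h hγa
        · exact h

include hB in
lemma deepen_step (m : ℕ) (hm : 1 ≤ m) (γ₀ : Γ) (hγ₀ : (γ₀:ℂ) ≠ 0)
    (u : RR Γ) (hu : u ∈ JJ Γ W B I) (h1 : u (γ₀, 0) = 1)
    (h2 : ∀ γ : Γ, γ ≠ γ₀ → u (γ, 0) = 0)
    (h3 : ∀ (γ : Γ) (j : ℕ), 1 ≤ j → j < m → u (γ, j) = 0)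
    (h4 : ∀ γ : Γ, γ ≠ γ₀ → u (γ, m) = 0) :
    ∃ u' ∈ JJ Γ W B I, u' (γ₀, 0) = 1 ∧ (∀ γ : Γ, γ ≠ γ₀ → u' (γ, 0) = 0) ∧
      (∀ (γ : Γ) (j : ℕ), 1 ≤ j → j < m + 1 → u' (γ, j) = 0) := by
  set sm : RR Γ := RR.single ((0:Γ), m) (1:ℂ) with hsm
  set z := sm * del Γ u - u * del Γ sm with hz
  have hzmem : z ∈ JJ Γ W B I := Jbrk Γ W B hB I hu sm
  have hdelsm : del Γ sm = (m:ℂ) • RR.single ((0:Γ), m+1) (1:ℂ) := by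
    rw [hsm, del_single]
    simp
  have hz1 : ∀ (γ : Γ) (j : ℕ), j < m → z (γ, j) = 0 := by
    intro γ j hj
    rw [hz, Finsupp.sub_apply]
    have ha : (sm * del Γ u) (γ, j) = 0 := by
      rw [hsm]
      apply RR.single_mul_apply_of_not_exists_add
      rintro ⟨d, hd⟩
      have := congrArg Prod.snd hd
      simp only [Prod.snd_add] at this
      omega
    have hb : (u * del Γ sm) (γ, j) = 0 := by
      rw [hdelsm, mul_smul_comm, Finsupp.smul_apply]
      have : (u * RR.single ((0:Γ), m+1) (1:ℂ)) (γ, j) = 0 := by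
        apply RR.mul_single_apply_of_not_exists_add
        rintro ⟨d, hd⟩
        have := congrArg Prod.snd hd
        simp only [Prod.snd_add] at this
        omega
      rw [this, smul_zero]
    rw [ha, hb, sub_zero]
  have hz2 : ∀ γ : Γ, z (γ, m) = (γ:ℂ) * u (γ, 0) := by
    intro γ
    rw [hz, Finsupp.sub_apply]
    have ha : (sm * del Γ u) (γ, m) = del Γ u (γ, 0) := by
      rw [hsm]
      have := RR.single_mul_apply_aux (del Γ u) (1:ℂ) ((0:Γ), m)
        (γ, m) (γ, 0)
        (fun a => by
          constructor
          · intro h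
            have h1 := congrArg Prod.fst h
            have h2 := congrArg Prod.snd h
            simp only [Prod.fst_add, Prod.snd_add] at h1 h2
            refine Prod.ext (by simpa using h1) (by omega)
          · rintro rfl
            exact Prod.ext (by simp) (by simp))
      rw [this, one_mul]
    have hb : (u * del Γ sm) (γ, m) = 0 := by
      rw [hdelsm, mul_smul_comm, Finsupp.smul_apply]
      have : (u * RR.single ((0:Γ), m+1) (1:ℂ)) (γ, m) = 0 := by
        apply RR.mul_single_apply_of_not_exists_add
        rintro ⟨d, hd⟩
        have := congrArg Prod.snd hd
        simp only [Prod.snd_add] at this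
        omega
      rw [this, smul_zero]
    rw [ha, hb, sub_zero, del_apply0]
  refine ⟨u - (u (γ₀, m) * (γ₀:ℂ)⁻¹) • z,
    (JJ Γ W B I).sub_mem hu ((JJ Γ W B I).smul_mem _ hzmem), ?_, ?_, ?_⟩
  · rw [Finsupp.sub_apply, Finsupp.smul_apply, hz1 γ₀ 0 (by omega), smul_zero, sub_zero, h1]
  · intro γ hγ
    rw [Finsupp.sub_apply, Finsupp.smul_apply, hz1 γ 0 (by omega), smul_zero, sub_zero,
      h2 γ hγ]
  · intro γ j hj1 hjm
    rcases Nat.lt_or_ge j m with hlt | hge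
    · rw [Finsupp.sub_apply, Finsupp.smul_apply, hz1 γ j hlt, smul_zero, sub_zero,
        h3 γ j hj1 hlt]
    · have hjm' : j = m := by omega
      subst hjm'
      rw [Finsupp.sub_apply, Finsupp.smul_apply, hz2 γ, smul_eq_mul]
      rcases eq_or_ne γ γ₀ with rfl | hγ
      · rw [h1]
        field_simp
        ring
      · rw [h2 γ hγ, h4 γ hγ, mul_zero, mul_zero, sub_zero]

include hB in
lemma deepen (ε : Γ) (hε : (ε:ℂ) ≠ 0) {z₀ : RR Γ} (hz₀ : z₀ ∈ JJ Γ W B I)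
    (hnot : z₀ ∉ FilR Γ 1) :
    ∀ m : ℕ, ∃ γ₀ : Γ, (γ₀:ℂ) ≠ 0 ∧ ∃ u ∈ JJ Γ W B I, u (γ₀, 0) = 1 ∧
      (∀ γ : Γ, γ ≠ γ₀ → u (γ, 0) = 0) ∧
      (∀ (γ : Γ) (j : ℕ), 1 ≤ j → j < m + 1 → u (γ, j) = 0) := by
  intro m
  induction m with
  | zero =>
    obtain ⟨γ₀, hγ₀, u, hu, h1, h2⟩ := gethead Γ W B hB I ε hε hz₀ hnot
    exact ⟨γ₀, hγ₀, u, hu, h1, h2, fun γ j hj1 hjm => by omega⟩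
  | succ m ih =>
    obtain ⟨γ₀, hγ₀, u, hu, h1, h2, h3⟩ := ih
    obtain ⟨u', hu', h1', h2', h3', h4'⟩ :=
      deepen_inner Γ W B hB I (m+1) (by omega) γ₀ hγ₀ (u.support.image Prod.fst) u hu h1 h2 h3
        (fun γ hγ hne => Finset.mem_image.mpr ⟨(γ, m+1), Finsupp.mem_support_iff.mpr hne, rfl⟩)
    obtain ⟨u'', hu'', g1, g2, g3⟩ :=
      deepen_step Γ W B hB I (m+1) (by omega) γ₀ hγ₀ u' hu' h1' h2' h3' h4'
    exact ⟨γ₀, hγ₀, u'', hu'', g1, g2, g3⟩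

end Deepen


section Final

variable (Γ) (W : Type) [LieRing W] [LieAlgebra ℂ W] (B : Module.Basis (Γ × ℕ) ℂ W)
variable (hB : ∀ (α β : Γ) (i j : ℕ),
      ⁅B (α, i), B (β, j)⁆ = ((β : ℂ) - (α : ℂ)) • B (α + β, i + j)
        + ((j : ℂ) - (i : ℂ)) • B (α + β, i + j + 1))

include hB in
lemma part3 (hΓ : Γ ≠ ⊥) (I : LieIdeal ℂ W) (hne : (I : Submodule ℂ W) ≠ ⊤) :
    (I : Submodule ℂ W) ≤ Wn Γ W B 1 := by
  by_contra hcon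
  rw [SetLike.not_le_iff_exists] at hcon
  obtain ⟨y₀, hy₀I, hy₀W⟩ := hcon
  -- a nonzero element of Γ
  have hεex : ∃ ε : Γ, (ε:ℂ) ≠ 0 := by
    by_contra h
    push_neg at h
    exact hΓ (AddSubgroup.eq_bot_iff_forall Γ |>.mpr (fun x hx => h ⟨x, hx⟩))
  obtain ⟨ε, hε⟩ := hεex
  set z₀ := eW Γ W B y₀ with hz₀def
  have hz₀J : z₀ ∈ JJ Γ W B I := by
    rw [mem_JJ, hz₀def, LinearEquiv.symm_apply_apply]
    exact hy₀I
  have hz₀F : z₀ ∉ FilR Γ 1 := fun h => hy₀W ((mem_Wn_iff Γ W B).mpr h)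
  have hz₀ne : z₀ ≠ 0 := fun h => hz₀F (h ▸ (FilR Γ 1).zero_mem)
  -- the multiplier ideal contains the nonzero element z₀³
  have hq3 : z₀ * z₀ * z₀ ∈ CC Γ W B I := CC_q3 Γ W B hB I hz₀J ε hε
  have hq3ne : z₀ * z₀ * z₀ ≠ 0 := mul_ne_zero (mul_ne_zero hz₀ne hz₀ne) hz₀ne
  -- apply the endgame to get a pure power of s in CC
  obtain ⟨MM, hMM⟩ := endgame (CC Γ W B I)
    (fun z hz => CC_del Γ W B hB I hz)
    (fun z hz p => CC_mul Γ W B I hz _)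
    hq3 hq3ne
  -- hence the whole filtration piece FilR MM is inside JJ
  have hFil : FilR Γ MM ≤ JJ Γ W B I := by
    intro z hzF
    rw [← Finsupp.sum_single z]
    refine Submodule.sum_mem _ (fun p hp => ?_)
    have hp2 : MM ≤ p.2 := mem_FilR_support Γ |>.mp hzF p hp
    have hpe : ((0:Γ) + p.1, MM + (p.2 - MM)) = p := Prod.ext (by simp) (by simp; omega)
    have heq : Finsupp.single p (z p)
        = RR.single ((0:Γ), MM) (1:ℂ)
          * RR.single (p.1, p.2 - MM) (z p) := by
      rw [RR.single_mul_single, one_mul, Prod.mk_add_mk, hpe]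
    rw [heq]
    exact (mem_CC Γ W B I).mp hMM _
  -- get an exact head
  obtain ⟨γ₀, hγ₀, u, hu, h1, h2, h3⟩ := deepen Γ W B hB I ε hε hz₀J hz₀F MM
  have hLmem : (RR.single ((γ₀:Γ), (0:ℕ)) (1:ℂ) : RR Γ) ∈ JJ Γ W B I := by
    have htail : u - RR.single ((γ₀:Γ), (0:ℕ)) (1:ℂ) ∈ FilR Γ MM := by
      rw [mem_FilR]
      intro γ i hi
      rw [Finsupp.sub_apply]
      rcases Nat.eq_zero_or_pos i with rfl | hpos
      · rcases eq_or_ne γ γ₀ with rfl | hγ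
        · rw [h1, Finsupp.single_apply, if_pos rfl, sub_self]
        · rw [h2 γ hγ, Finsupp.single_apply, if_neg (by
            intro h
            exact hγ (congrArg Prod.fst h).symm), sub_zero]
      · rw [h3 γ i hpos (by omega), Finsupp.single_apply, if_neg (by
          intro h
          have := congrArg Prod.snd h
          simp only at this
          omega), sub_zero]
    have := (JJ Γ W B I).sub_mem hu (hFil htail)
    rwa [sub_sub_cancel] at this
  -- the opposite head
  have hL2mem : (RR.single ((-γ₀:Γ), (0:ℕ)) (1:ℂ) : RR Γ) ∈ JJ Γ W B I := by
    set x : RR Γ := RR.single ((-(γ₀+γ₀) : Γ), (0:ℕ)) (1:ℂ) with hx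
    have hz2 := Jbrk Γ W B hB I hLmem x
    have hz2eq : x * del Γ (RR.single ((γ₀:Γ), (0:ℕ)) (1:ℂ))
        - RR.single ((γ₀:Γ), (0:ℕ)) (1:ℂ) * del Γ x
        = ((3:ℂ)*(γ₀:ℂ)) • RR.single ((-γ₀ : Γ), (0:ℕ)) (1:ℂ) := by
      rw [hx, del_single, del_single]
      simp only [Nat.cast_zero, zero_smul, add_zero, mul_smul_comm, smul_mul_assoc,
        RR.single_mul_single, mul_one, Prod.mk_add_mk, add_zero]
      have e1 : -(γ₀+γ₀) + γ₀ = -γ₀ := by abel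
      have e2 : γ₀ + -(γ₀+γ₀) = -γ₀ := by abel
      rw [e1, e2]
      have e3 : ((-(γ₀+γ₀) : Γ) : ℂ) = -((γ₀:ℂ) + (γ₀:ℂ)) := by push_cast; ring
      rw [e3]
      module
    rw [hz2eq] at hz2
    have h3γ : ((3:ℂ)*(γ₀:ℂ)) ≠ 0 := mul_ne_zero three_ne_zero hγ₀
    have := (JJ Γ W B I).smul_mem ((3:ℂ)*(γ₀:ℂ))⁻¹ hz2
    rwa [smul_smul, inv_mul_cancel₀ h3γ, one_smul] at this
  -- every basis vector lies in JJ
  have hall : ∀ p : Γ × ℕ, (RR.single p (1:ℂ) : RR Γ) ∈ JJ Γ W B I := by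
    rintro ⟨β, k⟩
    set x1 : RR Γ := RR.single ((β - γ₀ : Γ), k) (1:ℂ) with hx1
    set x2 : RR Γ := RR.single ((β + γ₀ : Γ), k) (1:ℂ) with hx2
    have hu1 := Jbrk Γ W B hB I hLmem x1
    have hu2 := Jbrk Γ W B hB I hL2mem x2
    have e1 : β - γ₀ + γ₀ = β := by abel
    have e2 : γ₀ + (β - γ₀) = β := by abel
    have e3 : β + γ₀ + -γ₀ = β := by abel
    have e4 : -γ₀ + (β + γ₀) = β := by abel
    have hu1eq : x1 * del Γ (RR.single ((γ₀:Γ), (0:ℕ)) (1:ℂ))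
        - RR.single ((γ₀:Γ), (0:ℕ)) (1:ℂ) * del Γ x1
        = ((2*(γ₀:ℂ) - (β:ℂ))) • RR.single ((β:Γ), k) (1:ℂ)
          - (k:ℂ) • RR.single ((β:Γ), k+1) (1:ℂ) := by
      rw [hx1, del_single, del_single]
      simp only [Nat.cast_zero, zero_smul, add_zero, mul_add, mul_smul_comm, smul_mul_assoc,
        RR.single_mul_single, mul_one, Prod.mk_add_mk, add_zero, zero_add]
      rw [e1, e2]
      have e5 : ((β - γ₀ : Γ) : ℂ) = (β:ℂ) - (γ₀:ℂ) := by push_cast; ring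
      rw [e5]
      module
    have hu2eq : x2 * del Γ (RR.single ((-γ₀:Γ), (0:ℕ)) (1:ℂ))
        - RR.single ((-γ₀:Γ), (0:ℕ)) (1:ℂ) * del Γ x2
        = ((-2*(γ₀:ℂ) - (β:ℂ))) • RR.single ((β:Γ), k) (1:ℂ)
          - (k:ℂ) • RR.single ((β:Γ), k+1) (1:ℂ) := by
      rw [hx2, del_single, del_single]
      simp only [Nat.cast_zero, zero_smul, add_zero, mul_add, mul_smul_comm, smul_mul_assoc,
        RR.single_mul_single, mul_one, Prod.mk_add_mk, add_zero, zero_add]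
      rw [e3, e4]
      have e5 : ((β + γ₀ : Γ) : ℂ) = (β:ℂ) + (γ₀:ℂ) := by push_cast; ring
      have e6 : ((-γ₀ : Γ) : ℂ) = -(γ₀:ℂ) := by push_cast; ring
      rw [e5, e6]
      module
    rw [hu1eq] at hu1
    rw [hu2eq] at hu2
    have hdiff := (JJ Γ W B I).sub_mem hu1 hu2
    have hde : ((2*(γ₀:ℂ) - (β:ℂ))) • RR.single ((β:Γ), k) (1:ℂ)
          - (k:ℂ) • RR.single ((β:Γ), k+1) (1:ℂ)
        - (((-2*(γ₀:ℂ) - (β:ℂ))) • RR.single ((β:Γ), k) (1:ℂ)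
          - (k:ℂ) • RR.single ((β:Γ), k+1) (1:ℂ))
        = ((4:ℂ)*(γ₀:ℂ)) • RR.single ((β:Γ), k) (1:ℂ) := by
      module
    rw [hde] at hdiff
    have h4γ : ((4:ℂ)*(γ₀:ℂ)) ≠ 0 := mul_ne_zero (by norm_num) hγ₀
    have := (JJ Γ W B I).smul_mem ((4:ℂ)*(γ₀:ℂ))⁻¹ hdiff
    rwa [smul_smul, inv_mul_cancel₀ h4γ, one_smul] at this
  -- hence JJ = everything, contradicting properness
  apply hne
  rw [Submodule.eq_top_iff']
  intro y
  have hy : eW Γ W B y ∈ JJ Γ W B I := by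
    rw [← Finsupp.sum_single (eW Γ W B y)]
    refine Submodule.sum_mem _ (fun p hp => ?_)
    have heq : Finsupp.single p ((eW Γ W B y) p)
        = ((eW Γ W B y) p) • RR.single p (1:ℂ) := by
      rw [RR.smul_single', mul_one]
    rw [heq]
    exact (JJ Γ W B I).smul_mem _ (hall p)
  rw [mem_JJ, LinearEquiv.symm_apply_apply] at hy
  exact hy

end Final

end Stmt4A

theorem stmt4 (Γ : AddSubgroup ℂ) (hΓ : Γ ≠ ⊥)
    (W : Type) [LieRing W] [LieAlgebra ℂ W] (B : Module.Basis (Γ × ℕ) ℂ W)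
    (hB : ∀ (α β : Γ) (i j : ℕ),
      ⁅B (α, i), B (β, j)⁆ = ((β : ℂ) - (α : ℂ)) • B (α + β, i + j)
        + ((j : ℂ) - (i : ℂ)) • B (α + β, i + j + 1)) :
    -- `W^1` is an ideal
    (∀ (x y : W), y ∈ Wn Γ W B 1 → ⁅x, y⁆ ∈ Wn Γ W B 1) ∧
    -- `W^1` is proper
    Wn Γ W B 1 ≠ ⊤ ∧
    -- every proper Lie ideal is contained in `W^1`
    (∀ I : LieIdeal ℂ W, (I : Submodule ℂ W) ≠ ⊤ → (I : Submodule ℂ W) ≤ Wn Γ W B 1) :=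
  ⟨fun x y hy => Stmt4A.part1 Γ W B hB x y hy,
   Stmt4A.part2 Γ W B,
   fun I hne => Stmt4A.part3 Γ W B hB hΓ I hne⟩
end

section
/- For all integers 0 ≤ m ≤ n, the ideal W^n equals the m-fold iterated bracket [W^1, [W^1, ..., [W^1, W^{n−m}]...]]; in particular, taking m = 1, the span of all brackets [x, y] with x ∈ W^1 and y ∈ W^{n−1} equals W^n. -/
/-- The bracket `[A, B]` of two subspaces of a Lie algebra: the span of all
brackets `⁅a, b⁆` with `a ∈ A`, `b ∈ B`. -/
noncomputable def subBracket (W : Type) [LieRing W] [LieAlgebra ℂ W]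
    (A C : Submodule ℂ W) : Submodule ℂ W :=
  Submodule.span ℂ {z : W | ∃ a ∈ A, ∃ b ∈ C, z = ⁅a, b⁆}

/-- The `m`-fold iterated bracket `[A, [A, ..., [A, S]...]]`. -/
noncomputable def iterBracket (W : Type) [LieRing W] [LieAlgebra ℂ W]
    (A : Submodule ℂ W) : ℕ → Submodule ℂ W → Submodule ℂ W
  | 0, S => S
  | m + 1, S => subBracket W A (iterBracket W A m S)

theorem stmt5 (Γ : AddSubgroup ℂ) (hΓ : Γ ≠ ⊥)
    (W : Type) [LieRing W] [LieAlgebra ℂ W] (B : Module.Basis (Γ × ℕ) ℂ W)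
    (hB : ∀ (α β : Γ) (i j : ℕ),
      ⁅B (α, i), B (β, j)⁆ = ((β : ℂ) - (α : ℂ)) • B (α + β, i + j)
        + ((j : ℂ) - (i : ℂ)) • B (α + β, i + j + 1)) :
    -- `W^n = [W^1, [W^1, ..., [W^1, W^{n-m}]...]]` (`m`-fold) for all `0 ≤ m ≤ n`
    (∀ m n : ℕ, m ≤ n →
      iterBracket W (Wn Γ W B 1) m (Wn Γ W B (n - m)) = Wn Γ W B n) ∧
    -- in particular, `[W^1, W^{n-1}] = W^n` for `n ≥ 1`
    (∀ n : ℕ, 1 ≤ n → subBracket W (Wn Γ W B 1) (Wn Γ W B (n - 1)) = Wn Γ W B n) := by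
  -- a nonzero element of Γ
  obtain ⟨δ, hδ⟩ : ∃ x : Γ, (x : ℂ) ≠ 0 := by
    by_contra h
    push_neg at h
    exact hΓ ((AddSubgroup.eq_bot_iff_forall _).2 fun x hx => h ⟨x, hx⟩)
  have key : ∀ k : ℕ, subBracket W (Wn Γ W B 1) (Wn Γ W B k) = Wn Γ W B (k + 1) := by
    intro k
    apply le_antisymm
    · rw [subBracket, Submodule.span_le]
      rintro z ⟨a, ha, b, hb, rfl⟩
      -- first, the case of a basis element on the left
      have h1 : ∀ (α : Γ) (i : ℕ), 1 ≤ i → ∀ b ∈ Wn Γ W B k,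
          ⁅B (α, i), b⁆ ∈ Wn Γ W B (k + 1) := by
        intro α i hi b hb
        induction hb using Submodule.span_induction with
        | mem x hx =>
          obtain ⟨β, j, hj, rfl⟩ := hx
          rw [hB]
          refine add_mem (Submodule.smul_mem _ _ ?_) (Submodule.smul_mem _ _ ?_) <;>
            exact Submodule.subset_span ⟨α + β, _, by omega, rfl⟩
        | zero => simp
        | add x y hx hy ihx ihy => rw [lie_add]; exact add_mem ihx ihy
        | smul c x hx ihx => rw [lie_smul]; exact Submodule.smul_mem _ _ ihx
      induction ha using Submodule.span_induction with
      | mem x hx =>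
        obtain ⟨α, i, hi, rfl⟩ := hx
        exact h1 α i hi b hb
      | zero => simp
      | add x y hx hy ihx ihy => rw [add_lie]; exact add_mem ihx ihy
      | smul c x hx ihx => rw [smul_lie]; exact Submodule.smul_mem _ _ ihx
    · rw [Wn, Submodule.span_le]
      rintro z ⟨γ, t, ht, rfl⟩
      obtain ⟨j, rfl⟩ : ∃ j, t = j + 1 := ⟨t - 1, by omega⟩
      have hj : k ≤ j := by omega
      have hx1 : ⁅B (δ, 1), B (γ - δ, j)⁆ ∈ subBracket W (Wn Γ W B 1) (Wn Γ W B k) :=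
        Submodule.subset_span ⟨_, Submodule.subset_span ⟨δ, 1, le_refl _, rfl⟩,
          _, Submodule.subset_span ⟨γ - δ, j, hj, rfl⟩, rfl⟩
      have hx2 : ⁅B (-δ, 1), B (γ + δ, j)⁆ ∈ subBracket W (Wn Γ W B 1) (Wn Γ W B k) :=
        Submodule.subset_span ⟨_, Submodule.subset_span ⟨-δ, 1, le_refl _, rfl⟩,
          _, Submodule.subset_span ⟨γ + δ, j, hj, rfl⟩, rfl⟩
      have e1 : δ + (γ - δ) = γ := by abel
      have e2 : -δ + (γ + δ) = γ := by abel
      have e3 : (1 : ℕ) + j = j + 1 := by omega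
      have hdiff : ⁅B (-δ, 1), B (γ + δ, j)⁆ - ⁅B (δ, 1), B (γ - δ, j)⁆
          = (4 * (δ : ℂ)) • B (γ, j + 1) := by
        rw [hB, hB, e1, e2, e3]
        push_cast
        module
      have hmem := Submodule.smul_mem _ ((4 * (δ : ℂ))⁻¹) (sub_mem hx2 hx1)
      rwa [hdiff, smul_smul, inv_mul_cancel₀ (by simpa using hδ), one_smul] at hmem
  have main : ∀ m n : ℕ, m ≤ n →
      iterBracket W (Wn Γ W B 1) m (Wn Γ W B (n - m)) = Wn Γ W B n := by
    intro m
    induction m with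
    | zero => intro n _; simp [iterBracket]
    | succ m ih =>
      intro n hn
      have h1 : n - (m + 1) = (n - 1) - m := by omega
      have h2 : iterBracket W (Wn Γ W B 1) (m + 1) (Wn Γ W B (n - (m + 1)))
          = subBracket W (Wn Γ W B 1)
            (iterBracket W (Wn Γ W B 1) m (Wn Γ W B ((n - 1) - m))) := by
        rw [h1]; rfl
      rw [h2, ih (n - 1) (by omega), key, Nat.sub_add_cancel (by omega)]
  refine ⟨main, fun n hn => ?_⟩
  rw [key (n - 1), Nat.sub_add_cancel hn]
end

section
/- Every nonzero Lie ideal of W(Γ) contains a basis element; that is, if A is a nonzero ideal of W(Γ), then L_{β,j} ∈ A for some β ∈ Γ and j ∈ ℤ≥0. -/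
open Finset

/-- Lexicographic "key" on ℂ. -/
private def kex (z : ℂ) : ℝ ×ₗ ℝ := toLex (z.re, z.im)

private lemma kex_inj {u v : ℂ} (h : kex u = kex v) : u = v := by
  unfold kex at h
  have h' : ((u.re, u.im) : ℝ × ℝ) = (v.re, v.im) := toLex.injective h
  exact Complex.ext (congrArg Prod.fst h') (congrArg Prod.snd h')

private lemma kex_add {u v w : ℂ} (h : kex u ≤ kex v) : kex (w + u) ≤ kex (w + v) := by
  unfold kex at *
  rw [Prod.Lex.le_iff] at h ⊢
  simp only [Complex.add_re, Complex.add_im, ofLex_toLex] at *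
  rcases h with h | ⟨h1, h2⟩
  · exact Or.inl (by linarith)
  · exact Or.inr ⟨by linarith, by linarith⟩

theorem stmt6 (Γ : AddSubgroup ℂ) (hΓ : Γ ≠ ⊥)
    (W : Type) [LieRing W] [LieAlgebra ℂ W] (B : Module.Basis (Γ × ℕ) ℂ W)
    (hB : ∀ (α β : Γ) (i j : ℕ),
      ⁅B (α, i), B (β, j)⁆ = ((β : ℂ) - (α : ℂ)) • B (α + β, i + j)
        + ((j : ℂ) - (i : ℂ)) • B (α + β, i + j + 1)) :
    ∀ I : LieIdeal ℂ W, I ≠ ⊥ → ∃ (β : Γ) (j : ℕ), B (β, j) ∈ I := by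
  classical
  intro I hI
  obtain ⟨x₀, hx₀I, hx₀⟩ : ∃ x ∈ I, x ≠ 0 := by
    by_contra h
    push_neg at h
    exact hI ((LieSubmodule.eq_bot_iff I).2 h)
  suffices key : ∀ n t : ℕ, ∀ x : W, x ∈ I → x ≠ 0 →
      (((B.repr x).support.image Prod.fst).card = n) →
      (∃ a : Γ, a ∈ (B.repr x).support.image Prod.fst ∧
        (∀ b ∈ (B.repr x).support.image Prod.fst, kex (b : ℂ) ≤ kex (a : ℂ)) ∧
        ((B.repr x).support.filter (fun p => p.1 = a)).card = t) →
      ∃ (β : Γ) (j : ℕ), B (β, j) ∈ I by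
    have hc0 : B.repr x₀ ≠ 0 := by
      intro h
      exact hx₀ (by simpa using congrArg B.repr.symm h)
    have hS : ((B.repr x₀).support.image Prod.fst).Nonempty :=
      (Finsupp.support_nonempty_iff.2 hc0).image _
    obtain ⟨a, ha, hmax⟩ := Finset.exists_max_image _ (fun b : Γ => kex (b : ℂ)) hS
    exact key _ _ x₀ hx₀I hx₀ rfl ⟨a, ha, hmax, rfl⟩
  intro n
  induction n using Nat.strong_induction_on with
  | _ n ihn =>
  intro t
  induction t using Nat.strong_induction_on with
  | _ t iht =>
  intro x hxI hx hn hex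
  obtain ⟨a, haA, hamax, hnt⟩ := hex
  set c : (Γ × ℕ) →₀ ℂ := B.repr x with hc
  set S : Finset (Γ × ℕ) := c.support with hSdef
  -- pick m with (a, m) ∈ S
  obtain ⟨pa, hpaS, hpa1⟩ := Finset.mem_image.1 haA
  set m : ℕ := pa.2 with hm
  have hamS : (a, m) ∈ S := by
    have : pa = (a, m) := Prod.ext hpa1 rfl
    rwa [this] at hpaS
  -- the element y and its coefficients
  set y : W := ⁅B (a, m), x⁆ with hy
  have hyI : y ∈ I := I.lie_mem hxI
  set d : (Γ × ℕ) →₀ ℂ := B.repr y with hd0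
  have hx_eq : x = ∑ p ∈ S, c p • B p := by
    conv_lhs => rw [← B.linearCombination_repr x]
    rw [Finsupp.linearCombination_apply, Finsupp.sum]
  have hd : ∀ q : Γ × ℕ, d q =
      ∑ p ∈ S, c p * ((((p.1 : ℂ) - (a : ℂ)) * (if ((a + p.1 : Γ), m + p.2) = q then 1 else 0))
        + (((p.2 : ℂ) - (m : ℂ)) * (if ((a + p.1 : Γ), m + p.2 + 1) = q then 1 else 0))) := by
    have hy2 : y = ∑ p ∈ S, c p • (((p.1 : ℂ) - (a : ℂ)) • B (a + p.1, m + p.2)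
        + ((p.2 : ℂ) - (m : ℂ)) • B (a + p.1, m + p.2 + 1)) := by
      have lie_sum' : ∀ (z : W) (s : Finset (Γ × ℕ)) (f : (Γ × ℕ) → W),
          ⁅z, ∑ p ∈ s, f p⁆ = ∑ p ∈ s, ⁅z, f p⁆ := by
        intro z s f
        induction s using Finset.induction_on with
        | empty => simp
        | insert _ _ h ih => rw [Finset.sum_insert h, Finset.sum_insert h, lie_add, ih]
      rw [hy]
      conv_lhs => rw [hx_eq]
      rw [lie_sum']
      refine Finset.sum_congr rfl fun p hp => ?_
      rw [lie_smul]
      congr 1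
      have : B p = B (p.1, p.2) := by rw [Prod.mk.eta]
      rw [this, hB a p.1 m p.2]
    have hd2 : d = ∑ p ∈ S, c p • (((p.1 : ℂ) - (a : ℂ)) • Finsupp.single ((a + p.1 : Γ), m + p.2) (1:ℂ)
        + ((p.2 : ℂ) - (m : ℂ)) • Finsupp.single ((a + p.1 : Γ), m + p.2 + 1) (1:ℂ)) := by
      rw [hd0, hy2, map_sum]
      refine Finset.sum_congr rfl fun p hp => ?_
      rw [map_smul, map_add, map_smul, map_smul, B.repr_self, B.repr_self]
    intro q
    rw [hd2, Finsupp.finset_sum_apply]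
    refine Finset.sum_congr rfl fun p hp => ?_
    simp only [Finsupp.smul_apply, Finsupp.add_apply, Finsupp.single_apply, smul_eq_mul]
    try split_ifs <;> ring
  -- support bound
  have hK3 : ∀ q ∈ d.support, ∃ p ∈ S, q.1 = a + p.1 ∧ (q.2 = m + p.2 ∨ q.2 = m + p.2 + 1) := by
    intro q hq
    by_contra h
    push_neg at h
    apply Finsupp.mem_support_iff.1 hq
    rw [hd q]
    apply Finset.sum_eq_zero
    intro p hp
    have h1 : ((a + p.1 : Γ), m + p.2) ≠ q := by
      rintro rfl
      exact (h p hp rfl).1 rfl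
    have h2 : ((a + p.1 : Γ), m + p.2 + 1) ≠ q := by
      rintro rfl
      exact (h p hp rfl).2 rfl
    rw [if_neg h1, if_neg h2]
    ring
  -- K1 : new component from α ≠ a at minimal k
  have hK1 : ∀ α : Γ, α ≠ a → ∀ k : ℕ, (α, k) ∈ S → (∀ i, i < k → (α, i) ∉ S) →
      d (a + α, m + k) ≠ 0 := by
    intro α hαa k hk hmin
    rw [hd _]
    rw [Finset.sum_eq_single (α, k)]
    · have hif1 : ((a + α : Γ), m + k) = ((a + α : Γ), m + k) := rfl
      rw [if_pos hif1, if_neg (by intro h; exact Nat.succ_ne_self (m + k) (congrArg Prod.snd h))]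
      have hc1 : c (α, k) ≠ 0 := Finsupp.mem_support_iff.1 hk
      have hc2 : ((α : ℂ) - (a : ℂ)) ≠ 0 := by
        rw [sub_ne_zero]
        exact fun h => hαa (Subtype.coe_injective h)
      have : c (α, k) * (((α : ℂ) - (a : ℂ)) * 1 + ((k : ℂ) - (m : ℂ)) * 0) =
          c (α, k) * ((α : ℂ) - (a : ℂ)) := by ring
      rw [this]
      exact mul_ne_zero hc1 hc2
    · intro p hp hpne
      have hif1 : ((a + p.1 : Γ), m + p.2) ≠ ((a + α : Γ), m + k) := by
        intro h
        have h1 : a + p.1 = a + α := congrArg Prod.fst h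
        have h2 : m + p.2 = m + k := congrArg Prod.snd h
        exact hpne (Prod.ext (add_left_cancel h1) (Nat.add_left_cancel h2))
      have hif2 : ((a + p.1 : Γ), m + p.2 + 1) ≠ ((a + α : Γ), m + k) := by
        intro h
        have h1 : p.1 = α := add_left_cancel (congrArg Prod.fst h)
        have h2 : m + p.2 + 1 = m + k := congrArg Prod.snd h
        have h3 : p.2 < k := by omega
        apply hmin p.2 h3
        have : p = (α, p.2) := Prod.ext h1 rfl
        rwa [this] at hp
      rw [if_neg hif1, if_neg hif2]
      ring
    · intro h; exact absurd hk h
  -- K2 : new component at 2a from i ≠ m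
  have hK2 : ∀ i : ℕ, (a, i) ∈ S → i ≠ m → d (a + a, m + i + 1) ≠ 0 := by
    intro i hi him
    rw [hd _]
    rw [Finset.sum_eq_single (a, i)]
    · have hif1 : ((a + a : Γ), m + i) ≠ ((a + a : Γ), m + i + 1) := by
        intro h
        exact Nat.succ_ne_self (m + i) (congrArg Prod.snd h).symm
      rw [if_neg hif1, if_pos rfl]
      have hc1 : c (a, i) ≠ 0 := Finsupp.mem_support_iff.1 hi
      have hc2 : ((i : ℂ) - (m : ℂ)) ≠ 0 := by
        rw [sub_ne_zero]
        exact fun h => him (Nat.cast_injective h)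
      have : c (a, i) * (((a : ℂ) - (a : ℂ)) * 0 + ((i : ℂ) - (m : ℂ)) * 1) =
          c (a, i) * ((i : ℂ) - (m : ℂ)) := by ring
      rw [this]
      exact mul_ne_zero hc1 hc2
    · intro p hp hpne
      have hterm2 : (((p.2 : ℂ) - (m : ℂ)) *
          (if ((a + p.1 : Γ), m + p.2 + 1) = ((a + a : Γ), m + i + 1) then 1 else 0)) = 0 := by
        rw [if_neg, mul_zero]
        intro h
        have h1 : p.1 = a := add_left_cancel (congrArg Prod.fst h)
        have h2 : p.2 = i := by have := congrArg Prod.snd h; omega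
        exact hpne (Prod.ext h1 h2)
      rw [hterm2]
      by_cases hif : ((a + p.1 : Γ), m + p.2) = ((a + a : Γ), m + i + 1)
      · have h1 : p.1 = a := add_left_cancel (congrArg Prod.fst hif)
        have : ((p.1 : ℂ) - (a : ℂ)) = 0 := by rw [h1, sub_self]
        rw [this]
        ring
      · rw [if_neg hif]
        ring
    · intro h; exact absurd hi h
  -- K4 : everything in the 2a-component comes from i ≠ m
  have hK4 : ∀ t' : ℕ, d (a + a, t') ≠ 0 → ∃ i, (a, i) ∈ S ∧ i ≠ m ∧ t' = m + i + 1 := by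
    intro t' hne
    by_contra h
    push_neg at h
    apply hne
    rw [hd _]
    apply Finset.sum_eq_zero
    intro p hp
    have hterm1 : (((p.1 : ℂ) - (a : ℂ)) *
        (if ((a + p.1 : Γ), m + p.2) = ((a + a : Γ), t') then 1 else 0)) = 0 := by
      by_cases hif : ((a + p.1 : Γ), m + p.2) = ((a + a : Γ), t')
      · have h1 : p.1 = a := add_left_cancel (congrArg Prod.fst hif)
        rw [h1, sub_self, zero_mul]
      · rw [if_neg hif, mul_zero]
    have hterm2 : (((p.2 : ℂ) - (m : ℂ)) *
        (if ((a + p.1 : Γ), m + p.2 + 1) = ((a + a : Γ), t') then 1 else 0)) = 0 := by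
      by_cases hif : ((a + p.1 : Γ), m + p.2 + 1) = ((a + a : Γ), t')
      · have h1 : p.1 = a := add_left_cancel (congrArg Prod.fst hif)
        have h2 : t' = m + p.2 + 1 := (congrArg Prod.snd hif).symm
        by_cases hpm : p.2 = m
        · rw [hpm, sub_self, zero_mul]
        · exfalso
          have hpS : (a, p.2) ∈ S := by
            have : p = (a, p.2) := Prod.ext h1 rfl
            rwa [this] at hp
          exact (h p.2 hpS hpm) h2
      · rw [if_neg hif, mul_zero]
    rw [hterm1, hterm2, add_zero, mul_zero]
  -- now the case analysis
  by_cases hT : ∃ i : ℕ, (a, i) ∈ S ∧ i ≠ m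
  · -- top fiber has ≥ 2 elements : bracket kills one of them
    obtain ⟨i₀, hi₀S, hi₀m⟩ := hT
    have hd2a : d (a + a, m + i₀ + 1) ≠ 0 := hK2 i₀ hi₀S hi₀m
    have hyne : y ≠ 0 := by
      intro h
      apply hd2a
      rw [hd0, h, map_zero]
      rfl
    have hdne : d ≠ 0 := fun h => hd2a (by rw [h]; rfl)
    -- image of first coordinates
    have hA'sub : d.support.image Prod.fst ⊆ (S.image Prod.fst).image (fun α => a + α) := by
      intro β hβ
      obtain ⟨q, hq, hq1⟩ := Finset.mem_image.1 hβ
      obtain ⟨p, hpS, hp1, _⟩ := hK3 q hq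
      exact Finset.mem_image.2 ⟨p.1, Finset.mem_image_of_mem _ hpS, by rw [← hp1, hq1]⟩
    have hcard : (d.support.image Prod.fst).card ≤ n := by
      calc (d.support.image Prod.fst).card
          ≤ ((S.image Prod.fst).image (fun α => a + α)).card := Finset.card_le_card hA'sub
        _ ≤ (S.image Prod.fst).card := Finset.card_image_le
        _ = n := hn
    rcases lt_or_eq_of_le hcard with hlt | heq
    · -- fewer α components : outer induction
      have hdS : (d.support.image Prod.fst).Nonempty :=
        (Finsupp.support_nonempty_iff.2 hdne).image _
      obtain ⟨b, hb, hbmax⟩ := Finset.exists_max_image _ (fun b : Γ => kex (b : ℂ)) hdS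
      exact ihn _ hlt _ y hyI hyne rfl ⟨b, hb, hbmax, rfl⟩
    · -- same number of α components : top fiber shrank
      have h2aA : (a + a : Γ) ∈ d.support.image Prod.fst :=
        Finset.mem_image.2 ⟨(a + a, m + i₀ + 1), Finsupp.mem_support_iff.2 hd2a, rfl⟩
      have h2amax : ∀ b ∈ d.support.image Prod.fst, kex (b : ℂ) ≤ kex ((a + a : Γ) : ℂ) := by
        intro β hβ
        obtain ⟨q, hq, hq1⟩ := Finset.mem_image.1 hβ
        obtain ⟨p, hpS, hp1, _⟩ := hK3 q hq
        have h1 : p.1 ∈ S.image Prod.fst := Finset.mem_image_of_mem _ hpS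
        have h2 : kex ((p.1 : Γ) : ℂ) ≤ kex ((a : Γ) : ℂ) := hamax p.1 h1
        have h3 : β = a + p.1 := by rw [← hq1, hp1]
        rw [h3]
        push_cast
        exact kex_add h2
      -- injection into the old fiber minus (a, m)
      have htlt : (d.support.filter (fun p => p.1 = a + a)).card < t := by
        have hsub : ∀ q ∈ d.support.filter (fun p => p.1 = a + a),
            (fun q : Γ × ℕ => ((a : Γ), q.2 - (m + 1))) q ∈ (S.filter (fun p => p.1 = a)).erase (a, m) := by
          intro q hq
          obtain ⟨hqd, hq1⟩ := Finset.mem_filter.1 hq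
          have hq' : q = ((a + a : Γ), q.2) := Prod.ext hq1 rfl
          have hdq : d (a + a, q.2) ≠ 0 := by
            rw [← hq']
            exact Finsupp.mem_support_iff.1 hqd
          obtain ⟨i, hiS, him, hq2⟩ := hK4 q.2 hdq
          have hqi : q.2 - (m + 1) = i := by omega
          show ((a : Γ), q.2 - (m + 1)) ∈ (S.filter (fun p => p.1 = a)).erase (a, m)
          rw [hqi]
          refine Finset.mem_erase.2 ⟨?_, Finset.mem_filter.2 ⟨hiS, rfl⟩⟩
          intro h
          exact him (congrArg Prod.snd h)
        have hinj : Set.InjOn (fun q : Γ × ℕ => ((a : Γ), q.2 - (m + 1)))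
            ↑(d.support.filter (fun p => p.1 = a + a)) := by
          intro q hq q' hq' hf
          simp only [Finset.coe_filter, Set.mem_setOf_eq] at hq hq'
          have hq1 : q.1 = a + a := hq.2
          have hq1' : q'.1 = a + a := hq'.2
          have hqe : q = ((a + a : Γ), q.2) := Prod.ext hq1 rfl
          have hqe' : q' = ((a + a : Γ), q'.2) := Prod.ext hq1' rfl
          have hdq : d (a + a, q.2) ≠ 0 := by
            rw [← hqe]; exact Finsupp.mem_support_iff.1 hq.1
          have hdq' : d (a + a, q'.2) ≠ 0 := by
            rw [← hqe']; exact Finsupp.mem_support_iff.1 hq'.1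
          obtain ⟨i, _, _, h2⟩ := hK4 q.2 hdq
          obtain ⟨i', _, _, h2'⟩ := hK4 q'.2 hdq'
          have hsnd : q.2 - (m + 1) = q'.2 - (m + 1) := congrArg Prod.snd hf
          have : q.2 = q'.2 := by omega
          exact Prod.ext (by rw [hq1, hq1']) this
        have h1 : (d.support.filter (fun p => p.1 = a + a)).card
            ≤ ((S.filter (fun p => p.1 = a)).erase (a, m)).card :=
          Finset.card_le_card_of_injOn _ hsub hinj
        have h2 : (a, m) ∈ S.filter (fun p => p.1 = a) := Finset.mem_filter.2 ⟨hamS, rfl⟩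
        have h3 : ((S.filter (fun p => p.1 = a)).erase (a, m)).card
            = (S.filter (fun p => p.1 = a)).card - 1 := Finset.card_erase_of_mem h2
        have h4 : 0 < (S.filter (fun p => p.1 = a)).card := Finset.card_pos.2 ⟨_, h2⟩
        omega
      exact iht _ htlt y hyI hyne heq ⟨a + a, h2aA, h2amax, rfl⟩
  · -- the top fiber is a single point (a, m)
    push_neg at hT
    by_cases hA2 : ∃ α ∈ S.image Prod.fst, α ≠ a
    · -- several α components : the bracket kills the a-component entirely
      obtain ⟨α₀, hα₀A, hα₀ne⟩ := hA2
      -- minimal k in the α₀ fiber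
      obtain ⟨k, hkS, hkmin⟩ : ∃ k : ℕ, (α₀, k) ∈ S ∧ ∀ i, i < k → (α₀, i) ∉ S := by
        have hPex : ∃ k : ℕ, (α₀, k) ∈ S := by
          obtain ⟨p, hpS, hp1⟩ := Finset.mem_image.1 hα₀A
          exact ⟨p.2, by have : p = (α₀, p.2) := Prod.ext hp1 rfl; rwa [this] at hpS⟩
        exact ⟨Nat.find hPex, Nat.find_spec hPex, fun i hi => Nat.find_min hPex hi⟩
      have hdne0 : d (a + α₀, m + k) ≠ 0 := hK1 α₀ hα₀ne k hkS hkmin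
      have hyne : y ≠ 0 := by
        intro h
        apply hdne0
        rw [hd0, h, map_zero]
        rfl
      have hdne : d ≠ 0 := fun h => hdne0 (by rw [h]; rfl)
      -- the new α set avoids 2a, so it is strictly smaller
      have hA'sub : d.support.image Prod.fst ⊆
          ((S.image Prod.fst).erase a).image (fun α => a + α) := by
        intro β hβ
        obtain ⟨q, hq, hq1⟩ := Finset.mem_image.1 hβ
        obtain ⟨p, hpS, hp1, _⟩ := hK3 q hq
        have hp1a : p.1 ≠ a := by
          intro h
          have hq1' : q.1 = a + a := by rw [hp1, h]
          have hq' : q = ((a + a : Γ), q.2) := Prod.ext hq1' rfl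
          have hdq : d (a + a, q.2) ≠ 0 := by
            rw [← hq']; exact Finsupp.mem_support_iff.1 hq
          obtain ⟨i, hiS, him, _⟩ := hK4 q.2 hdq
          exact him (hT i hiS)
        exact Finset.mem_image.2 ⟨p.1,
          Finset.mem_erase.2 ⟨hp1a, Finset.mem_image_of_mem _ hpS⟩, by rw [← hp1, hq1]⟩
      have hlt : (d.support.image Prod.fst).card < n := by
        have h1 : (d.support.image Prod.fst).card
            ≤ (((S.image Prod.fst).erase a).image (fun α => a + α)).card :=
          Finset.card_le_card hA'sub
        have h2 : (((S.image Prod.fst).erase a).image (fun α => a + α)).card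
            ≤ ((S.image Prod.fst).erase a).card := Finset.card_image_le
        have h3 : ((S.image Prod.fst).erase a).card = (S.image Prod.fst).card - 1 :=
          Finset.card_erase_of_mem haA
        have h4 : 0 < (S.image Prod.fst).card := Finset.card_pos.2 ⟨a, haA⟩
        omega
      have hdS : (d.support.image Prod.fst).Nonempty :=
        (Finsupp.support_nonempty_iff.2 hdne).image _
      obtain ⟨b, hb, hbmax⟩ := Finset.exists_max_image _ (fun b : Γ => kex (b : ℂ)) hdS
      exact ihn _ hlt _ y hyI hyne rfl ⟨b, hb, hbmax, rfl⟩
    · -- x is a multiple of a single basis vector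
      push_neg at hA2
      have hSsing : ∀ p ∈ S, p = ((a : Γ), m) := by
        intro p hpS
        have h1 : p.1 = a := hA2 p.1 (Finset.mem_image_of_mem _ hpS)
        have h2 : p.2 = m := by
          apply hT
          have : p = ((a : Γ), p.2) := Prod.ext h1 rfl
          rwa [this] at hpS
        exact Prod.ext h1 h2
      have hSeq : S = {((a : Γ), m)} := by
        apply Finset.eq_singleton_iff_unique_mem.2
        exact ⟨hamS, hSsing⟩
      have hxval : x = c (a, m) • B (a, m) := by
        rw [hx_eq, hSeq, Finset.sum_singleton]
      have hcne : c (a, m) ≠ 0 := Finsupp.mem_support_iff.1 hamS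
      refine ⟨a, m, ?_⟩
      have : B (a, m) = (c (a, m))⁻¹ • x := by
        rw [hxval, smul_smul, inv_mul_cancel₀ hcne, one_smul]
      rw [this]
      exact SMulMemClass.smul_mem _ hxI
end

section
/- The Lie algebra W(Γ) is generated (as a Lie algebra) by the set {L_{α,0}, L_{α,1} : α ∈ Γ}; that is, the smallest Lie subalgebra of W(Γ) containing all L_{α,0} and L_{α,1} with α ∈ Γ is W(Γ) itself. -/
theorem stmt7 (Γ : AddSubgroup ℂ) (hΓ : Γ ≠ ⊥)
    (W : Type) [LieRing W] [LieAlgebra ℂ W] (B : Module.Basis (Γ × ℕ) ℂ W)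
    (hB : ∀ (α β : Γ) (i j : ℕ),
      ⁅B (α, i), B (β, j)⁆ = ((β : ℂ) - (α : ℂ)) • B (α + β, i + j)
        + ((j : ℂ) - (i : ℂ)) • B (α + β, i + j + 1)) :
    LieSubalgebra.lieSpan ℂ W {x : W | ∃ α : Γ, x = B (α, 0) ∨ x = B (α, 1)} = ⊤ := by
  classical
  set S := LieSubalgebra.lieSpan ℂ W {x : W | ∃ α : Γ, x = B (α, 0) ∨ x = B (α, 1)} with hS
  obtain ⟨γ, hγ⟩ := AddSubgroup.ne_bot_iff_exists_ne_zero.mp hΓ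
  have hγ0 : (γ : ℂ) ≠ 0 := fun h => hγ (Subtype.ext h)
  have h0mem : ∀ α : Γ, B (α, 0) ∈ S := fun α =>
    LieSubalgebra.subset_lieSpan ⟨α, Or.inl rfl⟩
  have h1mem : ∀ α : Γ, B (α, 1) ∈ S := fun α =>
    LieSubalgebra.subset_lieSpan ⟨α, Or.inr rfl⟩
  have step : ∀ (n : ℕ) (α : Γ), (∀ β : Γ, B (β, n + 1) ∈ S) → B (α, n + 2) ∈ S := by
    intro n α ih
    set δ : Γ := if (2 * (γ : ℂ) = (α : ℂ)) then -γ else γ with hδdef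
    have hδ : (2 : ℂ) * (δ : ℂ) - (α : ℂ) ≠ 0 := by
      rw [hδdef]
      split_ifs with h
      · push_cast
        rw [← h]
        intro hc
        apply hγ0
        have : (4 : ℂ) * γ = 0 := by linear_combination -hc
        simpa using this
      · intro hc
        exact h (by linear_combination hc)
    have hc : (2 : ℂ) * ((2 : ℂ) * (δ : ℂ) - (α : ℂ)) ≠ 0 := by
      exact mul_ne_zero two_ne_zero hδ
    have h1 := hB (α - δ) δ (n + 1) 1
    have h2 := hB (α - δ) δ 1 (n + 1)
    rw [sub_add_cancel] at h1 h2
    have hnat : 1 + (n + 1) = n + 2 := by omega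
    rw [hnat] at h2
    have heq : ⁅B (α - δ, n + 1), B (δ, 1)⁆ + ⁅B (α - δ, 1), B (δ, n + 1)⁆
        = ((2 : ℂ) * ((2 : ℂ) * (δ : ℂ) - (α : ℂ))) • B (α, n + 2) := by
      rw [h1, h2]
      have hcoe : ((α : ℂ) - (δ : ℂ)) = ((α - δ : Γ) : ℂ) := by push_cast; ring
      push_cast
      module
    have hmem : ⁅B (α - δ, n + 1), B (δ, 1)⁆ + ⁅B (α - δ, 1), B (δ, n + 1)⁆ ∈ S :=
      S.add_mem (S.lie_mem (ih _) (h1mem _)) (S.lie_mem (h1mem _) (ih _))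
    have : B (α, n + 2) = ((2 : ℂ) * ((2 : ℂ) * (δ : ℂ) - (α : ℂ)))⁻¹ •
        (⁅B (α - δ, n + 1), B (δ, 1)⁆ + ⁅B (α - δ, 1), B (δ, n + 1)⁆) := by
      rw [heq, smul_smul, inv_mul_cancel₀ hc, one_smul]
    rw [this]
    exact S.smul_mem _ hmem
  have key : ∀ (n : ℕ) (α : Γ), B (α, n + 1) ∈ S := by
    intro n
    induction n with
    | zero => exact h1mem
    | succ n ih => exact fun α => step n α ih
  rw [eq_top_iff]
  rintro x -
  have hx : x ∈ Submodule.span ℂ (Set.range B) := by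
    rw [Module.Basis.span_eq]; exact Submodule.mem_top
  have hle : Set.range B ⊆ (S.toSubmodule : Set W) := by
    rintro _ ⟨⟨α, i⟩, rfl⟩
    cases i with
    | zero => exact h0mem α
    | succ n => exact key n α
  exact Submodule.span_le.mpr hle hx
end

section
/- If an inner derivation of W(Γ) coincides with a derivation of the form D_φ for an additive group homomorphism φ : Γ → ℂ (i.e., ad_y = D_φ for some y ∈ W(Γ)), then y = 0 and φ = 0; in other words, the sum ad W(Γ) + {D_φ : φ ∈ Hom_ℤ(Γ, ℂ)} inside Der W(Γ) is direct. -/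
private lemma finset_sum_lie {L : Type*} [LieRing L] {ι : Type*} (s : Finset ι)
    (f : ι → L) (z : L) : ⁅∑ i ∈ s, f i, z⁆ = ∑ i ∈ s, ⁅f i, z⁆ := by
  classical
  induction s using Finset.induction with
  | empty => simp
  | insert a t hx ih => simp [Finset.sum_insert hx, add_lie, ih]

theorem stmt10 (Γ : AddSubgroup ℂ) (hΓ : Γ ≠ ⊥)
    (W : Type) [LieRing W] [LieAlgebra ℂ W] (B : Module.Basis (Γ × ℕ) ℂ W)
    (hB : ∀ (α β : Γ) (i j : ℕ),
      ⁅B (α, i), B (β, j)⁆ = ((β : ℂ) - (α : ℂ)) • B (α + β, i + j)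
        + ((j : ℂ) - (i : ℂ)) • B (α + β, i + j + 1))
    (y : W) (φ : Γ →+ ℂ)
    -- `ad_y = D_φ`
    (h : ∀ (α : Γ) (i : ℕ), ⁅y, B (α, i)⁆ = φ α • B (α, i)) :
    y = 0 ∧ φ = 0 := by
  have hy0 : ∀ i : ℕ, ⁅y, B ((0 : Γ), i)⁆ = 0 := by
    intro i
    rw [h, map_zero, zero_smul]
  set r : (Γ × ℕ) →₀ ℂ := B.repr y with hrdef
  have key : ∀ (i : ℕ) (β : Γ) (j : ℕ),
      (-(β : ℂ)) * r (β, j + 1) + ((i : ℂ) - (j : ℂ)) * r (β, j) = 0 := by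
    intro i β j
    have hsum : y = ∑ p ∈ r.support, r p • B p := by
      conv_lhs => rw [← B.linearCombination_repr y]
      rw [Finsupp.linearCombination_apply, Finsupp.sum]
    have h1 : ⁅y, B ((0:Γ), i)⁆ = ∑ p ∈ r.support,
        r p • ⁅B p, B ((0:Γ), i)⁆ := by
      conv_lhs => rw [hsum]
      rw [finset_sum_lie]
      simp only [smul_lie]
    have h2 := congrArg (fun w => B.repr w (β, j + i + 1)) ((h1.symm).trans (hy0 i))
    simp only [map_sum, Finsupp.coe_finset_sum, Finset.sum_apply, map_zero,
      Finsupp.coe_zero, Pi.zero_apply] at h2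
    have hterm : ∀ p ∈ r.support,
        (B.repr (r p • ⁅B p, B ((0:Γ), i)⁆)) (β, j + i + 1) =
        (if p = (β, j + 1) then (-(β : ℂ)) * r p else 0)
          + (if p = (β, j) then ((i : ℂ) - (j : ℂ)) * r p else 0) := by
      intro p _
      have hb : ⁅B p, B ((0:Γ), i)⁆ =
          ((0 : ℂ) - (p.1 : ℂ)) • B (p.1 + 0, p.2 + i)
            + ((i : ℂ) - (p.2 : ℂ)) • B (p.1 + 0, p.2 + i + 1) := by
        have := hB p.1 0 p.2 i
        simpa using this
      rw [hb]
      simp only [add_zero, map_smul, map_add, B.repr_self, Finsupp.smul_single,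
        Finsupp.coe_add, Finsupp.coe_smul, Pi.add_apply, Pi.smul_apply,
        Finsupp.single_apply, smul_eq_mul, ZeroMemClass.coe_zero, zero_sub]
      have e1 : ((p.1, p.2 + i) = (β, j + i + 1)) ↔ p = (β, j + 1) := by
        constructor
        · intro hh
          have h1 := congrArg Prod.fst hh
          have h2 := congrArg Prod.snd hh
          simp only at h1 h2
          have : p.2 = j + 1 := by omega
          exact Prod.ext h1 this
        · intro hh; subst hh; simp; omega
      have e2 : ((p.1, p.2 + i + 1) = (β, j + i + 1)) ↔ p = (β, j) := by
        constructor
        · intro hh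
          have h1 := congrArg Prod.fst hh
          have h2 := congrArg Prod.snd hh
          simp only at h1 h2
          have : p.2 = j := by omega
          exact Prod.ext h1 this
        · intro hh; subst hh; simp
      rw [if_congr e1 rfl rfl, if_congr e2 rfl rfl]
      by_cases hp1 : p = (β, j + 1) <;> by_cases hp2 : p = (β, j)
      · exact absurd (hp1 ▸ hp2) (by simp)
      all_goals simp [hp1, hp2, mul_comm]
    rw [Finset.sum_congr rfl hterm, Finset.sum_add_distrib,
      Finset.sum_ite_eq' r.support (β, j + 1), Finset.sum_ite_eq' r.support (β, j)] at h2
    have f1 : (if (β, j + 1) ∈ r.support then (-(β : ℂ)) * r (β, j + 1) else 0)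
        = (-(β : ℂ)) * r (β, j + 1) := by
      split
      · rfl
      · rename_i hh
        rw [Finsupp.notMem_support_iff.mp hh, mul_zero]
    have f2 : (if (β, j) ∈ r.support then ((i : ℂ) - (j : ℂ)) * r (β, j) else 0)
        = ((i : ℂ) - (j : ℂ)) * r (β, j) := by
      split
      · rfl
      · rename_i hh
        rw [Finsupp.notMem_support_iff.mp hh, mul_zero]
    rw [f1, f2] at h2
    exact h2
  have hr0 : ∀ (β : Γ) (j : ℕ), r (β, j) = 0 := by
    intro β j
    have k1 := key j β j
    have k2 := key (j + 1) β j
    have : ((j : ℂ) - (j : ℂ)) = 0 := by ring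
    rw [this, zero_mul, add_zero] at k1
    rw [k1, zero_add] at k2
    have : (((j : ℕ) + 1 : ℕ) : ℂ) - (j : ℂ) = 1 := by push_cast; ring
    rw [this, one_mul] at k2
    exact k2
  have hy : y = 0 := by
    have : r = 0 := by
      ext p
      obtain ⟨β, j⟩ := p
      exact hr0 β j
    have h0 : B.repr y = B.repr 0 := by rw [map_zero, ← hrdef, this]
    exact B.repr.injective h0
  refine ⟨hy, ?_⟩
  ext α
  have hα := h α 0
  rw [hy, zero_lie] at hα
  have := (smul_eq_zero.mp hα.symm).resolve_right (B.ne_zero (α, 0))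
  simpa using this
end

section
/- For every group homomorphism τ : Γ → ℂ* (into the multiplicative group of nonzero complex numbers) and every c ∈ ℂ* with cΓ = Γ, the linear map φ_{τ,c} : W(Γ) → W(Γ) determined by φ_{τ,c}(L_{α,i}) = τ(α) c^{−i−1} L_{cα,i} for all α ∈ Γ, i ∈ ℤ≥0 is a Lie algebra automorphism of W(Γ). -/
/-- For `c ∈ ℂ*` with `cΓ = Γ`, the element `cα ∈ Γ` for `α ∈ Γ`. -/
def scaleMem (Γ : AddSubgroup ℂ) (c : ℂ)
    (hc : ∀ z : ℂ, z ∈ Γ ↔ c * z ∈ Γ) (α : Γ) : Γ :=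
  ⟨c * (α : ℂ), (hc (α : ℂ)).mp α.2⟩

/-- Inverse scaling: `c⁻¹ α ∈ Γ`. -/
noncomputable def invMem (Γ : AddSubgroup ℂ) (c : ℂ) (hc0 : c ≠ 0)
    (hc : ∀ z : ℂ, z ∈ Γ ↔ c * z ∈ Γ) (α : Γ) : Γ :=
  ⟨c⁻¹ * (α : ℂ), (hc (c⁻¹ * (α : ℂ))).mpr (by
    rw [← mul_assoc, mul_inv_cancel₀ hc0, one_mul]; exact α.2)⟩

theorem stmt12 (Γ : AddSubgroup ℂ) (hΓ : Γ ≠ ⊥)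
    (W : Type) [LieRing W] [LieAlgebra ℂ W] (B : Module.Basis (Γ × ℕ) ℂ W)
    (hB : ∀ (α β : Γ) (i j : ℕ),
      ⁅B (α, i), B (β, j)⁆ = ((β : ℂ) - (α : ℂ)) • B (α + β, i + j)
        + ((j : ℂ) - (i : ℂ)) • B (α + β, i + j + 1))
    -- `τ : Γ → ℂ*` a group homomorphism
    (τ : Γ → ℂˣ) (hτ : ∀ α β : Γ, τ (α + β) = τ α * τ β)
    -- `c ∈ ℂ*` with `cΓ = Γ`
    (c : ℂ) (hc0 : c ≠ 0) (hc : ∀ z : ℂ, z ∈ Γ ↔ c * z ∈ Γ) :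
    -- the map `L_{α,i} ↦ τ(α) c^{-i-1} L_{cα,i}` is a Lie algebra automorphism
    ∃ e : W ≃ₗ⁅ℂ⁆ W, ∀ (α : Γ) (i : ℕ),
      e (B (α, i)) = ((τ α : ℂ) * (c ^ (i + 1))⁻¹) • B (scaleMem Γ c hc α, i) := by
  set f : W →ₗ[ℂ] W := B.constr ℂ
    (fun p => ((τ p.1 : ℂ) * (c ^ (p.2 + 1))⁻¹) • B (scaleMem Γ c hc p.1, p.2)) with hf
  set g : W →ₗ[ℂ] W := B.constr ℂ
    (fun p => ((τ (invMem Γ c hc0 hc p.1) : ℂ))⁻¹ • (c ^ (p.2 + 1)) •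
        B (invMem Γ c hc0 hc p.1, p.2)) with hg
  have hfB : ∀ (α : Γ) (i : ℕ), f (B (α, i))
      = ((τ α : ℂ) * (c ^ (i + 1))⁻¹) • B (scaleMem Γ c hc α, i) := by
    intro α i; rw [hf]; exact B.constr_basis ℂ _ (α, i)
  have hgB : ∀ (α : Γ) (i : ℕ), g (B (α, i))
      = ((τ (invMem Γ c hc0 hc α) : ℂ))⁻¹ • (c ^ (i + 1)) •
        B (invMem Γ c hc0 hc α, i) := by
    intro α i; rw [hg]; exact B.constr_basis ℂ _ (α, i)
  have hinvscale : ∀ α : Γ, invMem Γ c hc0 hc (scaleMem Γ c hc α) = α := by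
    intro α; apply Subtype.ext
    show c⁻¹ * (c * (α : ℂ)) = α
    field_simp
  have hscaleinv : ∀ α : Γ, scaleMem Γ c hc (invMem Γ c hc0 hc α) = α := by
    intro α; apply Subtype.ext
    show c * (c⁻¹ * (α : ℂ)) = α
    field_simp
  have hτ0 : ∀ α : Γ, (τ α : ℂ) ≠ 0 := fun α => (τ α).ne_zero
  have hcpow : ∀ i : ℕ, (c : ℂ) ^ (i + 1) ≠ 0 := fun i => pow_ne_zero _ hc0
  have hgf : g.comp f = LinearMap.id := by
    apply B.ext; rintro ⟨α, i⟩
    rw [LinearMap.comp_apply, hfB, map_smul, hgB, hinvscale, smul_smul, smul_smul,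
      LinearMap.id_apply,
      show (τ α : ℂ) * (c ^ (i + 1))⁻¹ * (τ α : ℂ)⁻¹ * c ^ (i + 1) = 1 by
        field_simp; try ring, one_smul]
  have hfg : f.comp g = LinearMap.id := by
    apply B.ext; rintro ⟨α, i⟩
    rw [LinearMap.comp_apply, hgB, map_smul, map_smul, hfB, hscaleinv, smul_smul, smul_smul,
      LinearMap.id_apply,
      show (τ (invMem Γ c hc0 hc α) : ℂ)⁻¹ * c ^ (i + 1) *
        ((τ (invMem Γ c hc0 hc α) : ℂ) * (c ^ (i + 1))⁻¹) = 1 by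
        field_simp; try ring, one_smul]
  have hscadd : ∀ α β : Γ, scaleMem Γ c hc (α + β) = scaleMem Γ c hc α + scaleMem Γ c hc β := by
    intro α β; apply Subtype.ext
    show c * ((α : ℂ) + (β : ℂ)) = c * α + c * β
    ring
  -- bracket preservation
  have hlie : ∀ x y : W, f ⁅x, y⁆ = ⁅f x, f y⁆ := by
    have key : ∀ p q : Γ × ℕ, f ⁅B p, B q⁆ = ⁅f (B p), f (B q)⁆ := by
      rintro ⟨α, i⟩ ⟨β, j⟩
      rw [hB, map_add, map_smul, map_smul, hfB, hfB, hfB, hfB]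
      rw [smul_smul, smul_smul, lie_smul, smul_lie, smul_smul, hB, hscadd]
      have hco : ((scaleMem Γ c hc β : ℂ)) - ((scaleMem Γ c hc α : ℂ)) = c * ((β : ℂ) - α) := by
        show c * (β : ℂ) - c * α = _; ring
      rw [hco, smul_add, smul_smul, smul_smul]
      congr 1 <;> rw [hτ] <;> (congr 1; push_cast; field_simp; ring)
    intro x y
    let brkt : W →ₗ[ℂ] W →ₗ[ℂ] W :=
      LinearMap.mk₂ ℂ (fun x y => ⁅x, y⁆) add_lie smul_lie lie_add lie_smul
    have heq : brkt.compr₂ f = brkt.compl₁₂ f f := by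
      apply B.ext; intro p
      apply B.ext; intro q
      simpa [brkt] using key p q
    have := LinearMap.congr_fun (LinearMap.congr_fun heq x) y
    simpa [brkt] using this
  let e₀ : W ≃ₗ[ℂ] W := LinearEquiv.ofLinear f g hfg hgf
  refine ⟨{ e₀ with map_lie' := ?_ }, ?_⟩
  · intro x y; exact hlie x y
  · intro α i; exact hfB α i
end
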